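/- arXiv:2312.01395 — 6 statements merged into one kernel-verified Lean document; each statement's English description precedes it below -/
import Mathlib

section
/- (Montgomery's theta inequality.) For every t > 0 and every Δ > 0, one has θ₃(e^{−tΔ})·θ₃(e^{−t/Δ}) ≥ θ₃(e^{−t})², with equality if and only if Δ = 1. In particular, for each fixed t > 0 the function Δ ↦ θ₃(e^{−tΔ})·θ₃(e^{−t/Δ}) on (0,∞) attains its unique minimum at Δ = 1. -/
/-- The Jacobi theta function `θ₃(q) = Σ_{j ∈ ℤ} q^(j²)`. -/
noncomputable def theta3 (q : ℝ) : ℝ := ∑' j : ℤ, q ^ (j.natAbs ^ 2)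

open Real Filter

namespace Mont
noncomputable def T (k : ℕ) (s : ℝ) : ℝ := ∑' n : ℤ, (n:ℝ)^(2*k) * Real.exp (-s * (n:ℝ)^2)

lemma summable_nat (k : ℕ) {s : ℝ} (hs : 0 < s) :
    Summable (fun n : ℕ => (n:ℝ)^(2*k) * Real.exp (-s * (n:ℝ)^2)) := by
  have hr : ‖Real.exp (-s)‖ < 1 := by
    rw [Real.norm_eq_abs, abs_of_pos (Real.exp_pos _)]
    exact Real.exp_lt_one_iff.2 (by linarith)
  refine Summable.of_nonneg_of_le (fun n => by positivity) (fun n => ?_)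
    (summable_pow_mul_geometric_of_norm_lt_one (2*k) hr)
  have h1 : Real.exp (-s * (n:ℝ)^2) ≤ Real.exp (-s) ^ n := by
    rw [← Real.exp_nat_mul]
    apply Real.exp_le_exp.2
    have h2 : (n:ℝ) ≤ (n:ℝ)^2 := by exact_mod_cast Nat.le_self_pow two_ne_zero n
    nlinarith [mul_le_mul_of_nonneg_left h2 hs.le]
  calc (n:ℝ)^(2*k) * Real.exp (-s * (n:ℝ)^2) ≤ (n:ℝ)^(2*k) * Real.exp (-s) ^ n := by
        gcongr

lemma summable_int (k : ℕ) {s : ℝ} (hs : 0 < s) :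
    Summable (fun n : ℤ => (n:ℝ)^(2*k) * Real.exp (-s * (n:ℝ)^2)) := by
  apply Summable.of_nat_of_neg_add_one
  · simpa using summable_nat k hs
  · have := (summable_nat k hs).comp_injective (add_left_injective 1)
    refine this.congr fun n => ?_
    simp only [Function.comp]
    push_cast
    rw [show ((-((n:ℝ)+1)))^(2*k) = ((n:ℝ)+1)^(2*k) by rw [Even.neg_pow (even_two_mul k)],
      show ((-((n:ℝ)+1)))^2 = ((n:ℝ)+1)^2 by ring]
lemma hasDerivAt_T (k : ℕ) {s : ℝ} (hs : 0 < s) :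
    HasDerivAt (fun x => ∑' n : ℤ, (n:ℝ)^(2*k) * Real.exp (-x * (n:ℝ)^2))
      (-∑' n : ℤ, (n:ℝ)^(2*(k+1)) * Real.exp (-s * (n:ℝ)^2)) s := by
  have hs2 : 0 < s/2 := by linarith
  have key : HasDerivAt (fun x => ∑' n : ℤ, (n:ℝ)^(2*k) * Real.exp (-x * (n:ℝ)^2))
      (∑' n : ℤ, (n:ℝ)^(2*k) * (Real.exp (-s * (n:ℝ)^2) * (-(n:ℝ)^2))) s := by
    refine hasDerivAt_of_tendstoUniformlyOn (l := (atTop : Filter (Finset ℤ))) (f := fun (t : Finset ℤ) x => ∑ n ∈ t,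
        (n:ℝ)^(2*k) * Real.exp (-x * (n:ℝ)^2))
      (f' := fun (t : Finset ℤ) x => ∑ n ∈ t, (n:ℝ)^(2*k) * (Real.exp (-x * (n:ℝ)^2) * (-(n:ℝ)^2)))
      (g' := fun x => ∑' n : ℤ, (n:ℝ)^(2*k) * (Real.exp (-x * (n:ℝ)^2) * (-(n:ℝ)^2)))
      (isOpen_Ioi (a := s/2)) ?_ ?_ ?_ ?_
    · have hb : TendstoUniformlyOn
          (fun (t : Finset ℤ) x => ∑ n ∈ t, (n:ℝ)^(2*k) * (Real.exp (-x * (n:ℝ)^2) * (-(n:ℝ)^2)))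
          (fun x => ∑' n : ℤ, (n:ℝ)^(2*k) * (Real.exp (-x * (n:ℝ)^2) * (-(n:ℝ)^2)))
          atTop (Set.Ioi (s/2)) := by
        apply tendstoUniformlyOn_tsum (u := fun n : ℤ => (n:ℝ)^(2*(k+1)) * Real.exp (-(s/2) * (n:ℝ)^2))
          (summable_int (k+1) hs2)
        intro n x hx
        have hx' : s/2 < x := hx
        rw [Real.norm_eq_abs, abs_mul, abs_mul]
        rw [abs_of_nonneg ((even_two_mul k).pow_nonneg (n:ℝ)), abs_of_nonneg (Real.exp_pos _).le,
          abs_neg, abs_of_nonneg (by positivity : (0:ℝ) ≤ (n:ℝ)^2)]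
        have : Real.exp (-x * (n:ℝ)^2) ≤ Real.exp (-(s/2) * (n:ℝ)^2) := by
          apply Real.exp_le_exp.2
          nlinarith [sq_nonneg (n:ℝ)]
        calc (n:ℝ)^(2*k) * (Real.exp (-x * (n:ℝ)^2) * (n:ℝ)^2)
            ≤ (n:ℝ)^(2*k) * (Real.exp (-(s/2) * (n:ℝ)^2) * (n:ℝ)^2) := by
              have := (even_two_mul k).pow_nonneg (n:ℝ)
              gcongr
          _ = (n:ℝ)^(2*(k+1)) * Real.exp (-(s/2) * (n:ℝ)^2) := by ring
      exact hb
    · apply Eventually.of_forall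
      intro t x hx
      apply HasDerivAt.fun_sum
      intro n _
      have h1 : HasDerivAt (fun x : ℝ => -x * (n:ℝ)^2) (-(n:ℝ)^2) x := by
        simpa using ((hasDerivAt_id x).neg.mul_const ((n:ℝ)^2))
      exact (h1.exp).const_mul _
    · intro x hx
      exact ((summable_int k (lt_trans hs2 hx)).hasSum)
    · exact Set.mem_Ioi.2 (by linarith)
  have : (∑' n : ℤ, (n:ℝ)^(2*k) * (Real.exp (-s * (n:ℝ)^2) * (-(n:ℝ)^2)))
      = -∑' n : ℤ, (n:ℝ)^(2*(k+1)) * Real.exp (-s * (n:ℝ)^2) := by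
    rw [← tsum_neg]
    congr 1; funext n; ring
  rwa [this] at key
noncomputable def S (k : ℕ) (s : ℝ) : ℝ :=
  ∑' n : ℕ, ((n:ℝ)+1)^(2*k) * Real.exp (-s * ((n:ℝ)+1)^2)

lemma summable_S (k : ℕ) {s : ℝ} (hs : 0 < s) :
    Summable (fun n : ℕ => ((n:ℝ)+1)^(2*k) * Real.exp (-s * ((n:ℝ)+1)^2)) := by
  have h := (summable_nat k hs).comp_injective (add_left_injective 1)
  refine h.congr fun n => ?_
  simp only [Function.comp]
  push_cast
  ring_nf

lemma T_eq (k : ℕ) {s : ℝ} (hs : 0 < s) : T k s = (0:ℝ)^(2*k) + 2 * S k s := by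
  have h1 : Summable (fun n : ℕ => ((n:ℤ):ℝ)^(2*k) * Real.exp (-s * ((n:ℤ):ℝ)^2)) := by
    simpa using summable_nat k hs
  have h2 : Summable (fun n : ℕ => ((-((n:ℤ)+1)):ℝ)^(2*k) * Real.exp (-s * ((-((n:ℤ)+1)):ℝ)^2)) := by
    refine (summable_S k hs).congr fun n => ?_
    push_cast
    rw [show (-((n:ℝ)+1))^(2*k) = ((n:ℝ)+1)^(2*k) from (even_two_mul k).neg_pow _,
      show (-((n:ℝ)+1))^2 = ((n:ℝ)+1)^2 by ring]
  rw [T, tsum_of_nat_of_neg_add_one (by exact_mod_cast h1) (by exact_mod_cast h2)]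
  have e1 : ∑' n : ℕ, ((n:ℤ):ℝ)^(2*k) * Real.exp (-s * ((n:ℤ):ℝ)^2)
      = (0:ℝ)^(2*k) + S k s := by
    rw [Summable.tsum_eq_zero_add h1]
    push_cast
    simp [S]
  have e2 : ∑' n : ℕ, ((-((n:ℤ)+1)):ℝ)^(2*k) * Real.exp (-s * ((-((n:ℤ)+1)):ℝ)^2) = S k s := by
    rw [S]
    refine tsum_congr fun n => ?_
    push_cast
    rw [show (-((n:ℝ)+1))^(2*k) = ((n:ℝ)+1)^(2*k) from (even_two_mul k).neg_pow _,
      show (-((n:ℝ)+1))^2 = ((n:ℝ)+1)^2 by ring]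
  push_cast at e1 e2 ⊢
  rw [e1, e2]
  ring
lemma sq_le_four_pow (m : ℕ) : (m:ℝ)^2 ≤ 4^m := by
  have h : m^2 ≤ 4^m := by
    induction m with
    | zero => simp
    | succ n ih =>
      rcases Nat.eq_zero_or_pos n with rfl | hn
      · norm_num
      · calc (n+1)^2 ≤ 4*n^2 := by nlinarith
          _ ≤ 4*4^n := Nat.mul_le_mul_left 4 ih
          _ = 4^(n+1) := by ring
  exact_mod_cast h

lemma S_lb (k : ℕ) {s : ℝ} (hs : 0 < s) : Real.exp (-s) ≤ S k s := by
  have h := Summable.le_tsum (summable_S k hs) 0 (fun j _ => by positivity)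
  rw [show (((0:ℕ):ℝ)+1)^(2*k) * Real.exp (-s * (((0:ℕ):ℝ)+1)^2) = Real.exp (-s) by norm_num] at h
  exact h

lemma exp_pow (s : ℝ) (m : ℕ) : Real.exp (-s * ((m:ℝ))^2) = Real.exp (-s) ^ (m^2) := by
  rw [← Real.exp_nat_mul]
  push_cast
  ring_nf

lemma S0_ub {s : ℝ} (hs : 0 < s) (hq : Real.exp (-s) ≤ 1/3) :
    S 0 s ≤ 1.5 * Real.exp (-s) := by
  set q := Real.exp (-s) with hqdef
  have hq0 : 0 < q := Real.exp_pos _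
  have hgeo : Summable (fun n : ℕ => q^(n+1)) := by
    apply Summable.comp_injective ?_ (add_left_injective 1)
    exact summable_geometric_of_lt_one hq0.le (by linarith)
  have h1 : S 0 s ≤ ∑' n : ℕ, q^(n+1) := by
    apply Summable.tsum_le_tsum _ (summable_S 0 hs) hgeo
    intro n
    have : Real.exp (-s * ((n:ℝ)+1)^2) = q ^ ((n+1)^2) := by
      have := exp_pow s (n+1); push_cast at this ⊢; linarith [this]
    rw [show ((n:ℝ)+1)^(2*0) = 1 by norm_num, one_mul, this]
    exact pow_le_pow_of_le_one hq0.le (by linarith) (by nlinarith [Nat.le_self_pow two_ne_zero (n+1)])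
  have h2 : ∑' n : ℕ, q^(n+1) = q * (1-q)⁻¹ := by
    have : ∀ n : ℕ, q^(n+1) = q^n * q := fun n => by ring
    simp_rw [this]
    rw [tsum_mul_right, tsum_geometric_of_lt_one hq0.le (by linarith)]
    ring
  rw [h2] at h1
  have h3 : q * (1-q)⁻¹ ≤ 1.5 * q := by
    rw [mul_inv_le_iff₀ (by linarith)]
    nlinarith
  linarith
lemma S1_ub {s : ℝ} (hs : 0 < s) (hq : Real.exp (-s) ≤ 1/20) :
    S 1 s ≤ 1.05 * Real.exp (-s) := by
  set q := Real.exp (-s) with hqdef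
  have hq0 : 0 < q := Real.exp_pos _
  have h4q : 4*q^2 ≤ 1/100 := by nlinarith
  have hgeo : Summable (fun n : ℕ => (4*q^2)^(n+2)) := by
    apply Summable.comp_injective ?_ (add_left_injective 2)
    exact summable_geometric_of_lt_one (by positivity) (by nlinarith)
  have hterm : ∀ n : ℕ, (((n+1:ℕ):ℝ)+1)^(2*1) * Real.exp (-s * (((n+1:ℕ):ℝ)+1)^2)
      ≤ (4*q^2)^(n+2) := by
    intro n
    have e : Real.exp (-s * (((n+2:ℕ)):ℝ)^2) = q ^ ((n+2)^2) := exp_pow s (n+2)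
    push_cast at e
    rw [show (((n+1:ℕ):ℝ)+1) = ((n:ℝ)+2) by push_cast; ring]
    rw [e]
    calc ((n:ℝ)+2)^(2*1) * q^((n+2)^2)
        ≤ 4^(n+2) * (q^2)^(n+2) := by
          apply mul_le_mul ?_ ?_ (by positivity) (by positivity)
          · have h := sq_le_four_pow (n+2)
            push_cast at h
            calc ((n:ℝ)+2)^(2*1) = ((n:ℝ)+2)^2 := by norm_num
              _ ≤ 4^(n+2) := h
          · rw [← pow_mul]
            exact pow_le_pow_of_le_one hq0.le (by linarith) (by nlinarith)
      _ = (4*q^2)^(n+2) := by rw [mul_pow]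
  have hsum1 : Summable (fun n : ℕ => (((n+1:ℕ):ℝ)+1)^(2*1) * Real.exp (-s * (((n+1:ℕ):ℝ)+1)^2)) := by
    have h := (summable_S 1 hs).comp_injective (add_left_injective 1)
    exact h.congr fun n => by simp only [Function.comp_apply]
  have hR : ∑' n : ℕ, (((n+1:ℕ):ℝ)+1)^(2*1) * Real.exp (-s * (((n+1:ℕ):ℝ)+1)^2)
      ≤ ∑' n : ℕ, (4*q^2)^(n+2) := Summable.tsum_le_tsum hterm hsum1 hgeo
  have hgeoval : ∑' n : ℕ, (4*q^2)^(n+2) = (4*q^2)^2 * (1-4*q^2)⁻¹ := by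
    simp only [pow_add]
    rw [tsum_mul_right, tsum_geometric_of_lt_one (by positivity) (by nlinarith)]
    ring
  have hS : S 1 s = (((0:ℕ):ℝ)+1)^(2*1) * Real.exp (-s * (((0:ℕ):ℝ)+1)^2)
      + ∑' n : ℕ, (((n+1:ℕ):ℝ)+1)^(2*1) * Real.exp (-s * (((n+1:ℕ):ℝ)+1)^2) := by
    rw [S, Summable.tsum_eq_zero_add (summable_S 1 hs)]
  have h0 : (((0:ℕ):ℝ)+1)^(2*1) * Real.exp (-s * (((0:ℕ):ℝ)+1)^2) = q := by
    norm_num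
    exact hqdef.symm
  have hpos : 0 < 1 - 4*q^2 := by nlinarith
  have hinv : (1-4*q^2)⁻¹ ≤ 2 := by
    rw [inv_le_comm₀ hpos (by norm_num)]
    nlinarith
  have hq4 : q^4 ≤ q * (1/20)^3 := by
    calc q^4 = q * q^3 := by ring
      _ ≤ q * (1/20)^3 := by
        gcongr
  rw [hS, h0] at *
  have : (4*q^2)^2 * (1-4*q^2)⁻¹ ≤ 32 * q^4 := by nlinarith [pow_nonneg hq0.le 4]
  nlinarith
lemma exp_neg_three : Real.exp (-3) ≤ 1/20 := by
  have h9 : (2.7182818283 : ℝ) < Real.exp 1 := Real.exp_one_gt_d9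
  have h3 : Real.exp 1 ^ (3:ℕ) = Real.exp 3 := by
    rw [← Real.exp_nat_mul]; norm_num
  have hp : (2.7182818283:ℝ)^(3:ℕ) ≤ Real.exp 1 ^ (3:ℕ) := pow_le_pow_left₀ (by norm_num) h9.le 3
  rw [h3] at hp
  have h20 : (20:ℝ) < Real.exp 3 := lt_of_lt_of_le (by norm_num) hp
  rw [Real.exp_neg]
  rw [inv_le_comm₀ (Real.exp_pos _) (by norm_num)]
  linarith

lemma S_nonneg (k : ℕ) {s : ℝ} : 0 ≤ S k s :=
  tsum_nonneg fun n => by positivity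

lemma T0_ge_one {s : ℝ} (hs : 0 < s) : 1 ≤ T 0 s := by
  rw [T_eq 0 hs]
  have := S_nonneg 0 (s := s)
  norm_num
  linarith

lemma T_pos (k : ℕ) {s : ℝ} (hs : 0 < s) : 0 < T k s := by
  rw [T_eq k hs]
  have h1 := S_lb k hs
  have h2 := Real.exp_pos (-s)
  have h3 : (0:ℝ) ≤ (0:ℝ)^(2*k) := by positivity
  linarith

lemma key_est {s : ℝ} (hs3 : 3 ≤ s) :
    T 0 s * T 1 s + s * (T 1 s)^2 < s * (T 0 s * T 2 s) := by
  have hs : 0 < s := by linarith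
  set q := Real.exp (-s) with hqdef
  have hq0 : 0 < q := Real.exp_pos _
  have hq : q ≤ 1/20 := le_trans (Real.exp_le_exp.2 (by linarith)) exp_neg_three
  have hA1 : 1 ≤ T 0 s := T0_ge_one hs
  have hB_lb : 2*q ≤ T 1 s := by
    rw [T_eq 1 hs]
    have := S_lb 1 hs
    norm_num
    linarith
  have hB_ub : T 1 s ≤ 2.1*q := by
    rw [T_eq 1 hs]
    have := S1_ub hs hq
    norm_num
    linarith
  have hC_lb : 2*q ≤ T 2 s := by
    rw [T_eq 2 hs]
    have := S_lb 2 hs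
    norm_num
    linarith
  have hA0 : (0:ℝ) < T 0 s := by linarith
  have hB0 : (0:ℝ) < T 1 s := by linarith
  have h1 : s * (T 0 s * (2*q)) ≤ s * (T 0 s * T 2 s) := by gcongr
  have h2 : T 0 s * T 1 s ≤ T 0 s * (2.1*q) := by gcongr
  have h3 : s * (T 1 s)^2 ≤ s * (2.1*q)^2 := by gcongr
  have hmid : T 0 s * (2.1*q) + s * (2.1*q)^2 < s * (T 0 s * (2*q)) := by
    have e1 : (2.1:ℝ)*q ≤ 0.7*(s*q) := by nlinarith
    have e2 : s*(2.1*q)^2 ≤ 0.2205*(s*q) := by nlinarith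
    have e3 : T 0 s * (2.1*q) ≤ T 0 s * (0.7*(s*q)) := by gcongr
    nlinarith [mul_pos hs hq0]
  linarith
lemma hasDerivAt_T' (k : ℕ) {s : ℝ} (hs : 0 < s) :
    HasDerivAt (T k) (-(T (k+1) s)) s := hasDerivAt_T k hs

/-- Poisson summation / Jacobi transformation. -/
lemma funct_eq {s : ℝ} (hs : 0 < s) :
    Real.sqrt s * T 0 s = Real.sqrt π * T 0 (π^2/s) := by
  have hπ : (0:ℝ) < π := Real.pi_pos
  have ha : 0 < s/π := by positivity
  have h := Real.tsum_exp_neg_mul_int_sq ha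
  have c1 : -π * (s/π) = -s := by field_simp
  have c2 : -π / (s/π) = -(π^2/s) := by
    rw [div_div_eq_mul_div]
    ring
  rw [c1, c2] at h
  have hT : T 0 s = ∑' n : ℤ, Real.exp (-s * (n:ℝ)^2) := by
    rw [T]; exact tsum_congr fun n => by norm_num
  have hT2 : T 0 (π^2/s) = ∑' n : ℤ, Real.exp (-(π^2/s) * (n:ℝ)^2) := by
    rw [T]; exact tsum_congr fun n => by norm_num
  rw [hT, hT2, h, ← Real.sqrt_eq_rpow, Real.sqrt_div hs.le]
  have h1 : Real.sqrt s ≠ 0 := by positivity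
  have h2 : Real.sqrt π ≠ 0 := by positivity
  field_simp

noncomputable def L (s : ℝ) : ℝ := s * T 1 s / T 0 s

lemma deriv_funct_eq {s : ℝ} (hs : 0 < s) :
    1/(2*Real.sqrt s) * T 0 s + Real.sqrt s * (-(T 1 s))
      = Real.sqrt π * (-(T 1 (π^2/s)) * -(π^2/s^2)) := by
  have hπ : (0:ℝ) < π := Real.pi_pos
  have h0 : 0 < π^2/s := by positivity
  have hL : HasDerivAt (fun x => Real.sqrt x * T 0 x)
      (1/(2*Real.sqrt s) * T 0 s + Real.sqrt s * (-(T 1 s))) s :=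
    (Real.hasDerivAt_sqrt (ne_of_gt hs)).mul (hasDerivAt_T' 0 hs)
  have hinner : HasDerivAt (fun x : ℝ => π^2/x) (-(π^2/s^2)) s := by
    have := (hasDerivAt_inv (ne_of_gt hs)).const_mul (π^2)
    simp only [div_eq_mul_inv]
    exact this.congr_deriv (by ring)
  have hcomp : HasDerivAt (fun x => T 0 (π^2/x)) (-(T 1 (π^2/s)) * -(π^2/s^2)) s :=
    (hasDerivAt_T' 0 h0).comp s hinner
  have hR : HasDerivAt (fun x => Real.sqrt π * T 0 (π^2/x))
      (Real.sqrt π * (-(T 1 (π^2/s)) * -(π^2/s^2))) s := hcomp.const_mul _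
  have heq : (fun x => Real.sqrt π * T 0 (π^2/x)) =ᶠ[nhds s] (fun x => Real.sqrt x * T 0 x) := by
    filter_upwards [Ioi_mem_nhds hs] with x hx
    exact (funct_eq hx).symm
  exact (hL.congr_of_eventuallyEq heq).unique hR
lemma L_add {s : ℝ} (hs : 0 < s) : L s + L (π^2/s) = 1/2 := by
  have hπ : (0:ℝ) < π := Real.pi_pos
  have h0 : 0 < π^2/s := by positivity
  have hd := deriv_funct_eq hs
  have hf := funct_eq hs
  have hA : 0 < T 0 s := T_pos 0 hs
  have hA' : 0 < T 0 (π^2/s) := T_pos 0 h0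
  have ha : 0 < Real.sqrt s := Real.sqrt_pos.2 hs
  have hp : 0 < Real.sqrt π := Real.sqrt_pos.2 hπ
  have ha2 : Real.sqrt s ^ 2 = s := Real.sq_sqrt hs.le
  have hp2 : Real.sqrt π ^ 2 = π := Real.sq_sqrt hπ.le
  field_simp at hd
  have hA'eq : T 0 (π^2/s) = Real.sqrt s * T 0 s / Real.sqrt π := by
    rw [eq_div_iff hp.ne']; linarith
  have hB'eq : T 1 (π^2/s) = (T 0 s - 2*s*T 1 s)*s^2/(2*Real.sqrt s*Real.sqrt π*π^2) := by
    rw [eq_div_iff (by positivity)]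
    linear_combination (-1)*hd + (-2*s^2*T 1 s)*ha2
  rw [L, L, hA'eq, hB'eq]
  field_simp
  linear_combination (2*s*T 1 s - T 0 s) * ha2
lemma hasDerivAt_L {s : ℝ} (hs : 0 < s) :
    HasDerivAt L (((1 * T 1 s + s * -T 2 s) * T 0 s - s * T 1 s * -T 1 s) / T 0 s ^ 2) s := by
  have h1 : HasDerivAt (fun x : ℝ => x * T 1 x) (1 * T 1 s + s * -T 2 s) s :=
    (hasDerivAt_id s).mul (hasDerivAt_T' 1 hs)
  exact h1.div (hasDerivAt_T' 0 hs) (ne_of_gt (T_pos 0 hs))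

lemma L_deriv_neg {s : ℝ} (h3 : 3 ≤ s) : deriv L s < 0 := by
  have hs : 0 < s := by linarith
  rw [(hasDerivAt_L hs).deriv]
  apply div_neg_of_neg_of_pos _ (pow_pos (T_pos 0 hs) 2)
  nlinarith [key_est h3]

lemma L_anti_Ici : StrictAntiOn L (Set.Ici (3:ℝ)) := by
  apply strictAntiOn_of_deriv_neg (convex_Ici 3)
  · intro x hx
    have hx' : (0:ℝ) < x := lt_of_lt_of_le (by norm_num) hx
    exact (hasDerivAt_L hx').continuousAt.continuousWithinAt
  · intro x hx
    rw [interior_Ici] at hx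
    exact L_deriv_neg (le_of_lt hx)

lemma L_anti : StrictAntiOn L (Set.Ioi (0:ℝ)) := by
  have hπ3 : (3:ℝ) < π := Real.pi_gt_three
  have hK : (3:ℝ) ≤ π^2/3 := by nlinarith
  have hanti_low : ∀ x y : ℝ, 0 < x → x < y → y ≤ π^2/3 → L y < L x := by
    intro x y hx hxy hyK
    have hy : 0 < y := lt_trans hx hxy
    have h1 : (3:ℝ) ≤ π^2/y := by
      rw [le_div_iff₀ hy]
      calc 3*y ≤ 3*(π^2/3) := by linarith
        _ = π^2 := by ring
    have h2 : π^2/y < π^2/x := by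
      apply div_lt_div_of_pos_left (by positivity) hx hxy
    have h3 := L_anti_Ici (Set.mem_Ici.2 h1) (Set.mem_Ici.2 (by linarith)) h2
    have e1 := L_add hx
    have e2 := L_add hy
    linarith
  intro x hx y hy hxy
  simp only [Set.mem_Ioi] at hx hy
  by_cases hyK : y ≤ π^2/3
  · exact hanti_low x y hx hxy hyK
  · push_neg at hyK
    by_cases hx3 : 3 ≤ x
    · exact L_anti_Ici (Set.mem_Ici.2 hx3) (Set.mem_Ici.2 (by linarith)) hxy
    · push_neg at hx3
      have h1 : L 3 < L x := hanti_low x 3 hx hx3 hK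
      have h2 : L y < L 3 := L_anti_Ici (Set.mem_Ici.2 le_rfl) (Set.mem_Ici.2 (by linarith)) (by linarith)
      linarith

section Phi
variable {t : ℝ}

lemma hasDerivAt_Phi (ht : 0 < t) {d : ℝ} (hd : 0 < d) :
    HasDerivAt (fun x => T 0 (t*x) * T 0 (t/x))
      ((T 0 (t*d) * T 0 (t/d) / d) * (L (t/d) - L (t*d))) d := by
  have h1i : HasDerivAt (fun x : ℝ => t*x) t d := by
    simpa using (hasDerivAt_id d).const_mul t
  have h1 : HasDerivAt (fun x => T 0 (t*x)) (-T 1 (t*d) * t) d :=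
    (hasDerivAt_T' 0 (by positivity)).comp d h1i
  have h2i : HasDerivAt (fun x : ℝ => t/x) (-(t/d^2)) d := by
    have := (hasDerivAt_inv (ne_of_gt hd)).const_mul t
    simp only [div_eq_mul_inv]
    exact this.congr_deriv (by ring)
  have h2 : HasDerivAt (fun x => T 0 (t/x)) (-T 1 (t/d) * -(t/d^2)) d :=
    (hasDerivAt_T' 0 (by positivity)).comp d h2i
  have h : HasDerivAt (fun x => T 0 (t*x) * T 0 (t/x)) _ d := h1.mul h2
  convert h using 1
  have hA1 : T 0 (t*d) ≠ 0 := ne_of_gt (T_pos 0 (by positivity))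
  have hA2 : T 0 (t/d) ≠ 0 := ne_of_gt (T_pos 0 (by positivity))
  rw [L, L]
  field_simp
  ring
end Phi
lemma Phi_mono {t : ℝ} (ht : 0 < t) :
    StrictMonoOn (fun x => T 0 (t*x) * T 0 (t/x)) (Set.Ici (1:ℝ)) := by
  apply strictMonoOn_of_deriv_pos (convex_Ici 1)
  · intro x hx
    have hx' : (0:ℝ) < x := lt_of_lt_of_le one_pos hx
    exact (hasDerivAt_Phi ht hx').continuousAt.continuousWithinAt
  · intro x hx
    rw [interior_Ici] at hx
    have hx' : (0:ℝ) < x := lt_trans one_pos hx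
    rw [(hasDerivAt_Phi ht hx').deriv]
    have hL : L (t*x) < L (t/x) := by
      apply L_anti (Set.mem_Ioi.2 (by positivity)) (Set.mem_Ioi.2 (by positivity))
      rw [div_lt_iff₀ hx']
      have hx1 : (1:ℝ) < x := hx
      have hxx : (1:ℝ) < x * x := by nlinarith
      nlinarith [mul_lt_mul_of_pos_left hxx ht]
    have h1 : 0 < T 0 (t*x) := T_pos 0 (by positivity)
    have h2 : 0 < T 0 (t/x) := T_pos 0 (by positivity)
    have h3 : 0 < T 0 (t*x) * T 0 (t/x) / x := by positivity
    nlinarith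

lemma Phi_symm {t : ℝ} (hΔ : 0 < (Δ : ℝ)) :
    T 0 (t*Δ) * T 0 (t/Δ) = T 0 (t*Δ⁻¹) * T 0 (t/Δ⁻¹) := by
  have e1 : t / Δ⁻¹ = t * Δ := by field_simp
  have e2 : t * Δ⁻¹ = t / Δ := by rw [div_eq_mul_inv]
  rw [e1, e2]
  ring

lemma Phi_gt {t : ℝ} (ht : 0 < t) {Δ : ℝ} (hΔ : 0 < Δ) (hne : Δ ≠ 1) :
    T 0 t * T 0 t < T 0 (t*Δ) * T 0 (t/Δ) := by
  have base : ∀ x : ℝ, 1 < x → T 0 t * T 0 t < T 0 (t*x) * T 0 (t/x) := by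
    intro x hx
    have h := Phi_mono ht (Set.mem_Ici.2 le_rfl) (Set.mem_Ici.2 hx.le) hx
    simpa [mul_one, div_one] using h
  rcases lt_or_gt_of_ne hne with h | h
  · have h1 : 1 < Δ⁻¹ := by
      rw [lt_inv_comm₀ one_pos hΔ]
      simpa using h
    rw [Phi_symm hΔ]
    exact base _ h1
  · exact base _ h

end Mont

lemma theta3_eq {s : ℝ} (hs : 0 < s) : theta3 (Real.exp (-s)) = Mont.T 0 s := by
  rw [theta3, Mont.T]
  refine tsum_congr fun j => ?_
  rw [← Real.exp_nat_mul]
  rw [pow_zero, one_mul]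
  congr 1
  have : ((j.natAbs ^ 2 : ℕ) : ℝ) = (j : ℝ)^2 := by
    push_cast [Int.natAbs_sq]
    rw [Nat.cast_natAbs]
    push_cast
    rw [← abs_pow]
    rw [abs_of_nonneg (sq_nonneg _)]
  rw [this]
  ring

/-- Montgomery's theta inequality: for every `t > 0` and `Δ > 0`,
`θ₃(e^{−tΔ})·θ₃(e^{−t/Δ}) ≥ θ₃(e^{−t})²`, with equality iff `Δ = 1`;
in particular `Δ ↦ θ₃(e^{−tΔ})·θ₃(e^{−t/Δ})` attains its unique minimum at `Δ = 1`. -/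
theorem montgomery_theta_inequality (t Δ : ℝ) (ht : 0 < t) (hΔ : 0 < Δ) :
    theta3 (Real.exp (-(t * Δ))) * theta3 (Real.exp (-(t / Δ))) ≥
      (theta3 (Real.exp (-t))) ^ 2 ∧
    (theta3 (Real.exp (-(t * Δ))) * theta3 (Real.exp (-(t / Δ))) =
      (theta3 (Real.exp (-t))) ^ 2 ↔ Δ = 1) := by
  have h1 : 0 < t * Δ := by positivity
  have h2 : 0 < t / Δ := by positivity
  rw [theta3_eq h1, theta3_eq h2, theta3_eq ht]
  have hsq : Mont.T 0 t ^ 2 = Mont.T 0 t * Mont.T 0 t := sq (Mont.T 0 t) ▸ rfl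
  by_cases hne : Δ = 1
  · subst hne
    simp only [mul_one, div_one]
    constructor
    · rw [hsq]
    · simp [hsq]
  · have h := Mont.Phi_gt ht hΔ hne
    constructor
    · rw [hsq]; exact le_of_lt h
    · constructor
      · intro heq
        rw [hsq] at heq
        exact absurd heq.symm (ne_of_lt h)
      · intro h1; exact absurd h1 hne
end

section
/- (Universal optimality of the square lattice among rectangular lattices.) Let μ be a nonnegative, nonzero Borel measure on (0,∞) and A > 0 be such that for every Δ > 0 the sum Σ_{(j,k)∈ℤ²∖{(0,0)}} ∫₀^∞ e^{−A(j²/Δ + k²Δ)s} dμ(s) is finite, and let f(r) := ∫₀^∞ e^{−r²s} dμ(s) for r > 0. Then for every Δ > 0 with Δ ≠ 1, E(A,Δ) > E(A,1); i.e., Δ = 1 is the unique minimizer of Δ ↦ E(A,Δ) on (0,∞). -/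
open MeasureTheory

open MeasureTheory Real Set Filter Topology

namespace SqLat

noncomputable def Th (t : ℝ) : ℝ := ∑' n : ℤ, Real.exp (-π * (n : ℝ) ^ 2 * t)

noncomputable def Th1 (t : ℝ) : ℝ :=
  ∑' n : ℤ, (-π * (n : ℝ) ^ 2) * Real.exp (-π * (n : ℝ) ^ 2 * t)

noncomputable def Th2 (t : ℝ) : ℝ :=
  ∑' n : ℤ, (-π * (n : ℝ) ^ 2) ^ 2 * Real.exp (-π * (n : ℝ) ^ 2 * t)

lemma summable_abs_pow (k : ℕ) {t : ℝ} (ht : 0 < t) :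
    Summable (fun n : ℤ => |(n : ℝ)| ^ k * Real.exp (-π * (n : ℝ) ^ 2 * t)) := by
  refine (HurwitzKernelBounds.summable_f_int k 0 ht).congr fun n => ?_
  simp [HurwitzKernelBounds.f_int]

lemma summable_poly_exp (k : ℕ) {t : ℝ} (ht : 0 < t) :
    Summable (fun n : ℤ => (|(n : ℝ)| + 1) ^ k * Real.exp (-π * (n : ℝ) ^ 2 * t)) := by
  have h1 := (summable_abs_pow k ht).mul_left ((2:ℝ) ^ k)
  have h2 := (summable_abs_pow 0 ht).mul_left ((2:ℝ) ^ k)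
  refine ((h1.add h2).of_nonneg_of_le (fun n => by positivity) (fun n => ?_))
  have hb : (|(n : ℝ)| + 1) ^ k ≤ 2 ^ k * |(n : ℝ)| ^ k + 2 ^ k * 1 := by
    rcases eq_or_ne n 0 with rfl | hn
    · have h2k : (1:ℝ) ≤ 2 ^ k := one_le_pow₀ (by norm_num)
      have h0k : (0:ℝ) ≤ 2 ^ k * |((0:ℤ):ℝ)| ^ k := by positivity
      have h0k' : (0:ℝ) ≤ 2 ^ k * (0:ℝ) ^ k := by positivity
      simp only [Int.cast_zero, abs_zero, zero_add, one_pow]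
      linarith
    · have h1 : (1:ℝ) ≤ |(n : ℝ)| := by
        rw [← Int.cast_abs]
        exact_mod_cast Int.one_le_abs hn
      calc (|(n : ℝ)| + 1) ^ k ≤ (2 * |(n : ℝ)|) ^ k := by
            gcongr; linarith
        _ = 2 ^ k * |(n : ℝ)| ^ k := by rw [mul_pow]
        _ ≤ 2 ^ k * |(n : ℝ)| ^ k + 2 ^ k * 1 := le_add_of_nonneg_right (by positivity)
  calc (|(n : ℝ)| + 1) ^ k * Real.exp (-π * (n : ℝ) ^ 2 * t)
      ≤ (2 ^ k * |(n : ℝ)| ^ k + 2 ^ k * 1) * Real.exp (-π * (n : ℝ) ^ 2 * t) := by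
        gcongr
    _ = 2 ^ k * (|(n : ℝ)| ^ k * Real.exp (-π * (n : ℝ) ^ 2 * t))
        + 2 ^ k * (|(n : ℝ)| ^ 0 * Real.exp (-π * (n : ℝ) ^ 2 * t)) := by
        simp; ring
    _ = _ := rfl

lemma summable_cexp {c : ℤ → ℝ} {k : ℕ} (hc : ∀ n : ℤ, |c n| ≤ (|(n : ℝ)| + 1) ^ k)
    {t : ℝ} (ht : 0 < t) :
    Summable (fun n : ℤ => c n * Real.exp (-π * (n : ℝ) ^ 2 * t)) := by
  refine (summable_poly_exp k ht).of_norm_bounded (fun n => ?_)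
  rw [norm_mul, Real.norm_eq_abs, Real.norm_eq_abs, abs_exp]
  exact mul_le_mul_of_nonneg_right (hc n) (exp_pos _).le

lemma hasDerivAt_texp {c : ℤ → ℝ} {k : ℕ} (hc : ∀ n : ℤ, |c n| ≤ (|(n : ℝ)| + 1) ^ k)
    {t : ℝ} (ht : 0 < t) :
    HasDerivAt (fun x => ∑' n : ℤ, c n * Real.exp (-π * (n : ℝ) ^ 2 * x))
      (∑' n : ℤ, (c n * (-π * (n : ℝ) ^ 2)) * Real.exp (-π * (n : ℝ) ^ 2 * t)) t := by
  have hc2 : ∀ n : ℤ, |c n * (-π * (n : ℝ) ^ 2)| ≤ 4 * (|(n : ℝ)| + 1) ^ (k + 2) := by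
    intro n
    rw [abs_mul]
    have h1 : |(-π * (n : ℝ) ^ 2)| ≤ 4 * (|(n : ℝ)| + 1) ^ 2 := by
      have hn2 : |(-π * (n:ℝ)^2)| = π * (n:ℝ)^2 := by
        rw [abs_mul, abs_neg, abs_of_nonneg pi_pos.le, abs_of_nonneg (sq_nonneg _)]
      rw [hn2]
      have h3 : (n:ℝ)^2 ≤ (|(n:ℝ)|+1)^2 := by nlinarith [sq_abs (n:ℝ), abs_nonneg (n:ℝ)]
      nlinarith [pi_le_four, pi_pos, sq_nonneg (n:ℝ)]
    calc |c n| * |(-π * (n : ℝ) ^ 2)| ≤ (|(n : ℝ)| + 1) ^ k * (4 * (|(n : ℝ)| + 1) ^ 2) := by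
          apply mul_le_mul (hc n) h1 (abs_nonneg _) (by positivity)
      _ = 4 * (|(n : ℝ)| + 1) ^ (k + 2) := by rw [pow_add]; ring
  have hu : Summable (fun n : ℤ => 4 * ((|(n : ℝ)| + 1) ^ (k + 2) *
      Real.exp (-π * (n : ℝ) ^ 2 * (t / 2)))) :=
    (summable_poly_exp (k + 2) (half_pos ht)).mul_left 4
  have hUnif : TendstoUniformlyOn
      (fun (N : Finset ℤ) (x : ℝ) => ∑ n ∈ N, (c n * (-π * (n:ℝ)^2)) * Real.exp (-π * (n:ℝ)^2 * x))
      (fun x => ∑' n : ℤ, (c n * (-π * (n:ℝ)^2)) * Real.exp (-π * (n:ℝ)^2 * x))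
      atTop (Ioi (t/2)) := by
    refine tendstoUniformlyOn_tsum hu ?_
    intro n x hx
    have hx2 : t / 2 ≤ x := le_of_lt hx
    rw [Real.norm_eq_abs, abs_mul, abs_exp]
    calc |c n * (-π * (n : ℝ) ^ 2)| * Real.exp (-π * (n : ℝ) ^ 2 * x)
        ≤ (4 * (|(n : ℝ)| + 1) ^ (k + 2)) * Real.exp (-π * (n : ℝ) ^ 2 * (t / 2)) := by
          apply mul_le_mul (hc2 n) ?_ (exp_pos _).le (by positivity)
          apply Real.exp_le_exp.mpr
          have : (0:ℝ) ≤ π * (n:ℝ)^2 := by positivity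
          nlinarith
      _ = 4 * ((|(n : ℝ)| + 1) ^ (k + 2) * Real.exp (-π * (n : ℝ) ^ 2 * (t / 2))) := by ring
  refine hasDerivAt_of_tendstoUniformlyOn
    (f := fun (N : Finset ℤ) (x : ℝ) => ∑ n ∈ N, c n * Real.exp (-π * (n:ℝ)^2 * x))
    (isOpen_Ioi (a := t / 2)) hUnif ?_ ?_
    (Set.mem_Ioi.mpr (half_lt_self ht))
  · -- partial sums differentiate termwise
    filter_upwards with N x hx
    apply HasDerivAt.fun_sum
    intro n _
    have h := ((hasDerivAt_id x).const_mul (-π * (n : ℝ) ^ 2)).exp.const_mul (c n)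
    simpa [mul_comm, mul_assoc, mul_left_comm] using h
  · -- pointwise convergence on the set
    intro x hx
    have hx0 : 0 < x := lt_trans (half_pos ht) hx
    exact (summable_cexp hc hx0).hasSum

lemma Th_summable {t : ℝ} (ht : 0 < t) :
    Summable (fun n : ℤ => Real.exp (-π * (n : ℝ) ^ 2 * t)) := by
  have := summable_cexp (c := fun _ => (1:ℝ)) (k := 0) (fun n => by simp) ht
  simpa using this

lemma hcN : ∀ n : ℤ, |π * (n:ℝ)^2| ≤ (|(n:ℝ)| + 1) ^ 4 := by
  intro n
  have ha : (0:ℝ) ≤ |(n:ℝ)| := abs_nonneg _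
  have h2 : (n:ℝ)^2 = |(n:ℝ)|^2 := (sq_abs _).symm
  rw [abs_mul, abs_of_nonneg pi_pos.le, abs_of_nonneg (sq_nonneg _), h2]
  nlinarith [pi_le_four, pi_pos, sq_nonneg (|(n:ℝ)| - 1), sq_nonneg (|(n:ℝ)| + 1),
    sq_nonneg (|(n:ℝ)|^2 - 1)]

lemma hcN2 : ∀ n : ℤ, |(π * (n:ℝ)^2)^2| ≤ (|(n:ℝ)| + 1) ^ 8 := by
  intro n
  set a := |(n:ℝ)| with hadef
  have ha : (0:ℝ) ≤ a := abs_nonneg _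
  have h2 : (n:ℝ)^2 = a^2 := (sq_abs _).symm
  rw [abs_of_nonneg (sq_nonneg _), h2]
  have h4 : 4 * a ≤ (a+1)^2 := by nlinarith [sq_nonneg (a - 1)]
  have h5 : (4*a)^4 ≤ ((a+1)^2)^4 := by
    apply pow_le_pow_left₀ (by linarith) h4 4
  have hpi : π^2 ≤ 16 := by nlinarith [pi_le_four, pi_pos]
  have : (π * a^2)^2 = π^2 * a^4 := by ring
  rw [this]
  calc π^2 * a^4 ≤ 16 * a^4 := by nlinarith [pow_nonneg ha 4]
    _ ≤ 256 * a^4 := by nlinarith [pow_nonneg ha 4]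
    _ = (4*a)^4 := by ring
    _ ≤ ((a+1)^2)^4 := h5
    _ = (a+1)^8 := by ring

lemma N_summable {t : ℝ} (ht : 0 < t) :
    Summable (fun n : ℤ => (π * (n:ℝ)^2) * Real.exp (-π * (n : ℝ) ^ 2 * t)) :=
  summable_cexp (k := 4) hcN ht

lemma Th2_summable {t : ℝ} (ht : 0 < t) :
    Summable (fun n : ℤ => ((π * (n:ℝ)^2))^2 * Real.exp (-π * (n : ℝ) ^ 2 * t)) :=
  summable_cexp (k := 8) hcN2 ht

lemma Th_hasDeriv {t : ℝ} (ht : 0 < t) : HasDerivAt Th (Th1 t) t := by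
  have h := hasDerivAt_texp (c := fun _ => (1:ℝ)) (k := 0) (fun n => by simp) ht
  have e1 : (fun x => ∑' n : ℤ, (1:ℝ) * Real.exp (-π * (n:ℝ)^2 * x)) = Th := by
    funext x; unfold Th; exact tsum_congr fun n => one_mul _
  rw [e1] at h
  convert h using 1
  unfold Th1
  exact tsum_congr fun n => by ring

lemma Th1_hasDeriv {t : ℝ} (ht : 0 < t) : HasDerivAt Th1 (Th2 t) t := by
  have hc : ∀ n : ℤ, |(fun m : ℤ => -π * ((m:ℝ)^2)) n| ≤ (|(n:ℝ)| + 1) ^ 4 := by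
    intro n
    have := hcN n
    simpa [abs_neg, neg_mul] using this
  have h := hasDerivAt_texp (c := fun m : ℤ => -π * ((m:ℝ)^2)) (k := 4) hc ht
  have e1 : (fun x => ∑' n : ℤ, (-π * (n:ℝ)^2) * Real.exp (-π * (n:ℝ)^2 * x)) = Th1 := by
    funext x; rfl
  rw [e1] at h
  convert h using 1
  unfold Th2
  exact tsum_congr fun n => by ring

lemma int_even_tsum {f : ℤ → ℝ} (hf : Summable f) (he : ∀ n : ℤ, f (-n) = f n) :
    ∑' n : ℤ, f n = f 0 + 2 * ∑' n : ℕ, f ((n : ℤ) + 1) := by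
  have hnat : Summable (fun n : ℕ => f (n : ℤ)) :=
    hf.comp_injective (fun a b h => by exact_mod_cast h)
  have hneg : Summable (fun n : ℕ => f (-((n : ℤ) + 1))) :=
    hf.comp_injective (fun a b h => by omega)
  rw [tsum_of_nat_of_neg_add_one hnat hneg, Summable.tsum_eq_zero_add hnat]
  have e2 : ∀ n : ℕ, f ((((n:ℕ) + 1 : ℕ)) : ℤ) = f ((n : ℤ) + 1) := by
    intro n; norm_num
  have e3 : ∀ n : ℕ, f (-((n : ℤ) + 1)) = f ((n : ℤ) + 1) := fun n => he _
  rw [tsum_congr e2, tsum_congr e3]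
  simp only [Nat.cast_zero]
  ring

lemma Th_nat {t : ℝ} (ht : 0 < t) :
    Th t = 1 + 2 * ∑' n : ℕ, Real.exp (-π * ((n:ℝ)+1)^2 * t) := by
  unfold Th
  rw [int_even_tsum (Th_summable ht) (fun n => by push_cast; ring_nf)]
  norm_num

lemma negTh1_nat {t : ℝ} (ht : 0 < t) :
    -Th1 t = 2 * ∑' n : ℕ, π * ((n:ℝ)+1)^2 * Real.exp (-π * ((n:ℝ)+1)^2 * t) := by
  unfold Th1
  rw [← tsum_neg]
  have e : ∀ n : ℤ, -((-π * (n:ℝ)^2) * Real.exp (-π * (n:ℝ)^2 * t))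
      = (π * (n:ℝ)^2) * Real.exp (-π * (n:ℝ)^2 * t) := fun n => by ring
  rw [tsum_congr e, int_even_tsum (N_summable ht) (fun n => by push_cast; ring_nf)]
  norm_num

lemma Th2_nat {t : ℝ} (ht : 0 < t) :
    Th2 t = 2 * ∑' n : ℕ, (π * ((n:ℝ)+1)^2)^2 * Real.exp (-π * ((n:ℝ)+1)^2 * t) := by
  unfold Th2
  have e : ∀ n : ℤ, (-π * (n:ℝ)^2)^2 * Real.exp (-π * (n:ℝ)^2 * t)
      = (π * (n:ℝ)^2)^2 * Real.exp (-π * (n:ℝ)^2 * t) := fun n => by ring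
  rw [tsum_congr e, int_even_tsum (Th2_summable ht) (fun n => by push_cast; ring_nf)]
  norm_num

lemma exp_ge_pow (n : ℕ) : (2.7182818283:ℝ)^(n:ℕ) ≤ Real.exp n := by
  calc (2.7182818283:ℝ)^(n:ℕ) ≤ Real.exp 1 ^ (n:ℕ) :=
        pow_le_pow_left₀ (by norm_num) Real.exp_one_gt_d9.le n
    _ = Real.exp n := by rw [← Real.exp_nat_mul]; norm_num

lemma exp_neg_3pi : Real.exp (-(3*π)) ≤ 1/1000 := by
  have h9 : (9:ℝ) ≤ 3*π := by nlinarith [pi_gt_three]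
  have h1 : Real.exp (-(3*π)) ≤ Real.exp (-(9:ℝ)) := by
    apply Real.exp_le_exp.mpr; linarith
  refine h1.trans ?_
  have h2 : (1000:ℝ) ≤ Real.exp 9 := by
    have := exp_ge_pow 9
    norm_num at this
    linarith
  rw [Real.exp_neg]
  rw [inv_le_comm₀ (Real.exp_pos _) (by norm_num)]
  norm_num
  linarith

lemma exp_neg_pi_le {t : ℝ} (ht : 1 ≤ t) : Real.exp (-π * t) ≤ 1/20 := by
  have h3 : (3:ℝ) ≤ π * t := by nlinarith [pi_gt_three]
  have h1 : Real.exp (-π * t) ≤ Real.exp (-(3:ℝ)) := by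
    apply Real.exp_le_exp.mpr; linarith
  refine h1.trans ?_
  have h2 : (20:ℝ) ≤ Real.exp 3 := by
    have := exp_ge_pow 3
    norm_num at this
    linarith
  rw [Real.exp_neg]
  rw [inv_le_comm₀ (Real.exp_pos _) (by norm_num)]
  norm_num
  linarith

lemma sum_nat0 {t : ℝ} (ht : 0 < t) :
    Summable (fun n : ℕ => Real.exp (-π * ((n:ℝ)+1)^2 * t)) :=
  (HurwitzKernelBounds.summable_f_nat 0 1 ht).congr fun n => by
    simp [HurwitzKernelBounds.f_nat]

lemma sum_nat0' {t : ℝ} (ht : 0 < t) :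
    Summable (fun n : ℕ => Real.exp (-π * ((n:ℝ)+2)^2 * t)) :=
  (HurwitzKernelBounds.summable_f_nat 0 2 ht).congr fun n => by
    simp [HurwitzKernelBounds.f_nat]

lemma sum_nat2 {t : ℝ} (ht : 0 < t) :
    Summable (fun n : ℕ => π * ((n:ℝ)+1)^2 * Real.exp (-π * ((n:ℝ)+1)^2 * t)) :=
  ((HurwitzKernelBounds.summable_f_nat 2 1 ht).mul_left π).congr fun n => by
    simp only [HurwitzKernelBounds.f_nat]; ring

lemma sum_nat2' {t : ℝ} (ht : 0 < t) :
    Summable (fun n : ℕ => ((n:ℝ)+2)^2 * Real.exp (-π * ((n:ℝ)+2)^2 * t)) :=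
  (HurwitzKernelBounds.summable_f_nat 2 2 ht).congr fun n => by
    simp [HurwitzKernelBounds.f_nat]

lemma sum_nat2p {t : ℝ} (ht : 0 < t) :
    Summable (fun n : ℕ => π * ((n:ℝ)+2)^2 * Real.exp (-π * ((n:ℝ)+2)^2 * t)) :=
  ((HurwitzKernelBounds.summable_f_nat 2 2 ht).mul_left π).congr fun n => by
    simp only [HurwitzKernelBounds.f_nat]; ring

lemma sum_nat4 {t : ℝ} (ht : 0 < t) :
    Summable (fun n : ℕ => (π * ((n:ℝ)+1)^2)^2 * Real.exp (-π * ((n:ℝ)+1)^2 * t)) :=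
  ((HurwitzKernelBounds.summable_f_nat 4 1 ht).mul_left (π^2)).congr fun n => by
    simp only [HurwitzKernelBounds.f_nat]; ring

lemma Th_ge_one {t : ℝ} (ht : 0 < t) : 1 ≤ Th t := by
  rw [Th_nat ht]
  have h : 0 ≤ ∑' n : ℕ, Real.exp (-π * ((n:ℝ)+1)^2 * t) :=
    tsum_nonneg fun n => (exp_pos _).le
  linarith

lemma Th_pos {t : ℝ} (ht : 0 < t) : 0 < Th t := lt_of_lt_of_le one_pos (Th_ge_one ht)

lemma tail_bound {t : ℝ} (ht : 1 ≤ t) :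
    ∑' n : ℕ, ((n:ℝ)+2)^2 * Real.exp (-π * ((n:ℝ)+2)^2 * t) ≤ Real.exp (-π * t) / 100 := by
  have ht0 : (0:ℝ) < t := lt_of_lt_of_le one_pos ht
  set y : ℝ := Real.exp (-(3*π)) with hydef
  have hy0 : 0 < y := Real.exp_pos _
  have hy3 : y ≤ 1/1000 := exp_neg_3pi
  have h3y1 : 3*y < 1 := by linarith
  have h3y0 : (0:ℝ) ≤ 3*y := by linarith
  set E : ℝ := Real.exp (-π * t) with hEdef
  have hE0 : 0 < E := Real.exp_pos _
  have hterm : ∀ n : ℕ, ((n:ℝ)+2)^2 * Real.exp (-π * ((n:ℝ)+2)^2 * t)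
      ≤ (E * 2 * (3*y)) * (3*y)^n := by
    intro n
    have h1 : ((n:ℝ)+2)^2 ≤ 2 * 3^(n+1) := by
      induction n with
      | zero => norm_num
      | succ m ih =>
        push_cast at ih ⊢
        have h3 : (0:ℝ) < 3^(m+1) := by positivity
        rw [show ((3:ℝ)^(m+1+1)) = 3^(m+1)*3 from pow_succ 3 (m+1)]
        nlinarith [ih, h3, Nat.cast_nonneg (α := ℝ) m, sq_nonneg ((m:ℝ))]
    have h2 : Real.exp (-π * ((n:ℝ)+2)^2 * t) ≤ E * y^(n+1) := by
      have hsplit : Real.exp (-π * ((n:ℝ)+2)^2 * t)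
          = E * Real.exp (-π * (((n:ℝ)+2)^2 - 1) * t) := by
        rw [hEdef, ← Real.exp_add]; congr 1; ring
      rw [hsplit]
      refine mul_le_mul_of_nonneg_left ?_ hE0.le
      have hyx : y^(n+1) = Real.exp (((n:ℕ)+1 : ℕ) * (-(3*π))) := by
        rw [hydef, ← Real.exp_nat_mul]
      rw [hyx]
      apply Real.exp_le_exp.mpr
      push_cast
      have hn0 : (0:ℝ) ≤ (n:ℝ) := Nat.cast_nonneg n
      have key : 3*((n:ℝ)+1) ≤ (((n:ℝ)+2)^2 - 1)*t := by
        have k1 : 3*((n:ℝ)+1) ≤ ((n:ℝ)+2)^2 - 1 := by nlinarith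
        have k2 : ((n:ℝ)+2)^2 - 1 ≤ (((n:ℝ)+2)^2 - 1)*t :=
          le_mul_of_one_le_right (by nlinarith) ht
        linarith
      nlinarith [mul_nonneg pi_pos.le (sub_nonneg.mpr key)]
    calc ((n:ℝ)+2)^2 * Real.exp (-π * ((n:ℝ)+2)^2 * t)
        ≤ (2 * 3^(n+1)) * (E * y^(n+1)) := by
          apply mul_le_mul h1 h2 (exp_pos _).le (by positivity)
      _ = (E * 2 * (3*y)) * (3*y)^n := by
          rw [mul_pow]; ring
  have hs2 : Summable (fun n : ℕ => (E * 2 * (3*y)) * (3*y)^n) :=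
    (summable_geometric_of_lt_one h3y0 h3y1).mul_left _
  have hs1 : Summable (fun n : ℕ => ((n:ℝ)+2)^2 * Real.exp (-π * ((n:ℝ)+2)^2 * t)) :=
    sum_nat2' ht0
  have hz : (1 - 3*y)⁻¹ ≤ 1.1 := by
    rw [inv_le_comm₀ (by linarith) (by norm_num)]
    norm_num
    linarith
  calc ∑' n : ℕ, ((n:ℝ)+2)^2 * Real.exp (-π * ((n:ℝ)+2)^2 * t)
      ≤ ∑' n : ℕ, (E * 2 * (3*y)) * (3*y)^n := Summable.tsum_le_tsum hterm hs1 hs2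
    _ = (E * 2 * (3*y)) * (1 - 3*y)⁻¹ := by
        rw [tsum_mul_left, tsum_geometric_of_lt_one h3y0 h3y1]
    _ ≤ (E * 2 * (3*y)) * 1.1 := by
        apply mul_le_mul_of_nonneg_left hz (by positivity)
    _ ≤ E / 100 := by nlinarith

lemma Th_le {t : ℝ} (ht : 1 ≤ t) : Th t ≤ 1 + 3 * Real.exp (-π * t) := by
  have ht0 : (0:ℝ) < t := lt_of_lt_of_le one_pos ht
  rw [Th_nat ht0]
  have hshift : ∑' n : ℕ, Real.exp (-π * ((n:ℝ)+1)^2 * t)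
      = Real.exp (-π * t) + ∑' n : ℕ, Real.exp (-π * ((n:ℝ)+2)^2 * t) := by
    rw [Summable.tsum_eq_zero_add (sum_nat0 ht0)]
    norm_num
    exact tsum_congr fun b => by rw [show ((b:ℝ)+1+1) = (b:ℝ)+2 from by ring]
  have h1m : ∀ n : ℕ, Real.exp (-π * ((n:ℝ)+2)^2 * t)
      ≤ ((n:ℝ)+2)^2 * Real.exp (-π * ((n:ℝ)+2)^2 * t) := by
    intro n
    have h1 : (1:ℝ) ≤ ((n:ℝ)+2)^2 := by nlinarith [Nat.cast_nonneg (α := ℝ) n]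
    nlinarith [(Real.exp_pos (-π * ((n:ℝ)+2)^2 * t)).le]
  have htail : ∑' n : ℕ, Real.exp (-π * ((n:ℝ)+2)^2 * t) ≤ Real.exp (-π*t)/100 :=
    le_trans (Summable.tsum_le_tsum h1m (sum_nat0' ht0) (sum_nat2' ht0)) (tail_bound ht)
  have hE0 := Real.exp_pos (-π * t)
  rw [hshift]
  linarith

lemma N_lower {t : ℝ} (ht : 0 < t) : 2*π*Real.exp (-π*t) ≤ -Th1 t := by
  rw [negTh1_nat ht]
  have h1 : π * Real.exp (-π*t) ≤ ∑' n : ℕ, π * ((n:ℝ)+1)^2 * Real.exp (-π * ((n:ℝ)+1)^2 * t) := by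
    have h0 := Summable.le_tsum (sum_nat2 ht) 0 (fun j _ => by positivity)
    calc π * Real.exp (-π*t)
        = π * (((0:ℕ):ℝ)+1)^2 * Real.exp (-π * (((0:ℕ):ℝ)+1)^2 * t) := by norm_num
      _ ≤ _ := h0
  linarith

lemma N_upper {t : ℝ} (ht : 1 ≤ t) : -Th1 t ≤ 2*π*Real.exp (-π*t) + Real.exp (-π*t) := by
  have ht0 : (0:ℝ) < t := lt_of_lt_of_le one_pos ht
  rw [negTh1_nat ht0]
  have hshift : ∑' n : ℕ, π * ((n:ℝ)+1)^2 * Real.exp (-π * ((n:ℝ)+1)^2 * t)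
      = π * Real.exp (-π * t) + ∑' n : ℕ, π * ((n:ℝ)+2)^2 * Real.exp (-π * ((n:ℝ)+2)^2 * t) := by
    rw [Summable.tsum_eq_zero_add (sum_nat2 ht0)]
    norm_num
    exact tsum_congr fun b => by rw [show ((b:ℝ)+1+1) = (b:ℝ)+2 from by ring]
  have heq : ∑' n : ℕ, π * ((n:ℝ)+2)^2 * Real.exp (-π * ((n:ℝ)+2)^2 * t)
      = π * ∑' n : ℕ, ((n:ℝ)+2)^2 * Real.exp (-π * ((n:ℝ)+2)^2 * t) := by
    rw [← tsum_mul_left]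
    exact tsum_congr fun n => by ring
  have htail := tail_bound ht
  have hE0 := Real.exp_pos (-π * t)
  have hpi4 := pi_le_four
  have hpi0 := pi_pos
  rw [hshift, heq]
  nlinarith [htail]

lemma Th2_lower {t : ℝ} (ht : 0 < t) : 2*π^2*Real.exp (-π*t) ≤ Th2 t := by
  rw [Th2_nat ht]
  have h1 : π^2 * Real.exp (-π*t)
      ≤ ∑' n : ℕ, (π * ((n:ℝ)+1)^2)^2 * Real.exp (-π * ((n:ℝ)+1)^2 * t) := by
    have h0 := Summable.le_tsum (sum_nat4 ht) 0 (fun j _ => by positivity)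
    calc π^2 * Real.exp (-π*t)
        = (π * (((0:ℕ):ℝ)+1)^2)^2 * Real.exp (-π * (((0:ℕ):ℝ)+1)^2 * t) := by norm_num
      _ ≤ _ := h0
  linarith

lemma Th_eq_evenKernel {t : ℝ} (ht : 0 < t) : Th t = HurwitzZeta.evenKernel 0 t := by
  have h := HurwitzZeta.hasSum_int_evenKernel (0:ℝ) ht
  simp only [add_zero] at h
  have h2 := h.tsum_eq
  unfold Th
  rw [h2]
  norm_num

lemma Th_funeq {t : ℝ} (ht : 0 < t) : Th t = (t ^ ((1:ℝ)/2))⁻¹ * Th (1/t) := by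
  rw [Th_eq_evenKernel ht, HurwitzZeta.evenKernel_functional_equation,
    ← HurwitzZeta.evenKernel_eq_cosKernel_of_zero, ← Th_eq_evenKernel (by positivity), one_div]

noncomputable def phi (t : ℝ) : ℝ := -t * Th1 t / Th t

lemma phi_hasDeriv {t : ℝ} (ht : 0 < t) :
    HasDerivAt phi ((((-1) * Th1 t + (-t) * Th2 t) * Th t - (-t * Th1 t) * Th1 t) / Th t ^ 2) t := by
  have hnum : HasDerivAt (fun x : ℝ => -x * Th1 x) ((-1) * Th1 t + (-t) * Th2 t) t :=
    ((hasDerivAt_id t).neg).mul (Th1_hasDeriv ht)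
  exact hnum.div (Th_hasDeriv ht) (Th_pos ht).ne'

lemma phi_deriv_neg {t : ℝ} (ht : 1 ≤ t) :
    (((-1) * Th1 t + (-t) * Th2 t) * Th t - (-t * Th1 t) * Th1 t) / Th t ^ 2 < 0 := by
  have ht0 : (0:ℝ) < t := lt_of_lt_of_le one_pos ht
  set E : ℝ := Real.exp (-π * t) with hE
  have hE0 : 0 < E := Real.exp_pos _
  have hE20 : E ≤ 1/20 := exp_neg_pi_le ht
  set N : ℝ := -Th1 t with hN
  set D : ℝ := Th t with hD
  set T : ℝ := Th2 t with hT
  have hN1 : 2*π*E ≤ N := N_lower ht0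
  have hN2 : N ≤ 2*π*E + E := N_upper ht
  have hD1 : 1 ≤ D := Th_ge_one ht0
  have hD2 : D ≤ 1 + 3*E := Th_le ht
  have hT1 : 2*π^2*E ≤ T := Th2_lower ht0
  have hpi3 : (3:ℝ) ≤ π := pi_gt_three.le
  have hpi4 : π ≤ 4 := pi_le_four
  have hN0 : 0 ≤ N := le_trans (by positivity) hN1
  apply div_neg_of_neg_of_pos ?_ (by positivity)
  have e1 : ((-1) * Th1 t + (-t) * Th2 t) * Th t - (-t * Th1 t) * Th1 t
      = (N - t*T) * D + t * N^2 := by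
    rw [hN, hD, hT]; ring
  rw [e1]
  have h1 : N * D ≤ (2*π*E + E) * (1 + 3*E) :=
    mul_le_mul hN2 hD2 (le_trans zero_le_one hD1) (by positivity)
  have h2 : t * (2*π^2*E) ≤ t * T * D := by
    calc t * (2*π^2*E) ≤ t * T := by
          apply mul_le_mul_of_nonneg_left hT1 ht0.le
      _ = t * T * 1 := by ring
      _ ≤ t * T * D := by
          have hT0 : 0 ≤ T := le_trans (by positivity) hT1
          apply mul_le_mul_of_nonneg_left hD1 (mul_nonneg ht0.le hT0)
  have h3 : t * N^2 ≤ t * (2*π*E + E)^2 := by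
    apply mul_le_mul_of_nonneg_left ?_ ht0.le
    exact pow_le_pow_left₀ hN0 hN2 2
  have hTE : E ≤ t * E := le_mul_of_one_le_left hE0.le ht
  have expand : (N - t*T) * D + t * N^2 = N * D - t * T * D + t * N^2 := by ring
  rw [expand]
  have hb0 : (2*π+1)^2 ≤ 81 := by nlinarith
  have hb0' : (2*π+1)^2 * E ≤ 81 * E :=
    mul_le_mul_of_nonneg_right hb0 hE0.le
  have hb1 : (2*π+1)^2*E - 2*π^2 ≤ -13 := by nlinarith
  have hb2 : t*((2*π+1)^2*E - 2*π^2) ≤ t*(-13) := mul_le_mul_of_nonneg_left hb1 ht0.le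
  have hc1 : (2*π+1) ≤ 9 := by linarith
  have hc2 : (1+3*E) ≤ 23/20 := by linarith
  have hc3 : (2*π+1)*(1+3*E) ≤ 9*(23/20) :=
    mul_le_mul hc1 hc2 (by positivity) (by norm_num)
  have hstep : (2*π+1)*(1+3*E) + t*((2*π+1)^2*E - 2*π^2) < 0 := by
    have : t*(-13) ≤ -13 := by linarith
    linarith
  have key : (2*π*E + E) * (1 + 3*E) - 2*π^2*E*t + t*(2*π*E+E)^2 < 0 := by
    have expand2 : (2*π*E + E) * (1 + 3*E) - 2*π^2*E*t + t*(2*π*E+E)^2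
        = E * ((2*π+1)*(1+3*E) + t*((2*π+1)^2*E - 2*π^2)) := by ring
    rw [expand2]
    exact mul_neg_of_pos_of_neg hE0 hstep
  linarith [h1, h2, h3, key]

lemma phi_anti1 : StrictAntiOn phi (Ici 1) := by
  apply strictAntiOn_of_deriv_neg (convex_Ici 1)
  · intro x hx
    exact ((phi_hasDeriv (lt_of_lt_of_le one_pos hx)).continuousAt).continuousWithinAt
  · intro x hx
    rw [interior_Ici] at hx
    rw [(phi_hasDeriv (lt_trans one_pos hx)).deriv]
    exact phi_deriv_neg hx.le

lemma phi_funeq {t : ℝ} (ht : 0 < t) : phi t + phi t⁻¹ = 1/2 := by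
  have hti : 0 < t⁻¹ := by positivity
  set r := t ^ ((1:ℝ)/2) with hrdef
  have hr : 0 < r := Real.rpow_pos_of_pos ht _
  have hrr : r * r = t := by
    rw [hrdef, ← Real.rpow_add ht]; norm_num
  have hsq : HasDerivAt (fun x : ℝ => x ^ ((1:ℝ)/2)) ((1/2) * t ^ ((1:ℝ)/2 - 1)) t :=
    Real.hasDerivAt_rpow_const (Or.inl ht.ne')
  have hinv1 : HasDerivAt (fun x : ℝ => (x ^ ((1:ℝ)/2))⁻¹)
      (-((1/2) * t ^ ((1:ℝ)/2 - 1)) / r ^ 2) t := hsq.inv hr.ne'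
  have hThinv : HasDerivAt (fun x : ℝ => Th x⁻¹) (Th1 t⁻¹ * (-(t^2)⁻¹)) t := by
    have := (Th_hasDeriv hti).comp t (hasDerivAt_inv ht.ne')
    simpa [Function.comp_def] using this
  have hg : HasDerivAt (fun x : ℝ => (x ^ ((1:ℝ)/2))⁻¹ * Th x⁻¹)
      ((-((1/2) * t ^ ((1:ℝ)/2 - 1)) / r ^ 2) * Th t⁻¹ + r⁻¹ * (Th1 t⁻¹ * (-(t^2)⁻¹))) t :=
    hinv1.mul hThinv
  have heq : Th =ᶠ[𝓝 t] fun x : ℝ => (x ^ ((1:ℝ)/2))⁻¹ * Th x⁻¹ := by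
    filter_upwards [Ioi_mem_nhds ht] with x hx
    rw [Th_funeq hx, show (1:ℝ)/x = x⁻¹ from one_div x]
  have hd : Th1 t = (-((1/2) * t ^ ((1:ℝ)/2 - 1)) / r ^ 2) * Th t⁻¹
      + r⁻¹ * (Th1 t⁻¹ * (-(t^2)⁻¹)) :=
    (Th_hasDeriv ht).unique (hg.congr_of_eventuallyEq heq)
  have hpow : t ^ ((1:ℝ)/2 - 1) = r / t := by
    rw [Real.rpow_sub ht, Real.rpow_one]
  have hfe : Th t = r⁻¹ * Th t⁻¹ := by
    rw [Th_funeq ht, show (1:ℝ)/t = t⁻¹ from one_div t]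
  have hA0 : 0 < Th t⁻¹ := Th_pos hti
  unfold phi
  rw [hd, hpow, hfe]
  set A := Th t⁻¹ with hA
  set B := Th1 t⁻¹ with hB
  rw [← hrr]
  have hr2 : r * r ≠ 0 := by positivity
  field_simp
  ring

lemma phi_one : phi 1 = 1/4 := by
  have := phi_funeq one_pos
  rw [inv_one] at this
  linarith

lemma phi_strictAntiOn : StrictAntiOn phi (Ioi 0) := by
  intro s hs t ht hst
  rw [mem_Ioi] at hs ht
  rcases le_or_gt 1 s with h1s | h1s
  · exact phi_anti1 (mem_Ici.mpr h1s) (mem_Ici.mpr (le_trans h1s hst.le)) hst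
  · have hfs := phi_funeq hs
    have hs1 : 1 < s⁻¹ := by
      rw [lt_inv_comm₀ one_pos hs]
      simpa using h1s
    rcases le_or_gt t 1 with h1t | h1t
    · have hft := phi_funeq ht
      have ht1 : 1 ≤ t⁻¹ := by
        rw [le_inv_comm₀ one_pos ht]
        simpa using h1t
      have hlt : t⁻¹ < s⁻¹ := by
        rw [inv_lt_inv₀ ht hs]
        exact hst
      have := phi_anti1 (mem_Ici.mpr ht1) (mem_Ici.mpr (le_trans ht1 hlt.le)) hlt
      linarith
    · have h2 : phi t < phi 1 := phi_anti1 (mem_Ici.mpr le_rfl) (mem_Ici.mpr h1t.le) h1t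
      have h4 : phi s⁻¹ < phi 1 := phi_anti1 (mem_Ici.mpr le_rfl) (mem_Ici.mpr hs1.le) hs1
      have h5 := phi_one
      linarith

lemma theta_prod_exp {c : ℝ} (hc : 0 < c) {u : ℝ} (hu : 0 < u) :
    Th c ^ 2 < Th (c * Real.exp (-u)) * Th (c * Real.exp u) := by
  set F : ℝ → ℝ := fun v => Real.log (Th (c * Real.exp (-v))) + Real.log (Th (c * Real.exp v))
    with hF
  have hx : ∀ v : ℝ, 0 < c * Real.exp v := fun v => by positivity
  have hderiv : ∀ v : ℝ, HasDerivAt F (phi (c * Real.exp (-v)) - phi (c * Real.exp v)) v := by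
    intro v
    have h1 : HasDerivAt (fun w : ℝ => c * Real.exp w) (c * Real.exp v) v := by
      simpa using (Real.hasDerivAt_exp v).const_mul c
    have h1' : HasDerivAt (fun w : ℝ => c * Real.exp (-w)) (-(c * Real.exp (-v))) v := by
      have h2 : HasDerivAt (fun w : ℝ => Real.exp (-w)) (-Real.exp (-v)) v := by
        simpa using ((hasDerivAt_id v).neg).exp
      have := h2.const_mul c
      exact this.congr_deriv (by ring)
    have h3 : HasDerivAt (fun w : ℝ => Th (c * Real.exp w))
        (Th1 (c * Real.exp v) * (c * Real.exp v)) v := by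
      have := (Th_hasDeriv (hx v)).comp v h1
      simpa [Function.comp_def] using this
    have h4 : HasDerivAt (fun w : ℝ => Th (c * Real.exp (-w)))
        (Th1 (c * Real.exp (-v)) * (-(c * Real.exp (-v)))) v := by
      have := (Th_hasDeriv (hx (-v))).comp v h1'
      simpa [Function.comp_def] using this
    have h5 := (h4.log (Th_pos (hx (-v))).ne').add (h3.log (Th_pos (hx v)).ne')
    refine h5.congr_deriv ?_
    unfold phi
    ring
  have hmono : StrictMonoOn F (Ici 0) := by
    apply strictMonoOn_of_deriv_pos (convex_Ici 0)
    · intro v _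
      exact (hderiv v).continuousAt.continuousWithinAt
    · intro v hv
      rw [interior_Ici] at hv
      rw [(hderiv v).deriv]
      have hlt : c * Real.exp (-v) < c * Real.exp v := by
        have h6 := Real.exp_lt_exp.mpr (neg_lt_self (mem_Ioi.mp hv))
        nlinarith [h6, hc]
      have := phi_strictAntiOn (mem_Ioi.mpr (hx (-v))) (mem_Ioi.mpr (hx v)) hlt
      linarith
  have hlt := hmono (mem_Ici.mpr le_rfl) (mem_Ici.mpr hu.le) hu
  have hF0 : F 0 = Real.log (Th c ^ 2) := by
    rw [hF]
    simp only [neg_zero, Real.exp_zero, mul_one]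
    rw [← Real.log_mul (Th_pos hc).ne' (Th_pos hc).ne', pow_two]
  have hFu : F u = Real.log (Th (c * Real.exp (-u)) * Th (c * Real.exp u)) := by
    simp only [hF]
    rw [← Real.log_mul (Th_pos (hx (-u))).ne' (Th_pos (hx u)).ne']
  rw [hF0, hFu] at hlt
  have h7 : (0:ℝ) < Th c ^ 2 := pow_pos (Th_pos hc) 2
  have h8 : (0:ℝ) < Th (c * Real.exp (-u)) * Th (c * Real.exp u) :=
    mul_pos (Th_pos (hx (-u))) (Th_pos (hx u))
  exact (Real.log_lt_log_iff h7 h8).mp hlt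

lemma theta_prod {c d : ℝ} (hc : 0 < c) (hd : 0 < d) (hne : d ≠ 1) :
    Th c ^ 2 < Th (c / d) * Th (c * d) := by
  rcases lt_or_gt_of_ne hne with h | h
  · have hu : 0 < -Real.log d := by
      have := Real.log_neg hd h
      linarith
    have h7 := theta_prod_exp hc hu
    rw [neg_neg, Real.exp_log hd, Real.exp_neg, Real.exp_log hd] at h7
    rw [div_eq_mul_inv]
    calc Th c ^ 2 < Th (c * d) * Th (c * d⁻¹) := h7
      _ = Th (c * d⁻¹) * Th (c * d) := mul_comm _ _
  · have hu : 0 < Real.log d := Real.log_pos h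
    have h7 := theta_prod_exp hc hu
    rw [Real.exp_neg, Real.exp_log hd] at h7
    rw [div_eq_mul_inv]
    exact h7

lemma ofReal_Th {a : ℝ} (ha : 0 < a) :
    ENNReal.ofReal (Th a) = ∑' n : ℤ, ENNReal.ofReal (Real.exp (-π * (n:ℝ)^2 * a)) := by
  unfold Th
  rw [ENNReal.ofReal_tsum_of_nonneg (fun n => (exp_pos _).le) (Th_summable ha)]

lemma tsum_split_zero (g : ℤ × ℤ → ENNReal) :
    ∑' p : ℤ × ℤ, g p = g 0 + ∑' p : {p : ℤ × ℤ // p ≠ 0}, g p.1 := by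
  have h1 : (∑' x : ({p : ℤ × ℤ | p ≠ 0} : Set (ℤ × ℤ)), g x)
      + ∑' x : (({p : ℤ × ℤ | p ≠ 0} : Set (ℤ × ℤ))ᶜ : Set (ℤ × ℤ)), g x = ∑' p : ℤ × ℤ, g p :=
    Summable.tsum_add_tsum_compl ENNReal.summable ENNReal.summable
  rw [← h1, add_comm]
  congr 1
  · have e : (({p : ℤ × ℤ | p ≠ 0} : Set (ℤ × ℤ))ᶜ) = {(0 : ℤ × ℤ)} := by
      ext p; simp
    rw [e]
    exact tsum_singleton 0 g

lemma key_ennreal {a b : ℝ} (ha : 0 < a) (hb : 0 < b) :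
    (1:ENNReal) + ∑' p : {p : ℤ × ℤ // p ≠ 0},
        ENNReal.ofReal (Real.exp (-(π * ((p.1.1:ℝ)^2 * a + (p.1.2:ℝ)^2 * b))))
      = ENNReal.ofReal (Th a * Th b) := by
  have htotal : ∑' p : ℤ × ℤ,
      ENNReal.ofReal (Real.exp (-(π * ((p.1:ℝ)^2 * a + (p.2:ℝ)^2 * b))))
      = ENNReal.ofReal (Th a * Th b) := by
    have hfact : ∀ p : ℤ × ℤ,
        ENNReal.ofReal (Real.exp (-(π * ((p.1:ℝ)^2 * a + (p.2:ℝ)^2 * b))))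
        = ENNReal.ofReal (Real.exp (-π * (p.1:ℝ)^2 * a))
          * ENNReal.ofReal (Real.exp (-π * (p.2:ℝ)^2 * b)) := by
      intro p
      rw [← ENNReal.ofReal_mul (exp_pos _).le, ← Real.exp_add]
      congr 2
      ring
    have hp2 : (∑' p : ℤ × ℤ, ENNReal.ofReal (Real.exp (-π * (p.1:ℝ)^2 * a))
        * ENNReal.ofReal (Real.exp (-π * (p.2:ℝ)^2 * b)))
        = ∑' j : ℤ, ∑' k : ℤ, ENNReal.ofReal (Real.exp (-π * (j:ℝ)^2 * a))
          * ENNReal.ofReal (Real.exp (-π * (k:ℝ)^2 * b)) :=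
      ENNReal.tsum_prod (f := fun (j k : ℤ) => ENNReal.ofReal (Real.exp (-π * (j:ℝ)^2 * a))
        * ENNReal.ofReal (Real.exp (-π * (k:ℝ)^2 * b)))
    rw [tsum_congr hfact, hp2]
    have hinner : ∀ j : ℤ, (∑' k : ℤ, ENNReal.ofReal (Real.exp (-π * (j:ℝ)^2 * a))
          * ENNReal.ofReal (Real.exp (-π * (k:ℝ)^2 * b)))
        = ENNReal.ofReal (Real.exp (-π * (j:ℝ)^2 * a)) * ENNReal.ofReal (Th b) := by
      intro j
      rw [ENNReal.tsum_mul_left, ofReal_Th hb]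
    rw [tsum_congr hinner, ENNReal.tsum_mul_right, ← ofReal_Th ha,
      ← ENNReal.ofReal_mul (Th_pos ha).le]
  have hsplit := tsum_split_zero (fun p : ℤ × ℤ =>
    ENNReal.ofReal (Real.exp (-(π * ((p.1:ℝ)^2 * a + (p.2:ℝ)^2 * b)))))
  rw [← htotal, hsplit]
  congr 1
  · simp

lemma pointwise_lt {A : ℝ} (hA : 0 < A) {Δ : ℝ} (hΔ : 0 < Δ) (hne : Δ ≠ 1)
    {s : ℝ} (hs : 0 < s) :
    (∑' p : {p : ℤ × ℤ // p ≠ 0},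
      ENNReal.ofReal (Real.exp (-(A * ((p.1.1:ℝ)^2/1 + (p.1.2:ℝ)^2*1)) * s)))
    < ∑' p : {p : ℤ × ℤ // p ≠ 0},
      ENNReal.ofReal (Real.exp (-(A * ((p.1.1:ℝ)^2/Δ + (p.1.2:ℝ)^2*Δ)) * s)) := by
  have hπ : (0:ℝ) < π := pi_pos
  set c : ℝ := A*s/π with hc
  have hc0 : 0 < c := by positivity
  have e1 : ∀ p : {p : ℤ × ℤ // p ≠ 0},
      ENNReal.ofReal (Real.exp (-(A * ((p.1.1:ℝ)^2/1 + (p.1.2:ℝ)^2*1)) * s))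
      = ENNReal.ofReal (Real.exp (-(π * ((p.1.1:ℝ)^2 * c + (p.1.2:ℝ)^2 * c)))) := by
    intro p
    congr 1
    rw [hc]
    field_simp
  have eΔ : ∀ p : {p : ℤ × ℤ // p ≠ 0},
      ENNReal.ofReal (Real.exp (-(A * ((p.1.1:ℝ)^2/Δ + (p.1.2:ℝ)^2*Δ)) * s))
      = ENNReal.ofReal (Real.exp (-(π * ((p.1.1:ℝ)^2 * (c/Δ) + (p.1.2:ℝ)^2 * (c*Δ))))) := by
    intro p
    congr 1
    rw [hc]
    field_simp
  have g1 : (1:ENNReal) + ∑' p : {p : ℤ × ℤ // p ≠ 0},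
      ENNReal.ofReal (Real.exp (-(A * ((p.1.1:ℝ)^2/1 + (p.1.2:ℝ)^2*1)) * s))
      = ENNReal.ofReal (Th c * Th c) := by
    rw [tsum_congr e1]
    exact key_ennreal hc0 hc0
  have gΔ : (1:ENNReal) + ∑' p : {p : ℤ × ℤ // p ≠ 0},
      ENNReal.ofReal (Real.exp (-(A * ((p.1.1:ℝ)^2/Δ + (p.1.2:ℝ)^2*Δ)) * s))
      = ENNReal.ofReal (Th (c/Δ) * Th (c*Δ)) := by
    rw [tsum_congr eΔ]
    exact key_ennreal (div_pos hc0 hΔ) (mul_pos hc0 hΔ)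
  refine (ENNReal.add_lt_add_iff_left (a := (1:ENNReal)) ENNReal.one_ne_top).mp ?_
  rw [g1, gΔ]
  rw [ENNReal.ofReal_lt_ofReal_iff (mul_pos (Th_pos (div_pos hc0 hΔ)) (Th_pos (mul_pos hc0 hΔ)))]
  have := theta_prod hc0 hΔ hne
  nlinarith [this]

end SqLat

/-- The rectangular-lattice energy
`E(A,Δ) = (1/2) Σ_{(j,k) ∈ ℤ²∖{0}} f(√(A(j²/Δ + k²Δ)))`. -/
noncomputable def rectEnergy (f : ℝ → ℝ) (A Δ : ℝ) : ℝ :=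
  (1 / 2) * ∑' p : {p : ℤ × ℤ // p ≠ 0},
    f (Real.sqrt (A * ((p.1.1 : ℝ) ^ 2 / Δ + (p.1.2 : ℝ) ^ 2 * Δ)))

/-- Universal optimality of the square lattice among rectangular lattices:
if `f` is the Laplace transform (in `r²`) of a nonnegative nonzero Borel measure `μ`
on `(0,∞)` and all lattice sums converge, then `Δ = 1` is the unique minimizer
of `Δ ↦ E(A,Δ)` on `(0,∞)`. -/
theorem square_lattice_universal_optimality
    (μ : Measure ℝ) (hμ : μ (Set.Ioi 0) ≠ 0) (A : ℝ) (hA : 0 < A)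
    (hfin : ∀ Δ : ℝ, 0 < Δ →
      (∑' p : {p : ℤ × ℤ // p ≠ 0},
        ∫⁻ s in Set.Ioi (0 : ℝ),
          ENNReal.ofReal
            (Real.exp (-(A * ((p.1.1 : ℝ) ^ 2 / Δ + (p.1.2 : ℝ) ^ 2 * Δ)) * s)) ∂μ) ≠ ⊤)
    (f : ℝ → ℝ)
    (hf : ∀ r : ℝ, 0 < r → f r = ∫ s in Set.Ioi (0 : ℝ), Real.exp (-r ^ 2 * s) ∂μ) :
    ∀ Δ : ℝ, 0 < Δ → Δ ≠ 1 → rectEnergy f A 1 < rectEnergy f A Δ := by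

  intro Δ hΔ hΔ1
  have hmeas : ∀ (D : ℝ) (p : {p : ℤ × ℤ // p ≠ 0}), Measurable (fun s : ℝ =>
      ENNReal.ofReal (Real.exp (-(A * ((p.1.1 : ℝ) ^ 2 / D + (p.1.2 : ℝ) ^ 2 * D)) * s))) := by
    intro D p
    exact (Real.measurable_exp.comp (measurable_id.const_mul _)).ennreal_ofReal
  have hxp : ∀ (D : ℝ), 0 < D → ∀ p : {p : ℤ × ℤ // p ≠ 0},
      0 < A * ((p.1.1 : ℝ) ^ 2 / D + (p.1.2 : ℝ) ^ 2 * D) := by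
    intro D hD p
    have hp := p.2
    have hjk : p.1.1 ≠ 0 ∨ p.1.2 ≠ 0 := by
      by_contra h
      push_neg at h
      exact hp (Prod.ext h.1 h.2)
    rcases hjk with h | h
    · have hx0 : ((p.1.1 : ℤ) : ℝ) ≠ 0 := Int.cast_ne_zero.mpr h
      positivity
    · have hy0 : ((p.1.2 : ℤ) : ℝ) ≠ 0 := Int.cast_ne_zero.mpr h
      positivity
  have hE : ∀ (D : ℝ), 0 < D →
      rectEnergy f A D = (1/2) * (∑' p : {p : ℤ × ℤ // p ≠ 0},
        ∫⁻ s in Set.Ioi (0:ℝ), ENNReal.ofReal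
          (Real.exp (-(A * ((p.1.1 : ℝ) ^ 2 / D + (p.1.2 : ℝ) ^ 2 * D)) * s)) ∂μ).toReal := by
    intro D hD
    unfold rectEnergy
    congr 1
    rw [ENNReal.tsum_toReal_eq (fun p => ne_top_of_le_ne_top (hfin D hD) (ENNReal.le_tsum p))]
    apply tsum_congr
    intro p
    have hx := hxp D hD p
    rw [hf _ (Real.sqrt_pos.mpr hx), Real.sq_sqrt hx.le]
    have hcont : Continuous fun s : ℝ =>
        Real.exp (-(A * (((p.1.1:ℤ):ℝ))^2 / D + ((p.1.2:ℤ):ℝ)^2*D * 0)) := continuous_const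
    have hcont2 : Continuous fun s : ℝ =>
        Real.exp (-(A * ((((p.1.1:ℤ):ℝ))^2 / D + (((p.1.2:ℤ):ℝ))^2 * D)) * s) := by fun_prop
    rw [integral_eq_lintegral_of_nonneg_ae (ae_of_all _ fun s => (Real.exp_pos _).le)
      hcont2.aestronglyMeasurable]
  have hswap : ∀ (D : ℝ), (∑' p : {p : ℤ × ℤ // p ≠ 0},
      ∫⁻ s in Set.Ioi (0:ℝ), ENNReal.ofReal
        (Real.exp (-(A * ((p.1.1 : ℝ) ^ 2 / D + (p.1.2 : ℝ) ^ 2 * D)) * s)) ∂μ)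
      = ∫⁻ s in Set.Ioi (0:ℝ), (∑' p : {p : ℤ × ℤ // p ≠ 0}, ENNReal.ofReal
        (Real.exp (-(A * ((p.1.1 : ℝ) ^ 2 / D + (p.1.2 : ℝ) ^ 2 * D)) * s))) ∂μ := by
    intro D
    exact (MeasureTheory.lintegral_tsum (fun p => (hmeas D p).aemeasurable)).symm
  have hres : μ.restrict (Set.Ioi (0:ℝ)) ≠ 0 := by
    intro h
    apply hμ
    rw [← Measure.restrict_apply_univ, h]
    simp
  have hlt : (∑' p : {p : ℤ × ℤ // p ≠ 0},
      ∫⁻ s in Set.Ioi (0:ℝ), ENNReal.ofReal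
        (Real.exp (-(A * ((p.1.1 : ℝ) ^ 2 / 1 + (p.1.2 : ℝ) ^ 2 * 1)) * s)) ∂μ)
      < ∑' p : {p : ℤ × ℤ // p ≠ 0},
      ∫⁻ s in Set.Ioi (0:ℝ), ENNReal.ofReal
        (Real.exp (-(A * ((p.1.1 : ℝ) ^ 2 / Δ + (p.1.2 : ℝ) ^ 2 * Δ)) * s)) ∂μ := by
    rw [hswap 1, hswap Δ]
    apply MeasureTheory.lintegral_strict_mono hres
    · exact (Measurable.ennreal_tsum (fun p => hmeas Δ p)).aemeasurable
    · rw [← hswap 1]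
      exact hfin 1 one_pos
    · refine (ae_restrict_iff' measurableSet_Ioi).mpr (ae_of_all _ fun s hs => ?_)
      exact SqLat.pointwise_lt hA hΔ hΔ1 hs
  rw [hE 1 one_pos, hE Δ hΔ]
  have h2 := ENNReal.toReal_strict_mono (hfin Δ hΔ) hlt
  linarith
end

section
/- (Integral representation of the energy.) Let μ be a signed Borel measure on (0,∞), A > 0 and Δ > 0. Assume that s ↦ e^{−r²s} is |μ|-integrable for every r > 0, define f(r) := ∫₀^∞ e^{−r²s} dμ(s), and assume Σ_{(j,k)∈ℤ²∖{(0,0)}} ∫₀^∞ e^{−A(j²/Δ + k²Δ)s} d|μ|(s) < ∞. Then E(A,Δ) = (1/2) ∫₀^∞ [ θ₃(e^{−As/Δ})·θ₃(e^{−AsΔ}) − 1 ] dμ(s). -/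
open MeasureTheory

/-- `Θ(t) := θ₃(e^{−t})`. -/
noncomputable def Θ (t : ℝ) : ℝ := theta3 (Real.exp (-t))

lemma summable_exp_neg_sq {t : ℝ} (ht : 0 < t) :
    Summable (fun j : ℤ => Real.exp (-t * (j : ℝ) ^ 2)) := by
  have hlt : Real.exp (-t) < 1 := by
    rw [Real.exp_lt_one_iff]; linarith
  have hnat : Summable (fun n : ℕ => Real.exp (-t * (n : ℝ) ^ 2)) := by
    refine Summable.of_nonneg_of_le (fun n => (Real.exp_pos _).le) (fun n => ?_)
      (summable_geometric_of_lt_one (Real.exp_pos _).le hlt)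
    rw [← Real.exp_nat_mul]
    apply Real.exp_le_exp.2
    have h : (n : ℝ) ≤ (n : ℝ) ^ 2 := by
      exact_mod_cast Nat.le_self_pow two_ne_zero n
    nlinarith
  apply Summable.of_nat_of_neg <;> simpa using hnat

lemma theta_eq (t : ℝ) : Θ t = ∑' j : ℤ, Real.exp (-t * (j : ℝ) ^ 2) := by
  unfold Θ theta3
  apply tsum_congr
  intro j
  rw [← Real.exp_nat_mul]
  congr 1
  push_cast [Nat.cast_natAbs]
  rw [sq_abs]; ring

lemma summable_exp_prod {t u : ℝ} (ht : 0 < t) (hu : 0 < u) :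
    Summable (fun p : ℤ × ℤ =>
      Real.exp (-(t * (p.1 : ℝ) ^ 2 + u * (p.2 : ℝ) ^ 2))) := by
  have hs : Summable (fun p : ℤ × ℤ =>
      Real.exp (-t * (p.1 : ℝ) ^ 2) * Real.exp (-u * (p.2 : ℝ) ^ 2)) :=
    (summable_exp_neg_sq ht).mul_of_nonneg (summable_exp_neg_sq hu)
      (fun _ => (Real.exp_pos _).le) (fun _ => (Real.exp_pos _).le)
  refine hs.congr fun p => ?_
  rw [← Real.exp_add]; ring_nf

lemma theta_mul {t u : ℝ} (ht : 0 < t) (hu : 0 < u) :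
    Θ t * Θ u = ∑' p : ℤ × ℤ, Real.exp (-(t * (p.1 : ℝ) ^ 2 + u * (p.2 : ℝ) ^ 2)) := by
  rw [theta_eq, theta_eq]
  rw [tsum_mul_tsum_of_summable_norm
    (by simpa [Real.norm_eq_abs, abs_of_pos (Real.exp_pos _)] using summable_exp_neg_sq ht)
    (by simpa [Real.norm_eq_abs, abs_of_pos (Real.exp_pos _)] using summable_exp_neg_sq hu)]
  exact tsum_congr fun p => by rw [← Real.exp_add]; ring_nf

lemma tsum_ne_zero_eq {g : ℤ × ℤ → ℝ} (hg : Summable g) :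
    ∑' p : {p : ℤ × ℤ // p ≠ 0}, g p = (∑' p, g p) - g 0 := by
  have h := Summable.sum_add_tsum_subtype_compl hg ({0} : Finset (ℤ × ℤ))
  have he : (∑' p : {p : ℤ × ℤ // p ≠ 0}, g (p : ℤ × ℤ))
      = ∑' x : {x : ℤ × ℤ // x ∉ ({0} : Finset (ℤ × ℤ))}, g (x : ℤ × ℤ) :=
    (Equiv.subtypeEquivRight (p := fun x : ℤ × ℤ => x ≠ 0)
      (q := fun x : ℤ × ℤ => x ∉ ({0} : Finset (ℤ × ℤ))) (fun x => by simp)).tsum_eq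
      (fun x : {x : ℤ × ℤ // x ∉ ({0} : Finset (ℤ × ℤ))} => g (x : ℤ × ℤ))
  rw [he]
  simp only [Finset.sum_singleton] at h
  linarith

lemma key_identity {A Δ : ℝ} (hA : 0 < A) (hΔ : 0 < Δ) {s : ℝ} (hs : 0 < s) :
    Θ (A * s / Δ) * Θ (A * s * Δ) - 1 =
      ∑' p : {p : ℤ × ℤ // p ≠ 0},
        Real.exp (-(A * ((p.1.1 : ℝ) ^ 2 / Δ + (p.1.2 : ℝ) ^ 2 * Δ)) * s) := by
  have ht : 0 < A * s / Δ := by positivity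
  have hu : 0 < A * s * Δ := by positivity
  have hG : ∀ p : ℤ × ℤ,
      Real.exp (-(A * ((p.1 : ℝ) ^ 2 / Δ + (p.2 : ℝ) ^ 2 * Δ)) * s)
        = Real.exp (-((A * s / Δ) * (p.1 : ℝ) ^ 2 + (A * s * Δ) * (p.2 : ℝ) ^ 2)) := by
    intro p
    congr 1
    field_simp
  rw [theta_mul ht hu]
  rw [tsum_congr (fun p : {p : ℤ × ℤ // p ≠ 0} => hG p.1)]
  rw [tsum_ne_zero_eq (summable_exp_prod ht hu)]
  norm_num

lemma exp_meas (c : ℝ) (ν : Measure ℝ) :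
    AEStronglyMeasurable (fun s : ℝ => Real.exp (-c * s)) ν :=
  (Real.continuous_exp.comp (continuous_const.mul continuous_id)).aestronglyMeasurable

lemma interchange {ν : Measure ℝ} {c : {p : ℤ × ℤ // p ≠ 0} → ℝ}
    (hfin : (∑' p : {p : ℤ × ℤ // p ≠ 0},
      ∫⁻ s in Set.Ioi (0:ℝ), ENNReal.ofReal (Real.exp (-(c p) * s)) ∂ν) ≠ ⊤) :
    ∫ s in Set.Ioi (0:ℝ), (∑' p : {p : ℤ × ℤ // p ≠ 0}, Real.exp (-(c p) * s)) ∂ν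
      = ∑' p : {p : ℤ × ℤ // p ≠ 0}, ∫ s in Set.Ioi (0:ℝ), Real.exp (-(c p) * s) ∂ν := by
  apply integral_tsum (fun p => exp_meas _ _)
  have h : ∀ p : {p : ℤ × ℤ // p ≠ 0},
      (∫⁻ s in Set.Ioi (0:ℝ), ‖Real.exp (-(c p) * s)‖ₑ ∂ν)
        = ∫⁻ s in Set.Ioi (0:ℝ), ENNReal.ofReal (Real.exp (-(c p) * s)) ∂ν :=
    fun p => lintegral_congr fun s => Real.enorm_eq_ofReal (Real.exp_pos _).le
  rw [tsum_congr h]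
  exact hfin

/-- Integral representation of the energy: if `f(r) = ∫₀^∞ e^{−r²s} dμ(s)` for a signed
Borel measure `μ = μp − μn` (Jordan decomposition, `|μ| = μp + μn`), with all the stated
integrability/summability assumptions, then
`E(A,Δ) = (1/2) ∫₀^∞ [θ₃(e^{−As/Δ})·θ₃(e^{−AsΔ}) − 1] dμ(s)`. -/
theorem energy_integral_representation
    (μp μn : Measure ℝ) [SigmaFinite μp] [SigmaFinite μn] (hsing : μp ⟂ₘ μn)
    (A Δ : ℝ) (hA : 0 < A) (hΔ : 0 < Δ)
    (hint : ∀ r : ℝ, 0 < r →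
      IntegrableOn (fun s => Real.exp (-r ^ 2 * s)) (Set.Ioi 0) (μp + μn))
    (f : ℝ → ℝ)
    (hf : ∀ r : ℝ, 0 < r → f r =
      (∫ s in Set.Ioi (0 : ℝ), Real.exp (-r ^ 2 * s) ∂μp) -
        ∫ s in Set.Ioi (0 : ℝ), Real.exp (-r ^ 2 * s) ∂μn)
    (hsum : (∑' p : {p : ℤ × ℤ // p ≠ 0},
      ∫⁻ s in Set.Ioi (0 : ℝ),
        ENNReal.ofReal
          (Real.exp (-(A * ((p.1.1 : ℝ) ^ 2 / Δ + (p.1.2 : ℝ) ^ 2 * Δ)) * s))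
        ∂(μp + μn)) ≠ ⊤) :
    rectEnergy f A Δ =
      (1 / 2) * ((∫ s in Set.Ioi (0 : ℝ), (Θ (A * s / Δ) * Θ (A * s * Δ) - 1) ∂μp) -
        ∫ s in Set.Ioi (0 : ℝ), (Θ (A * s / Δ) * Θ (A * s * Δ) - 1) ∂μn) := by
  set c : {p : ℤ × ℤ // p ≠ 0} → ℝ :=
    fun p => A * ((p.1.1 : ℝ) ^ 2 / Δ + (p.1.2 : ℝ) ^ 2 * Δ) with hc_def
  -- positivity of c
  have hc : ∀ p, 0 < c p := by
    rintro ⟨⟨j, k⟩, hp⟩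
    have h0 : j ≠ 0 ∨ k ≠ 0 := by
      by_contra h; push_neg at h
      exact hp (Prod.ext h.1 h.2)
    have hpos : 0 < (j : ℝ) ^ 2 / Δ + (k : ℝ) ^ 2 * Δ := by
      rcases h0 with h | h
      · have hx : (j : ℝ) ≠ 0 := Int.cast_ne_zero.2 h
        have h1 : 0 < (j : ℝ) ^ 2 := lt_of_le_of_ne (sq_nonneg _) (Ne.symm (pow_ne_zero 2 hx))
        have h2 : 0 ≤ (k : ℝ) ^ 2 * Δ := by positivity
        have := div_pos h1 hΔ
        linarith
      · have hx : (k : ℝ) ≠ 0 := Int.cast_ne_zero.2 h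
        have h1 : 0 < (k : ℝ) ^ 2 := lt_of_le_of_ne (sq_nonneg _) (Ne.symm (pow_ne_zero 2 hx))
        have h2 : 0 ≤ (j : ℝ) ^ 2 / Δ := by positivity
        nlinarith
    exact mul_pos hA hpos
  -- restricted finiteness for μp and μn
  have hμle : ∀ ν ν' : Measure ℝ, (∑' p : {p : ℤ × ℤ // p ≠ 0},
      ∫⁻ s in Set.Ioi (0 : ℝ), ENNReal.ofReal (Real.exp (-(c p) * s)) ∂(ν + ν')) ≠ ⊤ →
      (∑' p : {p : ℤ × ℤ // p ≠ 0},
      ∫⁻ s in Set.Ioi (0 : ℝ), ENNReal.ofReal (Real.exp (-(c p) * s)) ∂ν) ≠ ⊤ := by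
    intro ν ν' h
    refine ne_top_of_le_ne_top h (ENNReal.tsum_le_tsum fun p => ?_)
    exact lintegral_mono' (Measure.restrict_mono subset_rfl (Measure.le_add_right le_rfl)) le_rfl
  have hfinp : (∑' p : {p : ℤ × ℤ // p ≠ 0},
      ∫⁻ s in Set.Ioi (0 : ℝ), ENNReal.ofReal (Real.exp (-(c p) * s)) ∂μp) ≠ ⊤ :=
    hμle μp μn hsum
  have hfinn : (∑' p : {p : ℤ × ℤ // p ≠ 0},
      ∫⁻ s in Set.Ioi (0 : ℝ), ENNReal.ofReal (Real.exp (-(c p) * s)) ∂μn) ≠ ⊤ := by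
    refine hμle μn μp ?_
    rw [add_comm] at hsum; exact hsum
  -- a and b
  set a : {p : ℤ × ℤ // p ≠ 0} → ℝ :=
    fun p => ∫ s in Set.Ioi (0 : ℝ), Real.exp (-(c p) * s) ∂μp with ha_def
  set b : {p : ℤ × ℤ // p ≠ 0} → ℝ :=
    fun p => ∫ s in Set.Ioi (0 : ℝ), Real.exp (-(c p) * s) ∂μn with hb_def
  -- summability of a and b
  have hsummable : ∀ (ν : Measure ℝ), (∑' p : {p : ℤ × ℤ // p ≠ 0},
        ∫⁻ s in Set.Ioi (0 : ℝ), ENNReal.ofReal (Real.exp (-(c p) * s)) ∂ν) ≠ ⊤ →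
      Summable (fun p : {p : ℤ × ℤ // p ≠ 0} =>
        ∫ s in Set.Ioi (0 : ℝ), Real.exp (-(c p) * s) ∂ν) := by
    intro ν hν
    have heq : ∀ p : {p : ℤ × ℤ // p ≠ 0},
        (∫ s in Set.Ioi (0 : ℝ), Real.exp (-(c p) * s) ∂ν)
          = (∫⁻ s in Set.Ioi (0 : ℝ), ENNReal.ofReal (Real.exp (-(c p) * s)) ∂ν).toReal :=
      fun p => integral_eq_lintegral_of_nonneg_ae
        (ae_of_all _ fun s => (Real.exp_pos _).le) (exp_meas _ _)
    refine (ENNReal.summable_toReal hν).congr fun p => (heq p).symm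
  have ha : Summable a := hsummable μp hfinp
  have hb : Summable b := hsummable μn hfinn
  -- the value of f at the lattice distances
  have hr : ∀ p : {p : ℤ × ℤ // p ≠ 0}, f (Real.sqrt (c p)) = a p - b p := by
    intro p
    have hcp := hc p
    have hs := Real.sqrt_pos.2 hcp
    have hsq : Real.sqrt (c p) ^ 2 = c p := Real.sq_sqrt hcp.le
    rw [hf _ hs, hsq]
  -- integral identities
  have hI : ∀ (ν : Measure ℝ), (∑' p : {p : ℤ × ℤ // p ≠ 0},
        ∫⁻ s in Set.Ioi (0 : ℝ), ENNReal.ofReal (Real.exp (-(c p) * s)) ∂ν) ≠ ⊤ →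
      (∫ s in Set.Ioi (0 : ℝ), (Θ (A * s / Δ) * Θ (A * s * Δ) - 1) ∂ν)
        = ∑' p : {p : ℤ × ℤ // p ≠ 0}, ∫ s in Set.Ioi (0 : ℝ), Real.exp (-(c p) * s) ∂ν := by
    intro ν hν
    rw [← interchange hν]
    refine setIntegral_congr_fun measurableSet_Ioi fun s hs => ?_
    exact key_identity hA hΔ hs
  have hIp := hI μp hfinp
  have hIn := hI μn hfinn
  -- conclude
  unfold rectEnergy
  rw [hIp, hIn]
  congr 1
  rw [show (∑' p : {p : ℤ × ℤ // p ≠ 0},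
      f (Real.sqrt (A * ((p.1.1 : ℝ) ^ 2 / Δ + (p.1.2 : ℝ) ^ 2 * Δ))))
    = ∑' p : {p : ℤ × ℤ // p ≠ 0}, (a p - b p) from tsum_congr hr]
  exact Summable.tsum_sub ha hb
end

section
/- (Faulhuber–Steinerberger positivity.) For every t > 0, H(t) := t·Θ(t)·Θ'(t) + t²·Θ(t)·Θ''(t) − t²·(Θ'(t))² > 0. -/
/-- `H(t) := t·Θ(t)·Θ'(t) + t²·Θ(t)·Θ''(t) − t²·(Θ'(t))²`. -/
noncomputable def Hfun (t : ℝ) : ℝ :=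
  t * Θ t * deriv Θ t + t ^ 2 * Θ t * iteratedDeriv 2 Θ t - t ^ 2 * (deriv Θ t) ^ 2

open Real Filter

/-- The basic sums `∑ n^k e^{-t n²}` over `ℤ`. -/
noncomputable def FS.c (k : ℕ) (t : ℝ) : ℝ := ∑' n : ℤ, (n : ℝ) ^ k * Real.exp (-t * (n : ℝ) ^ 2)

namespace FS

lemma summable_nat (k : ℕ) {t : ℝ} (ht : 0 < t) :
    Summable (fun n : ℕ => (n : ℝ) ^ k * Real.exp (-t * (n : ℝ) ^ 2)) := by
  have hr : ‖Real.exp (-t)‖ < 1 := by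
    rw [Real.norm_eq_abs, abs_of_pos (Real.exp_pos _)]
    exact Real.exp_lt_one_iff.mpr (by linarith)
  refine Summable.of_nonneg_of_le (fun n => by positivity) (fun n => ?_)
    (summable_pow_mul_geometric_of_norm_lt_one k hr)
  have h1 : Real.exp (-t * (n : ℝ) ^ 2) ≤ Real.exp (-t) ^ n := by
    rw [← Real.exp_nat_mul]
    apply Real.exp_le_exp.mpr
    have : (n : ℝ) ≤ (n : ℝ) ^ 2 := by
      rcases Nat.eq_zero_or_pos n with h | h
      · simp [h]
      · have h1 : (1:ℝ) ≤ (n:ℝ) := by exact_mod_cast h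
        nlinarith
    nlinarith
  have : (0:ℝ) ≤ (n:ℝ)^k := by positivity
  nlinarith [Real.exp_pos (-t * (n:ℝ)^2)]

lemma summable_int (k : ℕ) {t : ℝ} (ht : 0 < t) :
    Summable (fun n : ℤ => (n : ℝ) ^ k * Real.exp (-t * (n : ℝ) ^ 2)) := by
  apply Summable.of_nat_of_neg
  · exact (summable_nat k ht).congr (by intro n; push_cast; ring)
  · exact (((summable_nat k ht).mul_left ((-1:ℝ)^k)).congr (by intro n; push_cast; ring))

lemma hasDerivAt_c (k : ℕ) {t : ℝ} (ht : 0 < t) :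
    HasDerivAt (c k) (-(c (k + 2) t)) t := by
  have key : HasDerivAt (fun x => ∑' n : ℤ, (n : ℝ) ^ k * Real.exp (-x * (n : ℝ) ^ 2))
      (∑' n : ℤ, -((n : ℝ) ^ (k+2) * Real.exp (-t * (n : ℝ) ^ 2))) t := by
    refine hasDerivAt_tsum_of_isPreconnected
      (u := fun n : ℤ => |(n : ℝ) ^ (k+2) * Real.exp (-(t/2) * (n : ℝ) ^ 2)|)
      (g := fun (n : ℤ) (x : ℝ) => (n : ℝ) ^ k * Real.exp (-x * (n : ℝ) ^ 2))
      (g' := fun (n : ℤ) (x : ℝ) => -((n : ℝ) ^ (k+2) * Real.exp (-x * (n : ℝ) ^ 2)))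
      ((summable_int (k+2) (by positivity)).abs) (isOpen_Ioi (a := t/2)) isPreconnected_Ioi
      (fun n y hy => ?_) (fun n y hy => ?_) (Set.mem_Ioi.mpr (by linarith)) (summable_int k ht)
      (Set.mem_Ioi.mpr (by linarith))
    · have h1 : HasDerivAt (fun x : ℝ => -x * (n:ℝ)^2) (-(n:ℝ)^2) y := by
        simpa using ((hasDerivAt_id y).neg.mul_const ((n:ℝ)^2))
      have h2 := (h1.exp).const_mul ((n:ℝ)^k)
      exact h2.congr_deriv (by ring)
    · simp only [Real.norm_eq_abs, abs_neg, abs_mul,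
        abs_of_pos (Real.exp_pos _)]
      have : Real.exp (-y * (n:ℝ)^2) ≤ Real.exp (-(t/2) * (n:ℝ)^2) := by
        apply Real.exp_le_exp.mpr
        have hy' : t/2 ≤ y := le_of_lt (Set.mem_Ioi.mp hy)
        nlinarith [sq_nonneg ((n:ℝ))]
      have h3 : (0:ℝ) ≤ |(n:ℝ)^(k+2)| := abs_nonneg _
      nlinarith [Real.exp_pos (-y * (n:ℝ)^2)]
  have heq : (∑' n : ℤ, -((n : ℝ) ^ (k+2) * Real.exp (-t * (n : ℝ) ^ 2))) = -(c (k+2) t) := by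
    rw [tsum_neg]; rfl
  rw [heq] at key
  exact key

lemma theta_eq : Θ = c 0 := by
  funext t
  unfold Θ theta3 c
  apply tsum_congr
  intro j
  rw [← Real.exp_nat_mul, pow_zero, one_mul]
  congr 1
  push_cast [Nat.cast_natAbs]
  rw [sq_abs]; ring

lemma c0_ge_one {t : ℝ} (ht : 0 < t) : 1 ≤ c 0 t := by
  have := Summable.le_tsum (summable_int 0 ht) 0 (fun i _ => by positivity)
  simpa [c] using this

lemma c0_pos {t : ℝ} (ht : 0 < t) : 0 < c 0 t := lt_of_lt_of_le one_pos (c0_ge_one ht)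

/-- even part symmetry + splitting: `c k t = 0^k + 2 ∑_{n≥1} n^k e^{-tn²}` for even `k`. -/
lemma c_eq_split (k : ℕ) (hk : Even k) {t : ℝ} (ht : 0 < t) :
    c k t = (0 : ℝ) ^ k + 2 * ∑' n : ℕ, ((n : ℝ) + 1) ^ k * Real.exp (-t * ((n : ℝ) + 1) ^ 2) := by
  unfold c
  set f : ℤ → ℝ := fun n => (n : ℝ) ^ k * Real.exp (-t * (n : ℝ) ^ 2) with hf
  have h1 : Summable (fun n : ℕ => f n) :=
    (summable_nat k ht).congr (by intro n; simp only [hf]; push_cast; ring)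
  have hneg : ∀ n : ℕ, f (-n) = f n := by
    intro n
    simp only [hf]
    have hc : (((-(n:ℤ)) : ℤ) : ℝ) = -((n:ℤ):ℝ) := by push_cast; ring
    rw [hc, hk.neg_pow, neg_sq]
  have h2 : Summable (fun n : ℕ => f (-n)) := h1.congr (fun n => (hneg n).symm)
  rw [h1.tsum_of_nat_of_neg h2, tsum_congr hneg, h1.tsum_eq_zero_add]
  have hfs : ∀ n : ℕ, f ((n:ℕ)+1 : ℕ) = ((n:ℝ)+1) ^ k * Real.exp (-t * ((n:ℝ)+1) ^ 2) := by
    intro n; simp only [hf]; push_cast; ring_nf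
  rw [tsum_congr hfs]
  have h0 : f ((0:ℕ):ℤ) = (0:ℝ)^k := by simp [hf]
  have h0' : f (0:ℤ) = (0:ℝ)^k := by simp [hf]
  rw [h0, h0']
  ring

lemma exp_neg_le {t : ℝ} (ht : 3 ≤ t) : Real.exp (-t) ≤ 1/20 := by
  have h3 : (20:ℝ) < Real.exp 3 := by
    have he : Real.exp 3 = (Real.exp 1)^3 := by
      rw [← Real.exp_nat_mul]; norm_num
    have h1 := Real.exp_one_gt_d9
    have h2 : (2.7182818283:ℝ)^3 < (Real.exp 1)^3 := by
      apply pow_lt_pow_left₀ h1 (by norm_num) (by norm_num)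
    rw [he]
    nlinarith
  have h4 : Real.exp (-t) ≤ Real.exp (-3) := Real.exp_le_exp.mpr (by linarith)
  have h5 : Real.exp (-3) = (Real.exp 3)⁻¹ := Real.exp_neg 3
  have h6 : (Real.exp 3)⁻¹ ≤ (20:ℝ)⁻¹ := by
    apply inv_anti₀ (by norm_num) h3.le
  rw [h5] at h4
  have : ((20:ℝ))⁻¹ = 1/20 := by norm_num
  linarith

lemma t_exp_neg_le {t : ℝ} (ht : 3 ≤ t) : t * Real.exp (-t) ≤ 4/7 := by
  have h := Real.add_one_le_exp (t/2)
  have hsq : (t/2+1)^2 ≤ Real.exp t := by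
    have h2 : Real.exp (t/2) ^ 2 = Real.exp t := by
      rw [sq, ← Real.exp_add]
      congr 1; ring
    nlinarith [Real.exp_pos (t/2)]
  have hexp : (0:ℝ) < Real.exp t := Real.exp_pos _
  rw [Real.exp_neg]
  rw [show t * (Real.exp t)⁻¹ = t / Real.exp t by ring, div_le_iff₀ hexp]
  nlinarith [sq_nonneg (t-3)]

-- summability of the shifted series
lemma summable_shift (k : ℕ) {t : ℝ} (ht : 0 < t) :
    Summable (fun n : ℕ => ((n : ℝ) + 1) ^ k * Real.exp (-t * ((n : ℝ) + 1) ^ 2)) := by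
  have := (summable_nat_add_iff 1).mpr (summable_nat k ht)
  exact this.congr (by intro n; push_cast; ring_nf)

-- the tail estimate
lemma tail_le (k : ℕ) (hk : k ≤ 2) {t : ℝ} (ht : 3 ≤ t) :
    ∑' n : ℕ, ((n : ℝ) + 1) ^ k * Real.exp (-t * ((n : ℝ) + 1) ^ 2)
      ≤ (21/20) * Real.exp (-t) := by
  have ht0 : (0:ℝ) < t := by linarith
  have hq : (0:ℝ) ≤ 4 * Real.exp (-2*t) := by positivity
  have hq1 : 4 * Real.exp (-2*t) < 1/100 := by
    have : Real.exp (-2*t) ≤ Real.exp (-6) := Real.exp_le_exp.mpr (by linarith)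
    have h6 : Real.exp (-6) < 1/400 := by
      rw [Real.exp_neg]
      rw [inv_lt_comm₀ (Real.exp_pos _) (by norm_num)]
      have he : Real.exp 6 = (Real.exp 1)^6 := by rw [← Real.exp_nat_mul]; norm_num
      have h2 : (2.7182818283:ℝ)^6 < (Real.exp 1)^6 :=
        pow_lt_pow_left₀ Real.exp_one_gt_d9 (by norm_num) (by norm_num)
      rw [he]
      nlinarith
    linarith
  have hterm : ∀ n : ℕ, ((n : ℝ) + 1) ^ k * Real.exp (-t * ((n : ℝ) + 1) ^ 2)
      ≤ Real.exp (-t) * (4 * Real.exp (-2*t)) ^ n := by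
    intro n
    have h4 : ∀ m : ℕ, ((m:ℝ) + 1) ^ 2 ≤ 4 ^ m := by
      intro m
      induction m with
      | zero => norm_num
      | succ m ih =>
        have hstep : ((m:ℝ) + 1 + 1) ^ 2 ≤ 4 * ((m:ℝ) + 1)^2 := by
          nlinarith [Nat.cast_nonneg (α := ℝ) m]
        have h4p : (4:ℝ)^(m+1) = 4 * 4^m := by ring
        push_cast
        nlinarith
    have hpow : ((n:ℝ) + 1) ^ k ≤ 4 ^ n := by
      have h2 : ((n:ℝ) + 1) ^ k ≤ ((n:ℝ) + 1) ^ 2 := by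
        apply pow_le_pow_right₀ (by nlinarith [Nat.cast_nonneg (α := ℝ) n]) hk
      linarith [h4 n]
    have hexp : Real.exp (-t * ((n:ℝ)+1)^2) ≤ Real.exp (-t) * Real.exp (-2*t) ^ n := by
      rw [← Real.exp_nat_mul, ← Real.exp_add]
      apply Real.exp_le_exp.mpr
      have hn : (0:ℝ) ≤ (n:ℝ) := Nat.cast_nonneg n
      nlinarith [mul_nonneg (le_of_lt ht0) (sq_nonneg ((n:ℝ)))]
    calc ((n : ℝ) + 1) ^ k * Real.exp (-t * ((n : ℝ) + 1) ^ 2)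
        ≤ 4 ^ n * (Real.exp (-t) * Real.exp (-2*t) ^ n) := by
          apply mul_le_mul hpow hexp (by positivity) (by positivity)
      _ = Real.exp (-t) * (4 * Real.exp (-2*t)) ^ n := by rw [mul_pow]; ring
  have hgs : Summable (fun n : ℕ => Real.exp (-t) * (4 * Real.exp (-2*t)) ^ n) :=
    (summable_geometric_of_lt_one hq (by linarith)).mul_left _
  have := Summable.tsum_le_tsum hterm (summable_shift k ht0) hgs
  rw [tsum_mul_left, tsum_geometric_of_lt_one hq (by linarith)] at this
  have hb : (1 - 4*Real.exp (-2*t))⁻¹ ≤ 21/20 := by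
    rw [inv_le_comm₀ (by linarith) (by norm_num)]
    linarith
  calc ∑' n : ℕ, ((n : ℝ) + 1) ^ k * Real.exp (-t * ((n : ℝ) + 1) ^ 2)
      ≤ Real.exp (-t) * (1 - 4*Real.exp (-2*t))⁻¹ := this
    _ ≤ Real.exp (-t) * (21/20) := by
        apply mul_le_mul_of_nonneg_left hb (by positivity)
    _ = (21/20) * Real.exp (-t) := by ring

/-- the functional equation. -/
lemma fe {t : ℝ} (ht : 0 < t) :
    c 0 t = Real.sqrt π / Real.sqrt t * c 0 (π ^ 2 / t) := by
  have hπ : (0:ℝ) < π := Real.pi_pos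
  have ha : 0 < t / π := by positivity
  have key := Real.tsum_exp_neg_mul_int_sq ha
  have h1 : ∀ n : ℤ, Real.exp (-π * (t/π) * (n:ℝ)^2) = (n:ℝ)^0 * Real.exp (-t * (n:ℝ)^2) := by
    intro n
    rw [pow_zero, one_mul]
    field_simp
  have h2 : ∀ n : ℤ, Real.exp (-π / (t/π) * (n:ℝ)^2) = (n:ℝ)^0 * Real.exp (-(π^2/t) * (n:ℝ)^2) := by
    intro n
    rw [pow_zero, one_mul]
    rw [div_div_eq_mul_div, div_mul_eq_mul_div, mul_comm]
    ring_nf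
  rw [tsum_congr h1, tsum_congr h2] at key
  have h3 : (1:ℝ) / (t/π) ^ ((1:ℝ)/2) = Real.sqrt π / Real.sqrt t := by
    rw [← Real.sqrt_eq_rpow, Real.sqrt_div ht.le, one_div_div]
  rw [c, c, key, h3]

noncomputable def N (t : ℝ) : ℝ := t * (c 0 t * c 4 t - c 2 t ^ 2) - c 0 t * c 2 t

lemma hasDerivAt_P {t : ℝ} (ht : 0 < t) :
    HasDerivAt (fun s => s * c 2 s / c 0 s) (-(N t) / (c 0 t) ^ 2) t := by
  have h := ((hasDerivAt_id t).mul (hasDerivAt_c 2 ht)).div (hasDerivAt_c 0 ht) (c0_pos ht).ne'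
  simp only [id_eq] at h
  norm_num at h
  exact h.congr_deriv (by rw [N]; ring)


/-- `P t + P (π²/t) = 1/2`. -/
lemma P_fe {t : ℝ} (ht : 0 < t) :
    t * c 2 t / c 0 t = 1 / 2 - (π ^ 2 / t) * c 2 (π ^ 2 / t) / c 0 (π ^ 2 / t) := by
  have hπ : (0:ℝ) < π := Real.pi_pos
  set u := π ^ 2 / t with hu_def
  have hu : 0 < u := by positivity
  have hst : 0 < Real.sqrt t := Real.sqrt_pos.mpr ht
  have hsπ : 0 < Real.sqrt π := Real.sqrt_pos.mpr hπ
  have hstsq : Real.sqrt t ^ 2 = t := Real.sq_sqrt ht.le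
  -- derivative of the RHS of the functional equation
  have hinv : HasDerivAt (fun s : ℝ => Real.sqrt π * (Real.sqrt s)⁻¹)
      (Real.sqrt π * (-(1/(2*Real.sqrt t))/(Real.sqrt t)^2)) t :=
    ((Real.hasDerivAt_sqrt ht.ne').inv hst.ne').const_mul _
  have hinner : HasDerivAt (fun s : ℝ => π ^ 2 / s) (-(π^2)/t^2) t := by
    have := (hasDerivAt_inv ht.ne').const_mul (π^2)
    rw [show (fun s : ℝ => π^2/s) = fun s => π^2 * s⁻¹ by funext s; ring]
    exact this.congr_deriv (by ring)
  have hcomp : HasDerivAt (fun s : ℝ => c 0 (π ^ 2 / s)) (-(c 2 u) * (-(π^2)/t^2)) t :=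
    by exact (hasDerivAt_c 0 hu).comp t hinner
  have hG : HasDerivAt (fun s : ℝ => Real.sqrt π / Real.sqrt s * c 0 (π ^ 2 / s))
      (-(Real.sqrt π * c 0 u) / (2 * Real.sqrt t * t)
        + Real.sqrt π * π ^ 2 * c 2 u / (Real.sqrt t * t ^ 2)) t := by
    have hmul := hinv.mul hcomp
    simp only [div_eq_mul_inv]
    exact hmul.congr_deriv (by rw [← hu_def]; field_simp; rw [hstsq]; ring)
  have hev : (fun s : ℝ => Real.sqrt π / Real.sqrt s * c 0 (π ^ 2 / s)) =ᶠ[nhds t] c 0 := by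
    filter_upwards [isOpen_Ioi.mem_nhds ht] with s hs
    exact (fe hs).symm
  have key1 : -(c 2 t)
      = -(Real.sqrt π * c 0 u) / (2 * Real.sqrt t * t)
        + Real.sqrt π * π ^ 2 * c 2 u / (Real.sqrt t * t ^ 2) :=
    (hasDerivAt_c 0 ht).unique (hG.congr_of_eventuallyEq hev.symm)
  have hc0u : 0 < c 0 u := c0_pos hu
  have hfe := fe ht
  rw [hfe]
  have hc2t : c 2 t = Real.sqrt π * c 0 u / (2 * Real.sqrt t * t)
      - Real.sqrt π * π ^ 2 * c 2 u / (Real.sqrt t * t ^ 2) := by linear_combination -key1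
  rw [hc2t]
  field_simp
  rw [← hu_def, div_eq_iff hc0u.ne']
  linear_combination (2 * c 0 u * c 2 u * π^2) * (mul_inv_cancel₀ ht.ne')


lemma N_rel {t : ℝ} (ht : 0 < t) :
    N t / (c 0 t) ^ 2 = π ^ 2 / t ^ 2 * (N (π ^ 2 / t) / (c 0 (π ^ 2 / t)) ^ 2) := by
  have hπ : (0:ℝ) < π := Real.pi_pos
  set u := π ^ 2 / t with hu_def
  have hu : 0 < u := by positivity
  have hinner : HasDerivAt (fun s : ℝ => π ^ 2 / s) (-(π^2)/t^2) t := by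
    have := (hasDerivAt_inv ht.ne').const_mul (π^2)
    rw [show (fun s : ℝ => π^2/s) = fun s => π^2 * s⁻¹ by funext s; ring]
    exact this.congr_deriv (by ring)
  have hcomp : HasDerivAt (fun s : ℝ => (π^2/s) * c 2 (π^2/s) / c 0 (π^2/s))
      ((-(N u) / (c 0 u)^2) * (-(π^2)/t^2)) t := by exact (hasDerivAt_P hu).comp t hinner
  have hRHS : HasDerivAt (fun s : ℝ => 1/2 - (π^2/s) * c 2 (π^2/s) / c 0 (π^2/s))
      (-((-(N u) / (c 0 u)^2) * (-(π^2)/t^2))) t := hcomp.const_sub _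
  have hev : (fun s : ℝ => s * c 2 s / c 0 s)
      =ᶠ[nhds t] (fun s : ℝ => 1/2 - (π^2/s) * c 2 (π^2/s) / c 0 (π^2/s)) := by
    filter_upwards [isOpen_Ioi.mem_nhds ht] with s hs
    exact P_fe hs
  have := (hasDerivAt_P ht).unique (hRHS.congr_of_eventuallyEq hev)
  linear_combination -this

lemma N_pos_of_ge_three {t : ℝ} (ht : 3 ≤ t) : 0 < N t := by
  have ht0 : (0:ℝ) < t := by linarith
  set r := Real.exp (-t) with hr_def
  have hrpos : 0 < r := Real.exp_pos _
  have hr20 : r ≤ 1/20 := exp_neg_le ht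
  have htr : t * r ≤ 4/7 := t_exp_neg_le ht
  -- bounds on c 0 and c 2
  have h0split := c_eq_split 0 (Even.zero) ht0
  have h2split := c_eq_split 2 (by norm_num) ht0
  have h0u : c 0 t ≤ 1 + (21/10) * r := by
    have := tail_le 0 (by norm_num) ht
    rw [h0split]; norm_num at this ⊢; linarith
  have h2u : c 2 t ≤ (21/10) * r := by
    have := tail_le 2 (by norm_num) ht
    rw [h2split]; norm_num at this ⊢; linarith
  have h0l : 1 ≤ c 0 t := c0_ge_one ht0
  -- lower bounds for c 2 and c 4 : sum of the two terms n = 1, -1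
  have hlow : ∀ k : ℕ, Even k → 2 * r ≤ c k t := by
    intro k hk
    have hsum := summable_int k ht0
    have hfin : ∑ n ∈ ({1, -1} : Finset ℤ), (n : ℝ) ^ k * Real.exp (-t * (n : ℝ) ^ 2)
        = 2 * r := by
      rw [Finset.sum_insert (by norm_num), Finset.sum_singleton]
      push_cast
      rw [hk.neg_one_pow]
      norm_num
      ring
    have := Summable.sum_le_tsum ({1, -1} : Finset ℤ) (fun i _ => mul_nonneg (hk.pow_nonneg _) (Real.exp_pos _).le) hsum
    rw [hfin] at this
    exact this
  have h2l : 2 * r ≤ c 2 t := hlow 2 (by norm_num)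
  have h4l : 2 * r ≤ c 4 t := hlow 4 (by decide)
  -- assemble
  rw [N]
  have e1 : 1 * (2*r) ≤ c 0 t * c 4 t :=
    mul_le_mul h0l h4l (by positivity) (by linarith)
  have e2 : c 2 t * c 2 t ≤ (21/10*r) * (21/10*r) :=
    mul_le_mul h2u h2u (by linarith) (by linarith)
  have e3 : c 0 t * c 2 t ≤ (1 + 21/10*r) * (21/10*r) :=
    mul_le_mul h0u h2u (by linarith) (by linarith)
  have e4 : 2*r - (21/10*r)^2 ≤ c 0 t * c 4 t - c 2 t ^ 2 := by nlinarith [e1, e2]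
  have e5 : t * (2*r - (21/10*r)^2) ≤ t * (c 0 t * c 4 t - c 2 t ^ 2) :=
    mul_le_mul_of_nonneg_left e4 ht0.le
  have e6 : (t*r)*r ≤ (4/7)*r := mul_le_mul_of_nonneg_right htr hrpos.le
  have e7 : 3*r ≤ t*r := mul_le_mul_of_nonneg_right ht hrpos.le
  nlinarith [e3, e5, e6, e7, hrpos, hr20, mul_le_mul_of_nonneg_right hr20 hrpos.le]

lemma N_pos {t : ℝ} (ht : 0 < t) : 0 < N t := by
  rcases le_or_gt 3 t with h | h
  · exact N_pos_of_ge_three h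
  · have hπ : (3:ℝ) < π := Real.pi_gt_three
    have hu3 : 3 ≤ π^2/t := by
      rw [le_div_iff₀ ht]
      nlinarith
    have hu : 0 < π^2/t := by positivity
    have hNu := N_pos_of_ge_three hu3
    have hrel := N_rel ht
    have hpos : 0 < N t / (c 0 t)^2 := by
      rw [hrel]
      have := c0_pos hu
      positivity
    have hc0 : 0 < (c 0 t)^2 := by have := c0_pos ht; positivity
    have := mul_pos hpos hc0
    rwa [div_mul_cancel₀ _ (ne_of_gt hc0)] at this

end FS

/-- Faulhuber–Steinerberger positivity: `H(t) > 0` for every `t > 0`. -/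
theorem faulhuber_steinerberger_positivity (t : ℝ) (ht : 0 < t) : 0 < Hfun t := by
  have hd : deriv Θ t = -(FS.c 2 t) := by
    rw [FS.theta_eq]; exact (FS.hasDerivAt_c 0 ht).deriv
  have hd2 : iteratedDeriv 2 Θ t = FS.c 4 t := by
    rw [iteratedDeriv_succ, iteratedDeriv_one]
    have hev : deriv Θ =ᶠ[nhds t] (fun s => -(FS.c 2 s)) := by
      filter_upwards [isOpen_Ioi.mem_nhds ht] with s hs
      rw [FS.theta_eq]; exact (FS.hasDerivAt_c 0 hs).deriv
    rw [hev.deriv_eq]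
    simpa using ((FS.hasDerivAt_c 2 ht).neg).deriv
  have hth : Θ t = FS.c 0 t := by rw [FS.theta_eq]
  have hN := FS.N_pos ht
  have : Hfun t = t * FS.N t := by
    rw [Hfun, hd, hd2, hth, FS.N]; ring
  rw [this]
  positivity
end

section
/- (No transition point for completely monotone potentials.) Let μ be a nonnegative, nonzero Borel measure on (0,∞) such that for every A > 0 the function s ↦ H(As) is μ-integrable, and define E₂(A) := (1/2) ∫₀^∞ H(As) dμ(s). Then E₂(A) > 0 for every A > 0; in particular E₂ has no zero and no sign change. -/
open MeasureTheory

section ThetaAux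

open Real

noncomputable def Fth (k : ℕ) (t : ℝ) : ℝ := ∑' j : ℤ, (j:ℝ)^(2*k) * Real.exp (-(j:ℝ)^2 * t)

lemma summable_nat_theta (k : ℕ) {t : ℝ} (ht : 0 < t) :
    Summable (fun n : ℕ => (n:ℝ)^k * Real.exp (-(n:ℝ)^2 * t)) := by
  have hr : ‖Real.exp (-t)‖ < 1 := by
    rw [Real.norm_eq_abs, abs_of_pos (Real.exp_pos _)]
    exact Real.exp_lt_one_iff.mpr (by linarith)
  refine Summable.of_nonneg_of_le (fun n => ?_) (fun n => ?_)
    (summable_pow_mul_geometric_of_norm_lt_one k hr)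
  · positivity
  · have h1 : Real.exp (-(n:ℝ)^2 * t) ≤ Real.exp (-t) ^ n := by
      rw [← Real.exp_nat_mul]
      apply Real.exp_le_exp.mpr
      have : (n:ℝ) ≤ (n:ℝ)^2 := by
        exact_mod_cast Nat.cast_le.mpr (Nat.le_self_pow two_ne_zero n)
      nlinarith
    have h2 : (0:ℝ) ≤ (n:ℝ)^k := by positivity
    nlinarith [Real.exp_pos (-(n:ℝ)^2 * t)]

lemma summable_int_theta (k : ℕ) {t : ℝ} (ht : 0 < t) :
    Summable (fun j : ℤ => (j:ℝ)^(2*k) * Real.exp (-(j:ℝ)^2 * t)) := by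
  apply Summable.of_nat_of_neg_add_one
  · apply ((summable_nat_theta (2*k) ht).congr (fun n => ?_))
    push_cast; ring_nf
  · have hs := (summable_nat_theta (2*k) ht).comp_injective (add_left_injective 1)
    apply hs.congr (fun n => ?_)
    simp only [Function.comp_apply]
    push_cast
    rw [show (-((n:ℝ)+1))^(2*k) = ((n:ℝ)+1)^(2*k) from (Even.neg_pow (even_two_mul k) _),
      neg_sq]

lemma hasDerivAt_Fth (k : ℕ) {t : ℝ} (ht : 0 < t) :
    HasDerivAt (Fth k) (-(Fth (k+1) t)) t := by
  have h2 : (0:ℝ) < t/2 := by linarith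
  have hu : Summable (fun j : ℤ => (j:ℝ)^(2*(k+1)) * Real.exp (-(j:ℝ)^2 * (t/2))) :=
    summable_int_theta (k+1) h2
  have key := hasDerivAt_tsum_of_isPreconnected hu isOpen_Ioi (isPreconnected_Ioi)
    (g := fun (j : ℤ) (y : ℝ) => (j:ℝ)^(2*k) * Real.exp (-(j:ℝ)^2 * y))
    (g' := fun (j : ℤ) (y : ℝ) => -((j:ℝ)^(2*(k+1)) * Real.exp (-(j:ℝ)^2 * y)))
    (fun j y _ => ?_) (fun j y hy => ?_) (Set.mem_Ioi.mpr (by linarith : t/2 < t))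
    ((summable_int_theta k ht)) (Set.mem_Ioi.mpr (by linarith : t/2 < t))
  · have : (∑' j : ℤ, -((j:ℝ)^(2*(k+1)) * Real.exp (-(j:ℝ)^2 * t))) = -(Fth (k+1) t) := by
      rw [tsum_neg]; rfl
    rw [this] at key
    exact key
  · have h1 : HasDerivAt (fun y : ℝ => -(j:ℝ)^2 * y) (-(j:ℝ)^2) y := by
      simpa using (hasDerivAt_id y).const_mul (-(j:ℝ)^2)
    have := (h1.exp).const_mul ((j:ℝ)^(2*k))
    refine this.congr_deriv ?_
    beta_reduce
    ring
  · have h0 : (0:ℝ) ≤ (j:ℝ)^(2*(k+1)) := by rw [pow_mul]; positivity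
    rw [Real.norm_eq_abs, abs_neg, abs_of_nonneg (mul_nonneg h0 (Real.exp_pos _).le)]
    have : Real.exp (-(j:ℝ)^2 * y) ≤ Real.exp (-(j:ℝ)^2 * (t/2)) := by
      apply Real.exp_le_exp.mpr
      have : t/2 ≤ y := le_of_lt hy
      nlinarith [sq_nonneg ((j:ℝ))]
    nlinarith

lemma Θ_eq_Fth (t : ℝ) : Θ t = Fth 0 t := by
  unfold Θ theta3 Fth
  apply tsum_congr
  intro j
  rw [← Real.exp_nat_mul]
  push_cast [Nat.cast_natAbs]
  rw [sq_abs]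
  ring_nf

lemma hasDerivAt_Θ {t : ℝ} (ht : 0 < t) : HasDerivAt Θ (-(Fth 1 t)) t := by
  have h := hasDerivAt_Fth 0 ht
  apply h.congr_of_eventuallyEq
  filter_upwards [isOpen_Ioi.eventually_mem (Set.mem_Ioi.mpr ht)]
    with y hy
  exact Θ_eq_Fth y

lemma deriv_Θ {t : ℝ} (ht : 0 < t) : deriv Θ t = -(Fth 1 t) := (hasDerivAt_Θ ht).deriv

lemma iteratedDeriv_two_Θ {t : ℝ} (ht : 0 < t) : iteratedDeriv 2 Θ t = Fth 2 t := by
  rw [iteratedDeriv_succ, iteratedDeriv_one]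
  have hev : deriv Θ =ᶠ[nhds t] (fun y => -(Fth 1 y)) := by
    filter_upwards [isOpen_Ioi.eventually_mem (Set.mem_Ioi.mpr ht)]
      with y hy
    exact deriv_Θ (Set.mem_Ioi.mp hy)
  rw [hev.deriv_eq]
  have : HasDerivAt (fun y => -(Fth 1 y)) (Fth 2 t) t := by
    have h := (hasDerivAt_Fth 1 ht).neg
    rw [neg_neg] at h
    exact h
  exact this.deriv

lemma Fth_nonneg (k : ℕ) (t : ℝ) : 0 ≤ Fth k t := by
  apply tsum_nonneg
  intro j
  have : (0:ℝ) ≤ (j:ℝ)^(2*k) := by rw [pow_mul]; positivity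
  positivity

lemma Fth_zero_ge_one {t : ℝ} (ht : 0 < t) : 1 ≤ Fth 0 t := by
  have h := Summable.le_tsum (summable_int_theta 0 ht) 0 (fun j _ => by
    have : (0:ℝ) ≤ (j:ℝ)^(2*0) := by rw [pow_mul]; positivity
    positivity)
  unfold Fth
  refine le_trans (le_of_eq ?_) h
  norm_num

lemma Fth_zero_pos {t : ℝ} (ht : 0 < t) : 0 < Fth 0 t := lt_of_lt_of_le one_pos (Fth_zero_ge_one ht)

lemma jacobiTheta_real {t : ℝ} (ht : 0 < t) :
    jacobiTheta (Complex.I * ((t : ℂ) / (Real.pi : ℂ))) = ((Fth 0 t : ℝ) : ℂ) := by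
  unfold jacobiTheta Fth
  rw [Complex.ofReal_tsum]
  apply tsum_congr
  intro n
  have hπ : (Real.pi : ℂ) ≠ 0 := Complex.ofReal_ne_zero.mpr (ne_of_gt Real.pi_pos)
  have harg : (Real.pi : ℂ) * Complex.I * (n:ℂ)^2 * (Complex.I * ((t:ℂ)/(Real.pi:ℂ)))
      = ((-(n:ℝ)^2 * t : ℝ) : ℂ) := by
    have : (Complex.I : ℂ) * Complex.I = -1 := Complex.I_mul_I
    push_cast
    field_simp
    linear_combination ((n:ℂ)^2 * t) * this
  rw [harg, ← Complex.ofReal_exp]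
  push_cast
  norm_num

lemma Fth_FE {t : ℝ} (ht : 0 < t) :
    Fth 0 (Real.pi^2 / t) = Real.sqrt (t / Real.pi) * Fth 0 t := by
  have hπ := Real.pi_pos
  have habs : (0:ℝ) < t / Real.pi := div_pos ht hπ
  have him : (0:ℝ) < (Complex.I * ((t:ℂ) / (Real.pi:ℂ))).im := by
    simp [Complex.div_im, Complex.div_re]
    positivity
  have h1 := jacobiTheta_S_smul ⟨Complex.I * ((t:ℂ) / (Real.pi:ℂ)), him⟩
  rw [UpperHalfPlane.modular_S_smul] at h1
  have ht' : (0:ℝ) < Real.pi^2 / t := by positivity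
  have hcoe : (-(Complex.I * ((t:ℂ) / (Real.pi:ℂ))))⁻¹
      = Complex.I * (((Real.pi^2/t : ℝ):ℂ) / (Real.pi:ℂ)) := by
    have htne : (t:ℂ) ≠ 0 := Complex.ofReal_ne_zero.mpr (ne_of_gt ht)
    have hπne : (Real.pi:ℂ) ≠ 0 := Complex.ofReal_ne_zero.mpr (ne_of_gt hπ)
    rw [inv_eq_iff_eq_inv]
    push_cast
    apply eq_inv_of_mul_eq_one_left
    have hII : (Complex.I : ℂ) * Complex.I = -1 := Complex.I_mul_I
    field_simp
    linear_combination (-1:ℂ) * hII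
  simp only [UpperHalfPlane.coe_mk, UpperHalfPlane.coe_mk_subtype] at h1
  rw [hcoe, jacobiTheta_real ht', jacobiTheta_real ht] at h1
  have hpow : (-Complex.I * (Complex.I * ((t:ℂ)/(Real.pi:ℂ))))^((1:ℂ)/2)
      = ((Real.sqrt (t/Real.pi) : ℝ) : ℂ) := by
    have h3 : (-Complex.I * (Complex.I * ((t:ℂ)/(Real.pi:ℂ)))) = (((t/Real.pi : ℝ)):ℂ) := by
      have hII : (Complex.I : ℂ) * Complex.I = -1 := Complex.I_mul_I
      push_cast
      linear_combination (-(t:ℂ)/(Real.pi:ℂ)) * hII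
    rw [h3, Real.sqrt_eq_rpow, Complex.ofReal_cpow habs.le]
    norm_num
  rw [hpow] at h1
  exact_mod_cast h1

lemma Fth_FE_deriv {t : ℝ} (ht : 0 < t) :
    -(Fth 1 (Real.pi^2/t)) * (Real.pi^2 * -(t^2)⁻¹)
      = 1/(2*Real.sqrt (t/Real.pi)) * (1/Real.pi) * Fth 0 t
        + Real.sqrt (t/Real.pi) * (-(Fth 1 t)) := by
  have hπ := Real.pi_pos
  have habs : (0:ℝ) < t / Real.pi := div_pos ht hπ
  have hs : (0:ℝ) < Real.pi^2 / t := by positivity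
  have hinner : HasDerivAt (fun y : ℝ => Real.pi^2 / y) (Real.pi^2 * -(t^2)⁻¹) t := by
    simpa [div_eq_mul_inv] using (hasDerivAt_inv (ne_of_gt ht)).const_mul (Real.pi^2)
  have hL : HasDerivAt (fun y => Fth 0 (Real.pi^2 / y))
      (-(Fth 1 (Real.pi^2/t)) * (Real.pi^2 * -(t^2)⁻¹)) t :=
    (hasDerivAt_Fth 0 hs).comp t hinner
  have hsq : HasDerivAt (fun y : ℝ => Real.sqrt (y/Real.pi))
      (1/(2*Real.sqrt (t/Real.pi)) * (1/Real.pi)) t := by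
    have h1 : HasDerivAt (fun y : ℝ => y / Real.pi) (1/Real.pi) t := by
      simpa using (hasDerivAt_id t).div_const Real.pi
    exact (Real.hasDerivAt_sqrt (ne_of_gt habs)).comp t h1
  have hR : HasDerivAt (fun y => Real.sqrt (y/Real.pi) * Fth 0 y)
      (1/(2*Real.sqrt (t/Real.pi)) * (1/Real.pi) * Fth 0 t
        + Real.sqrt (t/Real.pi) * (-(Fth 1 t))) t := hsq.mul (hasDerivAt_Fth 0 ht)
  have hev : (fun y => Real.sqrt (y/Real.pi) * Fth 0 y)
      =ᶠ[nhds t] (fun y => Fth 0 (Real.pi^2 / y)) := by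
    filter_upwards [isOpen_Ioi.eventually_mem (Set.mem_Ioi.mpr ht)] with y hy
    exact (Fth_FE (Set.mem_Ioi.mp hy)).symm
  exact (hL.congr_of_eventuallyEq hev).unique hR

noncomputable def Nfun' (t : ℝ) : ℝ :=
  (t * Fth 2 t - Fth 1 t) * Fth 0 t - t * (Fth 1 t)^2

noncomputable def Gfun (t : ℝ) : ℝ := -(t * Fth 1 t) / Fth 0 t

lemma hasDerivAt_Gfun {t : ℝ} (ht : 0 < t) :
    HasDerivAt Gfun (Nfun' t / (Fth 0 t)^2) t := by
  have hnum : HasDerivAt (fun y => -(y * Fth 1 y))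
      (-(1 * Fth 1 t + t * -(Fth 2 t))) t :=
    ((hasDerivAt_id t).mul (hasDerivAt_Fth 1 ht)).neg
  have h := hnum.div (hasDerivAt_Fth 0 ht) (ne_of_gt (Fth_zero_pos ht))
  refine h.congr_deriv ?_
  unfold Nfun'
  field_simp
  ring

lemma G_FE {t : ℝ} (ht : 0 < t) : Gfun t + Gfun (Real.pi^2/t) = -(1/2) := by
  have hπ := Real.pi_pos
  have habs : (0:ℝ) < t / Real.pi := div_pos ht hπ
  set a := Real.sqrt (t/Real.pi) with ha_def
  have ha : 0 < a := Real.sqrt_pos.mpr habs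
  have ha2 : a^2 * Real.pi = t := by
    rw [ha_def, Real.sq_sqrt habs.le]; field_simp
  have hFE := Fth_FE ht
  have hE := Fth_FE_deriv ht
  have hF0 : Fth 0 t ≠ 0 := ne_of_gt (Fth_zero_pos ht)
  unfold Gfun
  rw [hFE]
  rw [← ha_def] at hE hFE ⊢
  field_simp at hE
  have hu2 : Fth 1 (Real.pi^2/t)
      = (Fth 0 t * t^2 - 2*a^2*Real.pi*t^2*Fth 1 t)/(2*a*Real.pi^3) := by
    rw [eq_div_iff (by positivity)]
    linear_combination hE
  rw [hu2]
  field_simp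
  linear_combination (Fth 0 t) * ha2

lemma Nfun'_FE {t : ℝ} (ht : 0 < t) :
    Nfun' t / (Fth 0 t)^2
      = (Real.pi^2/t^2) * (Nfun' (Real.pi^2/t) / (Fth 0 (Real.pi^2/t))^2) := by
  have hπ := Real.pi_pos
  have hs : (0:ℝ) < Real.pi^2 / t := by positivity
  have hinner : HasDerivAt (fun y : ℝ => Real.pi^2 / y) (Real.pi^2 * -(t^2)⁻¹) t := by
    simpa [div_eq_mul_inv] using (hasDerivAt_inv (ne_of_gt ht)).const_mul (Real.pi^2)
  have hR : HasDerivAt (fun y : ℝ => -(1/2) - Gfun (Real.pi^2 / y))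
      (-((Nfun' (Real.pi^2/t) / (Fth 0 (Real.pi^2/t))^2) * (Real.pi^2 * -(t^2)⁻¹))) t :=
    (((hasDerivAt_Gfun hs).comp t hinner).const_sub (-(1/2)))
  have hev : Gfun =ᶠ[nhds t] (fun y : ℝ => -(1/2) - Gfun (Real.pi^2 / y)) := by
    filter_upwards [isOpen_Ioi.eventually_mem (Set.mem_Ioi.mpr ht)] with y hy
    have := G_FE (Set.mem_Ioi.mp hy)
    linarith
  have huniq := (hR.congr_of_eventuallyEq hev).unique (hasDerivAt_Gfun ht)
  rw [← huniq]
  field_simp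

lemma Hfun_eq_Nfun' {t : ℝ} (ht : 0 < t) : Hfun t = t * Nfun' t := by
  unfold Hfun Nfun'
  rw [deriv_Θ ht, iteratedDeriv_two_Θ ht, Θ_eq_Fth]
  ring

noncomputable def Pn (k : ℕ) (t : ℝ) : ℝ :=
  ∑' n : ℕ, ((n:ℝ)+1)^(2*k) * Real.exp (-((n:ℝ)+1)^2 * t)

lemma summable_Pn (k : ℕ) {t : ℝ} (ht : 0 < t) :
    Summable (fun n : ℕ => ((n:ℝ)+1)^(2*k) * Real.exp (-((n:ℝ)+1)^2 * t)) := by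
  have hs := (summable_nat_theta (2*k) ht).comp_injective (add_left_injective 1)
  apply hs.congr (fun n => ?_)
  simp only [Function.comp_apply]
  push_cast
  ring_nf

lemma Fth_eq_Pn (k : ℕ) {t : ℝ} (ht : 0 < t) :
    Fth k t = (if k = 0 then 1 else 0) + 2 * Pn k t := by
  have hnat : Summable (fun n : ℕ => ((n:ℕ):ℝ)^(2*k) * Real.exp (-((n:ℕ):ℝ)^2 * t)) :=
    (summable_nat_theta (2*k) ht).congr (fun n => by push_cast; ring_nf)
  have hneg : Summable (fun n : ℕ => ((-((n:ℕ)+1):ℤ):ℝ)^(2*k)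
      * Real.exp (-((-((n:ℕ)+1):ℤ):ℝ)^2 * t)) := by
    apply (summable_Pn k ht).congr (fun n => ?_)
    push_cast
    rw [show (-((n:ℝ)+1))^(2*k) = ((n:ℝ)+1)^(2*k) from (Even.neg_pow (even_two_mul k) _),
      neg_sq]
  unfold Fth
  rw [tsum_of_nat_of_neg_add_one (by exact_mod_cast hnat) (by exact_mod_cast hneg)]
  have h1 : (∑' n : ℕ, ((n:ℤ):ℝ)^(2*k) * Real.exp (-((n:ℤ):ℝ)^2 * t))
      = (if k = 0 then 1 else 0) + Pn k t := by
    rw [Summable.tsum_eq_zero_add (by exact_mod_cast hnat)]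
    congr 1
    · cases k <;> simp
    · unfold Pn; apply tsum_congr; intro n; push_cast; ring_nf
  have h2 : (∑' n : ℕ, ((-((n:ℕ)+1):ℤ):ℝ)^(2*k) * Real.exp (-((-((n:ℕ)+1):ℤ):ℝ)^2 * t))
      = Pn k t := by
    unfold Pn
    apply tsum_congr
    intro n
    push_cast
    rw [show (-((n:ℝ)+1))^(2*k) = ((n:ℝ)+1)^(2*k) from (Even.neg_pow (even_two_mul k) _),
      neg_sq]
  rw [h1] at *
  rw [h2]
  ring

set_option maxHeartbeats 1000000 in
lemma Nfun'_pos {t : ℝ} (hπt : Real.pi ≤ t) : 0 < Nfun' t := by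
  have hπ3 : (3:ℝ) < Real.pi := Real.pi_gt_three
  have hπ4 : Real.pi ≤ 4 := Real.pi_le_four
  have ht0 : (0:ℝ) < t := by linarith
  set x := Real.exp (-t) with hx_def
  have hx0 : 0 < x := Real.exp_pos _
  have hexp3 : (20:ℝ) ≤ Real.exp 3 := by
    have h3 : Real.exp 3 = (Real.exp 1)^3 := by
      rw [← Real.exp_nat_mul]; norm_num
    have h4 : (2.7182818283:ℝ)^3 ≤ (Real.exp 1)^3 :=
      pow_le_pow_left₀ (by norm_num) Real.exp_one_gt_d9.le 3
    have h5 : (20:ℝ) ≤ (2.7182818283:ℝ)^3 := by norm_num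
    linarith
  have hx20 : x ≤ 1/20 := by
    have h1 : x ≤ Real.exp (-3) := Real.exp_le_exp.mpr (by linarith)
    have h2 : Real.exp (-3) * Real.exp 3 = 1 := by rw [← Real.exp_add]; norm_num
    nlinarith [Real.exp_pos (-3)]
  have hxlt : x < 1 := by linarith
  -- termwise bound
  have hterm : ∀ n : ℕ, ((n:ℝ)+1)^2 * Real.exp (-((n:ℝ)+1)^2 * t) ≤ x^(n+1) := by
    intro n
    set m : ℝ := (n:ℝ)+1 with hm_def
    have hm1 : (1:ℝ) ≤ m := by
      have := Nat.cast_nonneg (α := ℝ) n; linarith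
    have hme : m ≤ Real.exp (m-1) := by
      have := Real.add_one_le_exp (m-1); linarith
    have hm2 : m^2 ≤ Real.exp (2*(m-1)) := by
      rw [show (2*(m-1)) = (m-1)+(m-1) by ring, Real.exp_add]
      nlinarith [Real.exp_pos (m-1)]
    have hxm : x^(n+1) = Real.exp (-(m*t)) := by
      rw [hx_def, ← Real.exp_nat_mul]
      congr 1
      push_cast [hm_def]
      ring
    rw [hxm]
    have hmt : (2:ℝ) ≤ m*t := by nlinarith
    have hle : 2*(m-1) + -(m^2*t) ≤ -(m*t) := by
      nlinarith [mul_nonneg (sub_nonneg.mpr hm1) (sub_nonneg.mpr hmt)]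
    calc m^2 * Real.exp (-m^2*t) ≤ Real.exp (2*(m-1)) * Real.exp (-m^2*t) := by
          nlinarith [Real.exp_pos (-m^2*t)]
      _ = Real.exp (2*(m-1) + -(m^2*t)) := by rw [← Real.exp_add]; ring_nf
      _ ≤ Real.exp (-(m*t)) := Real.exp_le_exp.mpr hle
  have hgeos : Summable (fun n : ℕ => x^(n+1)) := by
    apply Summable.comp_injective (summable_geometric_of_lt_one hx0.le hxlt)
      (add_left_injective 1)
  have hgeo : (∑' n : ℕ, x^(n+1)) = x * (1-x)⁻¹ := by
    have h1 : (∑' n : ℕ, x^(n+1)) = ∑' n : ℕ, x * x^n := by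
      apply tsum_congr; intro n; ring
    rw [h1, tsum_mul_left, tsum_geometric_of_lt_one hx0.le hxlt]
  have hP1le : Pn 1 t ≤ x * (1-x)⁻¹ := by
    rw [← hgeo]
    apply Summable.tsum_le_tsum _ (summable_Pn 1 ht0) hgeos
    intro n
    have := hterm n
    calc ((n:ℝ)+1)^(2*1) * Real.exp (-((n:ℝ)+1)^2 * t)
        = ((n:ℝ)+1)^2 * Real.exp (-((n:ℝ)+1)^2 * t) := by norm_num
      _ ≤ x^(n+1) := hterm n
  have hP0le : Pn 0 t ≤ x * (1-x)⁻¹ := by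
    rw [← hgeo]
    apply Summable.tsum_le_tsum _ (summable_Pn 0 ht0) hgeos
    intro n
    have h1 : ((n:ℝ)+1)^(2*0) * Real.exp (-((n:ℝ)+1)^2 * t)
        ≤ ((n:ℝ)+1)^2 * Real.exp (-((n:ℝ)+1)^2 * t) := by
      apply mul_le_mul_of_nonneg_right _ (Real.exp_pos _).le
      rw [show 2*0 = 0 from rfl, pow_zero]
      nlinarith [Nat.cast_nonneg (α := ℝ) n]
    exact le_trans h1 (hterm n)
  have hP0nn : 0 ≤ Pn 0 t := tsum_nonneg (fun n => by positivity)
  have hP1nn : 0 ≤ Pn 1 t := tsum_nonneg (fun n => by positivity)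
  have hP2ge : x ≤ Pn 2 t := by
    have h := Summable.le_tsum (summable_Pn 2 ht0) 0 (fun n _ => by positivity)
    unfold Pn
    refine le_trans (le_of_eq ?_) h
    norm_num
    exact hx_def
  -- bound on t * x
  have htx : t * x ≤ 1/5 := by
    have hexpπ : (20:ℝ) ≤ Real.exp Real.pi := by
      have := Real.exp_le_exp.mpr (le_of_lt hπ3)
      linarith
    have h20 : 20*(1+(t-Real.pi)) ≤ Real.exp t := by
      have h1 : Real.exp t = Real.exp Real.pi * Real.exp (t-Real.pi) := by
        rw [← Real.exp_add]; ring_nf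
      have h2 : 1+(t-Real.pi) ≤ Real.exp (t-Real.pi) := by
        have := Real.add_one_le_exp (t-Real.pi); linarith
      have h3 : (0:ℝ) ≤ 1+(t-Real.pi) := by linarith
      nlinarith [Real.exp_pos (t-Real.pi)]
    have hxe : x * Real.exp t = 1 := by rw [hx_def, ← Real.exp_add]; norm_num
    have h2 : t ≤ 4*(1+(t-Real.pi)) := by nlinarith
    nlinarith [mul_le_mul_of_nonneg_right h20 hx0.le]
  -- final estimate
  have hB : x * (1-x)⁻¹ ≤ (20/19)*x := by
    rw [mul_inv_le_iff₀ (by linarith)]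
    nlinarith
  have hp0 : Pn 0 t ≤ (20/19)*x := le_trans hP0le hB
  have hp1 : Pn 1 t ≤ (20/19)*x := le_trans hP1le hB
  unfold Nfun'
  rw [Fth_eq_Pn 0 ht0, Fth_eq_Pn 1 ht0, Fth_eq_Pn 2 ht0]
  norm_num only
  simp only [if_true, if_false]
  have e0 : 0 ≤ 2*t*Pn 2 t - 2*Pn 1 t := by nlinarith
  have e3 : (2*t*Pn 2 t - 2*Pn 1 t)*(1+2*Pn 0 t) ≥ 2*t*x - 2*((20/19)*x) := by
    nlinarith [mul_nonneg e0 hP0nn]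
  have e4 : 4*t*(Pn 1 t)^2 ≤ (320/361)*x := by
    have h1 : (Pn 1 t)^2 ≤ ((20/19)*x)^2 := by nlinarith
    have h2 : 4*t*(Pn 1 t)^2 ≤ 4*t*((20/19)*x)^2 := by nlinarith
    calc 4*t*(Pn 1 t)^2 ≤ 4*t*((20/19)*x)^2 := h2
      _ = (1600/361)*(t*x)*x := by ring
      _ ≤ (1600/361)*(1/5)*x := by nlinarith
      _ = (320/361)*x := by ring
  nlinarith

lemma Hfun_pos {t : ℝ} (ht : 0 < t) : 0 < Hfun t := by
  rw [Hfun_eq_Nfun' ht]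
  rcases le_or_gt Real.pi t with h | h
  · exact mul_pos ht (Nfun'_pos h)
  · have hπ := Real.pi_pos
    have hs : Real.pi ≤ Real.pi^2/t := by
      rw [le_div_iff₀ ht]; nlinarith
    have hs0 : (0:ℝ) < Real.pi^2/t := by positivity
    have hNs : 0 < Nfun' (Real.pi^2/t) := Nfun'_pos hs
    have hF0t := Fth_zero_pos ht
    have hF0s := Fth_zero_pos hs0
    have hq : 0 < Nfun' t / (Fth 0 t)^2 := by
      rw [Nfun'_FE ht]; positivity
    have h2 : (0:ℝ) < (Fth 0 t)^2 := by positivity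
    have h3 := mul_pos hq h2
    rw [div_mul_cancel₀ _ (ne_of_gt h2)] at h3
    exact mul_pos ht h3


end ThetaAux

/-- No transition point for completely monotone potentials: if `μ` is a nonnegative,
nonzero Borel measure on `(0,∞)` and `E₂(A) := (1/2)∫₀^∞ H(As) dμ(s)`, then
`E₂(A) > 0` for every `A > 0`; in particular `E₂` has no zero and no sign change. -/
theorem no_transition_point_completely_monotone
    (μ : Measure ℝ) (hμ : μ (Set.Ioi 0) ≠ 0)
    (hint : ∀ A : ℝ, 0 < A → IntegrableOn (fun s => Hfun (A * s)) (Set.Ioi 0) μ)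
    (E₂ : ℝ → ℝ)
    (hE₂ : ∀ A : ℝ, E₂ A = (1 / 2) * ∫ s in Set.Ioi (0 : ℝ), Hfun (A * s) ∂μ) :
    ∀ A : ℝ, 0 < A → 0 < E₂ A := by
  intro A hA
  rw [hE₂ A]
  have hae : 0 ≤ᵐ[μ.restrict (Set.Ioi (0:ℝ))] (fun s => Hfun (A * s)) := by
    filter_upwards [ae_restrict_mem measurableSet_Ioi] with s hs
    exact (Hfun_pos (mul_pos hA (Set.mem_Ioi.mp hs))).le
  have hpos : 0 < ∫ s in Set.Ioi (0:ℝ), Hfun (A * s) ∂μ := by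
    rw [MeasureTheory.setIntegral_pos_iff_support_of_nonneg_ae hae (hint A hA)]
    have hsupp : Function.support (fun s => Hfun (A * s)) ∩ Set.Ioi (0:ℝ)
        = Set.Ioi (0:ℝ) := by
      apply Set.inter_eq_right.mpr
      intro s hs
      exact ne_of_gt (Hfun_pos (mul_pos hA (Set.mem_Ioi.mp hs)))
    rw [hsupp]
    exact lt_of_le_of_ne zero_le (Ne.symm hμ)
  linarith
end

section
/- (Second-order phase transition: pitchfork asymptotics.) Let G : ℝ × ℝ → ℝ be C⁶ on a neighborhood of (A*, 0), with G(A, −ε) = G(A, ε) for all (A, ε) in that neighborhood. Define E₂(A) := (1/2)·∂²G/∂ε²(A,0) and E₄(A) := (1/24)·∂⁴G/∂ε⁴(A,0), and assume E₂(A*) = 0, E₂'(A*) < 0 and E₄(A*) > 0. Then: (i) there exists δ > 0 such that for every A ∈ (A* − δ, A*), ε = 0 is a strict local minimizer of ε ↦ G(A, ε); (ii) there exist δ > 0 and a continuous function ε̄ : (A*, A* + δ) → (0,∞) such that for each A ∈ (A*, A* + δ), ε̄(A) is a critical point of ε ↦ G(A, ε) which is a local minimizer, and ε̄(A)/√(A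 − A*) → √( −E₂'(A*) / (2·E₄(A*)) ) as A → A*⁺. -/
open Filter Topology Set

noncomputable def PD (G : ℝ × ℝ → ℝ) : ℕ → ℝ × ℝ → ℝ
  | 0 => G
  | k+1 => fun p => fderiv ℝ (PD G k) p (0, 1)

lemma PD_contDiffAt (G : ℝ × ℝ → ℝ) (p : ℝ × ℝ) (hG : ContDiffAt ℝ 6 G p) :
    ∀ k m : ℕ, m + k ≤ 6 → ContDiffAt ℝ m (PD G k) p := by
  intro k
  induction k with
  | zero => intro m hm; exact hG.of_le (by exact_mod_cast (by omega : m ≤ 6))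
  | succ k ih =>
    intro m hm
    have h1 : ContDiffAt ℝ (m+1) (PD G k) p := ih (m+1) (by omega)
    have h2 : ContDiffAt ℝ m (fderiv ℝ (PD G k)) p :=
      h1.fderiv_right (by exact_mod_cast le_refl (m+1))
    have h3 : ContDiff ℝ m (ContinuousLinearMap.apply ℝ ℝ ((0:ℝ),(1:ℝ)) :
        ((ℝ × ℝ) →L[ℝ] ℝ) → ℝ) := (ContinuousLinearMap.apply ℝ ℝ ((0:ℝ),(1:ℝ))).contDiff
    exact (h3.contDiffAt).comp p h2

lemma PD_hasDerivAt (G : ℝ × ℝ → ℝ) (A y : ℝ) (hG : ContDiffAt ℝ 6 G (A, y))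
    (k : ℕ) (hk : k ≤ 5) :
    HasDerivAt (fun t => PD G k (A, t)) (PD G (k+1) (A, y)) y := by
  have h1 : ContDiffAt ℝ 1 (PD G k) (A, y) := PD_contDiffAt G _ hG k 1 (by omega)
  have h2 : HasFDerivAt (PD G k) (fderiv ℝ (PD G k) (A, y)) (A, y) :=
    (h1.differentiableAt (by simp)).hasFDerivAt
  have h3 : HasDerivAt (fun t : ℝ => ((A, t) : ℝ × ℝ)) ((0:ℝ), (1:ℝ)) y :=
    (hasDerivAt_const y A).prodMk (hasDerivAt_id y)
  exact h2.comp_hasDerivAt y h3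

lemma abs_le_of_uIcc {t y : ℝ} (ht : t ∈ Set.uIcc 0 y) : |t| ≤ |y| := by
  rcases Set.mem_uIcc.1 ht with ⟨h1, h2⟩ | ⟨h1, h2⟩
  · rw [abs_of_nonneg h1]; exact h2.trans (le_abs_self y)
  · rw [abs_of_nonpos h2]; exact (neg_le_neg h1).trans (neg_le_abs y)

lemma bnd (e e' : ℝ → ℝ) (y C : ℝ) (h0 : e 0 = 0)
    (hd : ∀ t, |t| ≤ |y| → HasDerivAt e (e' t) t)
    (hC : ∀ t, |t| ≤ |y| → |e' t| ≤ C) : |e y| ≤ C * |y| := by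
  have := Convex.norm_image_sub_le_of_norm_hasDerivWithin_le
    (f := e) (f' := e') (s := Set.uIcc 0 y) (C := C)
    (fun t ht => (hd t (abs_le_of_uIcc ht)).hasDerivWithinAt)
    (fun t ht => hC t (abs_le_of_uIcc ht)) (convex_uIcc 0 y)
    Set.left_mem_uIcc Set.right_mem_uIcc
  simpa [h0] using this

lemma taylor_deg3 (f f1 f2 f3 f4 : ℝ → ℝ) (ρ M y : ℝ) (hy : |y| ≤ ρ)
    (h1 : ∀ t, |t| ≤ ρ → HasDerivAt f (f1 t) t)
    (h2 : ∀ t, |t| ≤ ρ → HasDerivAt f1 (f2 t) t)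
    (h3 : ∀ t, |t| ≤ ρ → HasDerivAt f2 (f3 t) t)
    (h4 : ∀ t, |t| ≤ ρ → HasDerivAt f3 (f4 t) t)
    (hM : ∀ t, |t| ≤ ρ → |f4 t| ≤ M) :
    |f y - (f 0 + f1 0 * y + f2 0 * y^2/2 + f3 0 * y^3/6)| ≤ M * y^4 := by
  have hle : ∀ t : ℝ, |t| ≤ |y| → |t| ≤ ρ := fun t ht => ht.trans hy
  have hM0 : 0 ≤ M := (abs_nonneg _).trans (hM 0 (by simpa using (abs_nonneg y).trans hy))
  -- step 3
  have s3 : ∀ t, |t| ≤ |y| → |f3 t - f3 0| ≤ M * |y| := by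
    intro t ht
    have := bnd (fun s => f3 s - f3 0) f4 t M (by simp)
      (fun s hs => (h4 s (hle s (hs.trans ht))).sub_const _)
      (fun s hs => hM s (hle s (hs.trans ht)))
    calc |f3 t - f3 0| ≤ M * |t| := this
    _ ≤ M * |y| := by nlinarith [abs_nonneg t]
  -- step 2
  have s2 : ∀ t, |t| ≤ |y| → |f2 t - (f2 0 + f3 0 * t)| ≤ (M * |y|) * |y| := by
    intro t ht
    have hd : ∀ s, |s| ≤ |t| → HasDerivAt (fun u => f2 u - (f2 0 + f3 0 * u))
        (f3 s - f3 0) s := by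
      intro s hs
      have := (h3 s (hle s (hs.trans ht))).sub
        ((hasDerivAt_id s).const_mul (f3 0) |>.const_add (f2 0))
      exact this.congr_deriv (by ring)
    have := bnd (fun u => f2 u - (f2 0 + f3 0 * u)) (fun s => f3 s - f3 0) t (M * |y|)
      (by simp) hd (fun s hs => s3 s (hs.trans ht))
    calc |f2 t - (f2 0 + f3 0 * t)| ≤ M * |y| * |t| := this
    _ ≤ M * |y| * |y| := by nlinarith [abs_nonneg t, abs_nonneg y, mul_nonneg hM0 (abs_nonneg y)]
  -- step 1
  have s1 : ∀ t, |t| ≤ |y| →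
      |f1 t - (f1 0 + f2 0 * t + f3 0 * t^2/2)| ≤ (M * |y| * |y|) * |y| := by
    intro t ht
    have hd : ∀ s, |s| ≤ |t| → HasDerivAt (fun u => f1 u - (f1 0 + f2 0 * u + f3 0 * u^2/2))
        (f2 s - (f2 0 + f3 0 * s)) s := by
      intro s hs
      have hp : HasDerivAt (fun u : ℝ => f1 0 + f2 0 * u + f3 0 * u^2/2)
          (f2 0 + f3 0 * s) s := by
        have := (((hasDerivAt_id s).const_mul (f2 0)).const_add (f1 0)).add
          (((hasDerivAt_pow 2 s).const_mul (f3 0)).div_const 2)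
        exact this.congr_deriv (by ring)
      exact (h2 s (hle s (hs.trans ht))).sub hp
    have := bnd _ _ t (M * |y| * |y|) (by simp) hd
      (fun s hs => s2 s (hs.trans ht))
    calc _ ≤ M * |y| * |y| * |t| := this
    _ ≤ M * |y| * |y| * |y| := by nlinarith [abs_nonneg t, abs_nonneg y, mul_nonneg (mul_nonneg hM0 (abs_nonneg y)) (abs_nonneg y)]
  -- step 0
  have s0 : |f y - (f 0 + f1 0 * y + f2 0 * y^2/2 + f3 0 * y^3/6)|
      ≤ (M * |y| * |y| * |y|) * |y| := by
    have hd : ∀ s, |s| ≤ |y| → HasDerivAt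
        (fun u => f u - (f 0 + f1 0 * u + f2 0 * u^2/2 + f3 0 * u^3/6))
        (f1 s - (f1 0 + f2 0 * s + f3 0 * s^2/2)) s := by
      intro s hs
      have hp : HasDerivAt (fun u : ℝ => f 0 + f1 0 * u + f2 0 * u^2/2 + f3 0 * u^3/6)
          (f1 0 + f2 0 * s + f3 0 * s^2/2) s := by
        have := ((((hasDerivAt_id s).const_mul (f1 0)).const_add (f 0)).add
          (((hasDerivAt_pow 2 s).const_mul (f2 0)).div_const 2)).add
          (((hasDerivAt_pow 3 s).const_mul (f3 0)).div_const 6)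
        exact this.congr_deriv (by ring)
      exact (h1 s (hle s hs)).sub hp
    exact bnd _ _ y _ (by simp) hd (fun s hs => s1 s hs)
  calc _ ≤ M * |y| * |y| * |y| * |y| := s0
  _ = M * y^4 := by
    have h : |y| * |y| = y * y := abs_mul_abs_self y
    rw [show M * |y| * |y| * |y| * |y| = M * ((|y| * |y|) * (|y| * |y|)) from by ring, h]
    ring

lemma sign_neg_num (P q1 q K e th y : ℝ) (hq1 : 0 < q1) (hq : q1 < q) (hK : 0 < K)
    (hth1 : 0 < th) (hth2 : th ≤ 1/5) (he : 0 < e) (hy : 0 < y) (hyu : y ≤ (1-th)*e)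
    (hKc : K*e < 4*th*q1) (hub : P ≤ 2*(-(2*q*e^2))*y + 4*q*y^3 + K*y^4) : P < 0 := by
  have hq0 : 0 < q := lt_trans hq1 hq
  have hye : y ≤ e := by nlinarith
  have h1 : y^2 ≤ (1-th)^2 * e^2 := by nlinarith
  have h2 : 4*q*y*y^2 ≤ 4*q*y*((1-th)^2*e^2) := by
    apply mul_le_mul_of_nonneg_left h1; positivity
  have h3 : y^3 ≤ e^3 := pow_le_pow_left₀ hy.le hye 3
  have h4 : K*y^4 ≤ (K*e)*(e^2*y) := by
    calc K*y^4 = (K*y^3)*y := by ring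
    _ ≤ (K*e^3)*y := mul_le_mul_of_nonneg_right (mul_le_mul_of_nonneg_left h3 hK.le) hy.le
    _ = (K*e)*(e^2*y) := by ring
  have h5 : (K*e)*(e^2*y) < (4*th*q1)*(e^2*y) :=
    mul_lt_mul_of_pos_right hKc (by positivity)
  have h6 : (4*th*q1)*(e^2*y) ≤ (4*th*q)*(e^2*y) := by
    apply mul_le_mul_of_nonneg_right _ (by positivity)
    nlinarith
  nlinarith [mul_pos (mul_pos (mul_pos hth1 (show (0:ℝ) < 1 - th by linarith))
    (mul_pos hq0 (pow_pos he 2))) hy]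

lemma sign_pos_num (P q1 q K e th y : ℝ) (hq1 : 0 < q1) (hq : q1 < q) (hK : 0 < K)
    (hth1 : 0 < th) (hth2 : th ≤ 1/5) (he : 0 < e) (hyl : (1+th)*e ≤ y)
    (hyu : y ≤ (6/5)*e) (hKc : K*e < 4*th*q1)
    (hlb : 2*(-(2*q*e^2))*y + 4*q*y^3 - K*y^4 ≤ P) : 0 < P := by
  have hq0 : 0 < q := lt_trans hq1 hq
  have hy : 0 < y := lt_of_lt_of_le (by positivity) hyl
  have h1 : (1+th)^2*e^2 ≤ y^2 := by
    nlinarith [mul_self_le_mul_self (show (0:ℝ) ≤ (1+th)*e by positivity) hyl]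
  have h2 : 4*q*y*((1+th)^2*e^2) ≤ 4*q*y*y^2 := by
    apply mul_le_mul_of_nonneg_left h1; positivity
  have h3 : y^3 ≤ ((6/5)*e)^3 := pow_le_pow_left₀ hy.le hyu 3
  have h4 : K*y^4 ≤ (216/125)*((K*e)*(e^2*y)) := by
    calc K*y^4 = (K*y^3)*y := by ring
    _ ≤ (K*((6/5)*e)^3)*y := mul_le_mul_of_nonneg_right
        (mul_le_mul_of_nonneg_left h3 hK.le) hy.le
    _ = (216/125)*((K*e)*(e^2*y)) := by ring
  have h5 : (K*e)*(e^2*y) < (4*th*q1)*(e^2*y) :=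
    mul_lt_mul_of_pos_right hKc (by positivity)
  have h6 : (4*th*q1)*(e^2*y) ≤ (4*th*q)*(e^2*y) := by
    apply mul_le_mul_of_nonneg_right _ (by positivity)
    nlinarith
  nlinarith [mul_pos (mul_pos hth1 (mul_pos hq0 (pow_pos he 2))) hy,
    mul_pos (mul_pos (mul_pos hth1 hth1) (mul_pos hq0 (pow_pos he 2))) hy]

lemma sign_d_num (P q1 q K e y : ℝ) (hq1 : 0 < q1) (hq : q1 < q) (hK : 0 < K)
    (he : 0 < e) (hyl : (4/5)*e ≤ y) (hyu : y ≤ (6/5)*e) (hKc : K*e^2 < q1)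
    (hlb : 2*(-(2*q*e^2)) + 12*q*y^2 - K*y^4 ≤ P) : 0 < P := by
  have hq0 : 0 < q := lt_trans hq1 hq
  have hy : 0 < y := lt_of_lt_of_le (by positivity) hyl
  have h1 : (4/5)^2*e^2 ≤ y^2 := by
    nlinarith [mul_self_le_mul_self (show (0:ℝ) ≤ (4/5)*e by positivity) hyl]
  have h3 : y^4 ≤ ((6/5)*e)^4 := pow_le_pow_left₀ hy.le hyu 4
  have h4 : K*y^4 ≤ (1296/625)*((K*e^2)*e^2) := by
    calc K*y^4 ≤ K*((6/5)*e)^4 := mul_le_mul_of_nonneg_left h3 hK.le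
    _ = (1296/625)*((K*e^2)*e^2) := by ring
  have h5 : (K*e^2)*e^2 < q1*e^2 := mul_lt_mul_of_pos_right hKc (by positivity)
  have h6 : q1*e^2 ≤ q*e^2 := mul_le_mul_of_nonneg_right hq.le (by positivity)
  nlinarith [mul_pos hq0 (pow_pos he 2)]

set_option maxHeartbeats 1600000 in
/-- Second-order phase transition (pitchfork asymptotics): for an even-in-`ε`, `C⁶`
energy `G` with `E₂(A*) = 0`, `E₂'(A*) < 0`, `E₄(A*) > 0`:
(i) just below `A*`, `ε = 0` is a strict local minimizer of `ε ↦ G(A,ε)`;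
(ii) just above `A*`, there is a continuous branch `ε̄(A) > 0` of critical points which
are local minimizers, with `ε̄(A)/√(A−A*) → √(−E₂'(A*)/(2E₄(A*)))` as `A → A*⁺`. -/
theorem second_order_phase_transition
    (G : ℝ × ℝ → ℝ) (Astar : ℝ) (U : Set (ℝ × ℝ)) (hU : U ∈ 𝓝 ((Astar, 0) : ℝ × ℝ))
    (hG : ContDiffOn ℝ 6 G U)
    (heven : ∀ A ε : ℝ, (A, ε) ∈ U → G (A, -ε) = G (A, ε))
    (E₂ E₄ : ℝ → ℝ)
    (hE₂ : ∀ A : ℝ, E₂ A = (1 / 2) * iteratedDeriv 2 (fun ε => G (A, ε)) 0)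
    (hE₄ : ∀ A : ℝ, E₄ A = (1 / 24) * iteratedDeriv 4 (fun ε => G (A, ε)) 0)
    (hzero : E₂ Astar = 0) (hslope : deriv E₂ Astar < 0) (hE₄pos : 0 < E₄ Astar) :
    (∃ δ : ℝ, 0 < δ ∧ ∀ A ∈ Set.Ioo (Astar - δ) Astar,
      ∀ᶠ ε in 𝓝[≠] (0 : ℝ), G (A, 0) < G (A, ε)) ∧
    ∃ δ : ℝ, 0 < δ ∧ ∃ εbar : ℝ → ℝ,
      ContinuousOn εbar (Set.Ioo Astar (Astar + δ)) ∧
      (∀ A ∈ Set.Ioo Astar (Astar + δ),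
        0 < εbar A ∧ deriv (fun ε => G (A, ε)) (εbar A) = 0 ∧
          IsLocalMin (fun ε => G (A, ε)) (εbar A)) ∧
      Tendsto (fun A => εbar A / Real.sqrt (A - Astar)) (𝓝[>] Astar)
        (𝓝 (Real.sqrt (-(deriv E₂ Astar) / (2 * E₄ Astar)))) := by
  classical
  obtain ⟨r, hr0, hrU⟩ : ∃ r > 0, Metric.ball ((Astar, 0) : ℝ × ℝ) r ⊆ U :=
    Metric.mem_nhds_iff.1 hU
  have hmem : ∀ A y : ℝ, |A - Astar| < r → |y| < r →
      (A, y) ∈ Metric.ball ((Astar, 0) : ℝ × ℝ) r := by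
    intro A y h1 h2
    rw [Metric.mem_ball, Prod.dist_eq]
    simp only [Real.dist_eq, sub_zero]
    exact max_lt h1 h2
  have hbox : ∀ A y : ℝ, |A - Astar| < r → |y| < r → (A, y) ∈ U :=
    fun A y h1 h2 => hrU (hmem A y h1 h2)
  have hCD : ∀ A y : ℝ, |A - Astar| < r → |y| < r → ContDiffAt ℝ 6 G (A, y) := by
    intro A y h1 h2
    exact hG.contDiffAt (Filter.mem_of_superset
      (Metric.isOpen_ball.mem_nhds (hmem A y h1 h2)) hrU)
  have hder : ∀ k : ℕ, k ≤ 5 → ∀ A y : ℝ, |A - Astar| < r → |y| < r →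
      HasDerivAt (fun t => PD G k (A, t)) (PD G (k+1) (A, y)) y := by
    intro k hk A y h1 h2
    exact PD_hasDerivAt G A y (hCD A y h1 h2) k hk
  -- oddness
  have hodd : ∀ k : ℕ, k ≤ 5 → ∀ A y : ℝ, |A - Astar| < r → |y| < r →
      PD G k (A, -y) = (-1:ℝ)^k * PD G k (A, y) := by
    intro k
    induction k with
    | zero =>
      intro _ A y h1 h2
      simpa [PD] using heven A y (hbox A y h1 h2)
    | succ k ih =>
      intro hk A y h1 h2
      have hk5 : k ≤ 5 := by omega
      have hL : HasDerivAt (fun t => PD G k (A, -t)) (PD G (k+1) (A, -y) * (-1)) y := by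
        have h := hder k hk5 A (-y) h1 (by rwa [abs_neg])
        exact HasDerivAt.comp y h (hasDerivAt_neg y)
      have hR : HasDerivAt (fun t => (-1:ℝ)^k * PD G k (A, t))
          ((-1:ℝ)^k * PD G (k+1) (A, y)) y := (hder k hk5 A y h1 h2).const_mul _
      have heq : (fun t => (-1:ℝ)^k * PD G k (A, t)) =ᶠ[𝓝 y]
          (fun t => PD G k (A, -t)) := by
        have hmem' : Set.Ioo (-r) r ∈ 𝓝 y := Ioo_mem_nhds (abs_lt.1 h2).1 (abs_lt.1 h2).2
        filter_upwards [hmem'] with t ht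
        exact (ih hk5 A t h1 (abs_lt.2 ⟨ht.1, ht.2⟩)).symm
      have hL' : HasDerivAt (fun t => (-1:ℝ)^k * PD G k (A, t))
          (PD G (k+1) (A, -y) * (-1)) y := hL.congr_of_eventuallyEq heq
      have huniq := hL'.unique hR
      linear_combination (-1 : ℝ) * huniq
  have hoddzero : ∀ k : ℕ, k ≤ 5 → Odd k → ∀ A : ℝ, |A - Astar| < r →
      PD G k (A, 0) = 0 := by
    intro k hk hkodd A h1
    have := hodd k hk A 0 h1 (by simpa using hr0)
    rw [neg_zero, Odd.neg_one_pow hkodd] at this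
    linarith
  -- iterated derivative identification
  have hID : ∀ A : ℝ, |A - Astar| < r → ∀ k : ℕ, k ≤ 5 →
      (iteratedDeriv k (fun t => G (A, t))) =ᶠ[𝓝 (0:ℝ)] (fun y => PD G k (A, y)) := by
    intro A hA k
    induction k with
    | zero =>
      intro _
      exact Filter.Eventually.of_forall (fun y => by simp [iteratedDeriv_zero, PD])
    | succ k ih =>
      intro hk
      rw [iteratedDeriv_succ]
      refine ((ih (by omega)).deriv).trans ?_
      have hmem' : Set.Ioo (-r) r ∈ 𝓝 (0:ℝ) := Ioo_mem_nhds (by linarith) hr0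
      filter_upwards [hmem'] with y hy
      exact (hder k (by omega) A y hA (abs_lt.2 ⟨hy.1, hy.2⟩)).deriv
  have hE2' : ∀ A : ℝ, |A - Astar| < r → PD G 2 (A, 0) = 2 * E₂ A := by
    intro A hA
    have h := (hID A hA 2 (by norm_num)).eq_of_nhds
    rw [hE₂ A]
    rw [h]
    ring
  have hE4' : ∀ A : ℝ, |A - Astar| < r → PD G 4 (A, 0) = 24 * E₄ A := by
    intro A hA
    have h := (hID A hA 4 (by norm_num)).eq_of_nhds
    rw [hE₄ A, h]
    ring
  have hcont : ∀ k : ℕ, k ≤ 6 → ∀ A y : ℝ, |A - Astar| < r → |y| < r →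
      ContinuousAt (PD G k) (A, y) := by
    intro k hk A y h1 h2
    exact (PD_contDiffAt G _ (hCD A y h1 h2) k 0 (by omega)).continuousAt
  -- uniform bound K for PD 5 and PD 6 on compact box
  obtain ⟨K, hKpos, hKb⟩ : ∃ K : ℝ, 0 < K ∧ ∀ A y : ℝ, |A - Astar| ≤ r/2 → |y| ≤ r/2 →
      |PD G 5 (A, y)| ≤ K ∧ |PD G 6 (A, y)| ≤ K := by
    have hcomp : IsCompact ((Set.Icc (Astar - r/2) (Astar + r/2)) ×ˢ
        (Set.Icc (-(r/2)) (r/2))) := isCompact_Icc.prod isCompact_Icc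
    have hmem5 : ∀ p ∈ (Set.Icc (Astar - r/2) (Astar + r/2)) ×ˢ (Set.Icc (-(r/2)) (r/2)),
        |p.1 - Astar| < r ∧ |p.2| < r := by
      rintro ⟨A, y⟩ ⟨hA, hy⟩
      rw [Set.mem_Icc] at hA hy
      constructor
      · rw [abs_lt]; constructor <;> linarith [hA.1, hA.2]
      · rw [abs_lt]; constructor <;> linarith [hy.1, hy.2]
    obtain ⟨K5, hK5⟩ := hcomp.exists_bound_of_continuousOn (f := PD G 5) (by
      intro p hp
      exact ((hcont 5 (by norm_num) p.1 p.2 (hmem5 p hp).1 (hmem5 p hp).2).continuousWithinAt))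
    obtain ⟨K6, hK6⟩ := hcomp.exists_bound_of_continuousOn (f := PD G 6) (by
      intro p hp
      exact ((hcont 6 (by norm_num) p.1 p.2 (hmem5 p hp).1 (hmem5 p hp).2).continuousWithinAt))
    refine ⟨max 1 (max K5 K6), by positivity, ?_⟩
    intro A y h1 h2
    have hpmem : ((A, y) : ℝ × ℝ) ∈ (Set.Icc (Astar - r/2) (Astar + r/2)) ×ˢ
        (Set.Icc (-(r/2)) (r/2)) := by
      constructor
      · rw [Set.mem_Icc]; constructor <;> [linarith [abs_le.1 h1, (abs_le.1 h1).1];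
          linarith [(abs_le.1 h1).2]]
      · rw [Set.mem_Icc]; exact ⟨(abs_le.1 h2).1, (abs_le.1 h2).2⟩
    constructor
    · calc |PD G 5 (A, y)| ≤ K5 := hK5 (A, y) hpmem
      _ ≤ max 1 (max K5 K6) := le_trans (le_max_left _ _) (le_max_right _ _)
    · calc |PD G 6 (A, y)| ≤ K6 := hK6 (A, y) hpmem
      _ ≤ max 1 (max K5 K6) := le_trans (le_max_right _ _) (le_max_right _ _)
  -- Taylor estimates
  have hTg : ∀ A : ℝ, |A - Astar| ≤ r/2 → ∀ y : ℝ, |y| ≤ r/2 →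
      |PD G 1 (A, y) - (2 * E₂ A * y + 4 * E₄ A * y^3)| ≤ K * y^4 := by
    intro A hA y hy
    have hAr : |A - Astar| < r := lt_of_le_of_lt hA (by linarith)
    have hder' : ∀ k : ℕ, k ≤ 5 → ∀ t : ℝ, |t| ≤ r/2 →
        HasDerivAt (fun t => PD G k (A, t)) (PD G (k+1) (A, t)) t := by
      intro k hk t ht
      exact hder k hk A t hAr (lt_of_le_of_lt ht (by linarith))
    have h := taylor_deg3 (fun t => PD G 1 (A, t)) (fun t => PD G 2 (A, t))
      (fun t => PD G 3 (A, t)) (fun t => PD G 4 (A, t)) (fun t => PD G 5 (A, t))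
      (r/2) K y hy (hder' 1 (by norm_num)) (hder' 2 (by norm_num))
      (hder' 3 (by norm_num)) (hder' 4 (by norm_num))
      (fun t ht => (hKb A t hA ht).1)
    have h1 : PD G 1 (A, 0) = 0 := hoddzero 1 (by norm_num) ⟨0, by norm_num⟩ A hAr
    have h3 : PD G 3 (A, 0) = 0 := hoddzero 3 (by norm_num) ⟨1, by norm_num⟩ A hAr
    rw [h1, h3, hE2' A hAr, hE4' A hAr] at h
    calc |PD G 1 (A, y) - (2 * E₂ A * y + 4 * E₄ A * y^3)|
        = |PD G 1 (A, y) - (0 + 2 * E₂ A * y + 0 * y^2/2 + 24 * E₄ A * y^3/6)| := by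
          ring_nf
      _ ≤ K * y^4 := h
  have hTg2 : ∀ A : ℝ, |A - Astar| ≤ r/2 → ∀ y : ℝ, |y| ≤ r/2 →
      |PD G 2 (A, y) - (2 * E₂ A + 12 * E₄ A * y^2)| ≤ K * y^4 := by
    intro A hA y hy
    have hAr : |A - Astar| < r := lt_of_le_of_lt hA (by linarith)
    have hder' : ∀ k : ℕ, k ≤ 5 → ∀ t : ℝ, |t| ≤ r/2 →
        HasDerivAt (fun t => PD G k (A, t)) (PD G (k+1) (A, t)) t := by
      intro k hk t ht
      exact hder k hk A t hAr (lt_of_le_of_lt ht (by linarith))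
    have h := taylor_deg3 (fun t => PD G 2 (A, t)) (fun t => PD G 3 (A, t))
      (fun t => PD G 4 (A, t)) (fun t => PD G 5 (A, t)) (fun t => PD G 6 (A, t))
      (r/2) K y hy (hder' 2 (by norm_num)) (hder' 3 (by norm_num))
      (hder' 4 (by norm_num)) (hder' 5 (by norm_num))
      (fun t ht => (hKb A t hA ht).2)
    have h3 : PD G 3 (A, 0) = 0 := hoddzero 3 (by norm_num) ⟨1, by norm_num⟩ A hAr
    have h5 : PD G 5 (A, 0) = 0 := hoddzero 5 (by norm_num) ⟨2, by norm_num⟩ A hAr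
    rw [h3, h5, hE2' A hAr, hE4' A hAr] at h
    calc |PD G 2 (A, y) - (2 * E₂ A + 12 * E₄ A * y^2)|
        = |PD G 2 (A, y) - (2 * E₂ A + 0 * y + 24 * E₄ A * y^2/2 + 0 * y^3/6)| := by
          ring_nf
      _ ≤ K * y^4 := h
  -- slope facts
  have hdiffE2 : DifferentiableAt ℝ E₂ Astar := by
    by_contra h
    rw [deriv_zero_of_not_differentiableAt h] at hslope
    exact lt_irrefl 0 hslope
  have hslopeT : Tendsto (fun A => E₂ A / (A - Astar)) (𝓝[≠] Astar)
      (𝓝 (deriv E₂ Astar)) := by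
    have h := hdiffE2.hasDerivAt
    rw [hasDerivAt_iff_tendsto_slope] at h
    refine h.congr (fun A => ?_)
    rw [slope_def_field, hzero]
    ring_nf
  -- continuity of E₂, E₄ near Astar
  have hE2contAt : ∀ A₀ : ℝ, |A₀ - Astar| < r → ContinuousAt E₂ A₀ := by
    intro A₀ hA₀
    have h1 : ContinuousAt (fun A : ℝ => (1/2 : ℝ) * PD G 2 (A, 0)) A₀ := by
      have hi : ContinuousAt (fun A : ℝ => ((A, (0:ℝ)) : ℝ × ℝ)) A₀ :=
        (continuous_id.prodMk continuous_const).continuousAt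
      have h2 : ContinuousAt (fun A : ℝ => PD G 2 (A, 0)) A₀ :=
        ContinuousAt.comp (f := fun A : ℝ => ((A, (0:ℝ)) : ℝ × ℝ))
          (hcont 2 (by norm_num) A₀ 0 hA₀ (by simpa using hr0)) hi
      exact h2.const_mul _
    refine h1.congr ?_
    have hmem' : Set.Ioo (Astar - r) (Astar + r) ∈ 𝓝 A₀ := by
      apply Ioo_mem_nhds <;> [linarith [(abs_lt.1 hA₀).1]; linarith [(abs_lt.1 hA₀).2]]
    filter_upwards [hmem'] with A hA
    have : |A - Astar| < r := abs_lt.2 ⟨by linarith [hA.1], by linarith [hA.2]⟩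
    rw [hE2' A this]; ring
  have hE4contAt : ∀ A₀ : ℝ, |A₀ - Astar| < r → ContinuousAt E₄ A₀ := by
    intro A₀ hA₀
    have h1 : ContinuousAt (fun A : ℝ => (1/24 : ℝ) * PD G 4 (A, 0)) A₀ := by
      have hi : ContinuousAt (fun A : ℝ => ((A, (0:ℝ)) : ℝ × ℝ)) A₀ :=
        (continuous_id.prodMk continuous_const).continuousAt
      have h2 : ContinuousAt (fun A : ℝ => PD G 4 (A, 0)) A₀ :=
        ContinuousAt.comp (f := fun A : ℝ => ((A, (0:ℝ)) : ℝ × ℝ))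
          (hcont 4 (by norm_num) A₀ 0 hA₀ (by simpa using hr0)) hi
      exact h2.const_mul _
    refine h1.congr ?_
    have hmem' : Set.Ioo (Astar - r) (Astar + r) ∈ 𝓝 A₀ := by
      apply Ioo_mem_nhds <;> [linarith [(abs_lt.1 hA₀).1]; linarith [(abs_lt.1 hA₀).2]]
    filter_upwards [hmem'] with A hA
    have : |A - Astar| < r := abs_lt.2 ⟨by linarith [hA.1], by linarith [hA.2]⟩
    rw [hE4' A this]; ring
  -- extraction helpers
  have exδR : ∀ P : ℝ → Prop, (∀ᶠ A in 𝓝[>] Astar, P A) →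
      ∃ δ : ℝ, 0 < δ ∧ ∀ A ∈ Set.Ioo Astar (Astar + δ), P A := by
    intro P hP
    rw [eventually_nhdsWithin_iff] at hP
    obtain ⟨δ, hδ0, hδ⟩ := Metric.eventually_nhds_iff.1 hP
    refine ⟨δ, hδ0, fun A hA => ?_⟩
    refine hδ ?_ hA.1
    rw [Real.dist_eq, abs_lt]
    constructor <;> [linarith [hA.1]; linarith [hA.2]]
  have exδL : ∀ P : ℝ → Prop, (∀ᶠ A in 𝓝[<] Astar, P A) →
      ∃ δ : ℝ, 0 < δ ∧ ∀ A ∈ Set.Ioo (Astar - δ) Astar, P A := by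
    intro P hP
    rw [eventually_nhdsWithin_iff] at hP
    obtain ⟨δ, hδ0, hδ⟩ := Metric.eventually_nhds_iff.1 hP
    refine ⟨δ, hδ0, fun A hA => ?_⟩
    refine hδ ?_ hA.2
    rw [Real.dist_eq, abs_lt]
    constructor <;> [linarith [hA.1]; linarith [hA.2]]
  -- Part (i)
  have part1 : ∃ δ : ℝ, 0 < δ ∧ ∀ A ∈ Set.Ioo (Astar - δ) Astar,
      ∀ᶠ ε in 𝓝[≠] (0 : ℝ), G (A, 0) < G (A, ε) := by
    have hev : ∀ᶠ A in 𝓝[<] Astar, 0 < E₂ A ∧ |A - Astar| < r/2 := by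
      have h1 : ∀ᶠ A in 𝓝[<] Astar, E₂ A / (A - Astar) < 0 :=
        (hslopeT.mono_left (nhdsWithin_mono _ (fun x hx => ne_of_lt hx))).eventually_lt_const
          hslope
      have h2 : ∀ᶠ A in 𝓝[<] Astar, A < Astar := eventually_mem_nhdsWithin
      have h3 : ∀ᶠ A in 𝓝[<] Astar, |A - Astar| < r/2 := by
        refine Filter.Eventually.filter_mono nhdsWithin_le_nhds ?_
        have : Set.Ioo (Astar - r/2) (Astar + r/2) ∈ 𝓝 Astar := by
          apply Ioo_mem_nhds <;> linarith
        filter_upwards [this] with A hA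
        rw [abs_lt]; constructor <;> [linarith [hA.1]; linarith [hA.2]]
      filter_upwards [h1, h2, h3] with A hA1 hA2 hA3
      refine ⟨?_, hA3⟩
      have hne : A - Astar < 0 := by linarith
      have hne' : A - Astar ≠ 0 := ne_of_lt hne
      have heq2 : E₂ A / (A - Astar) * (A - Astar) = E₂ A := div_mul_cancel₀ _ hne'
      rw [← heq2]
      exact mul_pos_of_neg_of_neg hA1 hne
    obtain ⟨δ, hδ0, hδ⟩ := exδL _ hev
    refine ⟨δ, hδ0, fun A hA => ?_⟩
    obtain ⟨hE2A, hAr2⟩ := hδ A hA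
    have hAr : |A - Astar| < r := by linarith [hAr2, hr0]
    have hg0 : PD G 1 (A, 0) = 0 := hoddzero 1 (by norm_num) ⟨0, by norm_num⟩ A hAr
    have hderg : HasDerivAt (fun y => PD G 1 (A, y)) (2 * E₂ A) 0 := by
      have := hder 1 (by norm_num) A 0 hAr (by simpa using hr0)
      rwa [hE2' A hAr] at this
    rw [hasDerivAt_iff_tendsto_slope] at hderg
    have hsl : ∀ᶠ y in 𝓝[≠] (0:ℝ), E₂ A < slope (fun y => PD G 1 (A, y)) 0 y :=
      hderg.eventually_const_lt (by linarith)
    rw [eventually_nhdsWithin_iff] at hsl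
    obtain ⟨t, ht0, ht⟩ := Metric.eventually_nhds_iff.1 hsl
    set t' : ℝ := min t (r/2) with ht'def
    have ht'0 : 0 < t' := lt_min ht0 (by linarith)
    have hgpos : ∀ y : ℝ, 0 < y → y < t' → 0 < PD G 1 (A, y) := by
      intro y hy1 hy2
      have hyt : dist y 0 < t := by
        rw [Real.dist_eq, sub_zero, abs_of_pos hy1]
        exact lt_of_lt_of_le hy2 (min_le_left _ _)
      have := ht hyt (by simp [ne_of_gt hy1])
      rw [slope_def_field, hg0] at this
      have h2 : 0 < (PD G 1 (A, y) - 0) / (y - 0) := lt_trans hE2A this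
      rw [sub_zero, sub_zero] at h2
      exact (div_pos_iff.1 h2).resolve_right (fun h => absurd hy1 (not_lt.2 h.2.le)) |>.1
    have hmono : StrictMonoOn (fun y => G (A, y)) (Set.Icc 0 t') := by
      apply strictMonoOn_of_deriv_pos (convex_Icc _ _)
      · intro y hy
        rw [Set.mem_Icc] at hy
        have hyr : |y| < r := by
          rw [abs_lt]
          constructor <;> [linarith [hy.1]; linarith [hy.2, min_le_right t (r/2)]]
        have : ContinuousAt (fun y => G (A, y)) y := by
          have h0 := (hcont 0 (by norm_num) A y hAr hyr)
          exact ContinuousAt.comp (f := fun y : ℝ => ((A, y) : ℝ × ℝ)) h0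
            ((continuous_const.prodMk continuous_id).continuousAt)
        exact this.continuousWithinAt
      · intro y hy
        rw [interior_Icc, Set.mem_Ioo] at hy
        have hyr : |y| < r := by
          rw [abs_lt]
          constructor <;> [linarith [hy.1]; linarith [hy.2, min_le_right t (r/2)]]
        have hd := hder 0 (by norm_num) A y hAr hyr
        have : deriv (fun y => G (A, y)) y = PD G 1 (A, y) := hd.deriv
        rw [this]
        exact hgpos y hy.1 hy.2
    have hfinal : ∀ ε : ℝ, 0 < |ε| → |ε| < t' → G (A, 0) < G (A, ε) := by
      intro ε h1 h2
      have h2r : |ε| < r := by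
        have := min_le_right t (r/2)
        calc |ε| < t' := h2
        _ ≤ r/2 := min_le_right _ _
        _ < r := by linarith
      rcases lt_or_gt_of_ne (abs_pos.1 h1) with hneg | hpos
      · have habs : |ε| = -ε := abs_of_neg hneg
        have h3 : G (A, ε) = G (A, -ε) := by
          have h4 := heven A (-ε) (hbox A (-ε) hAr (by rwa [abs_neg]))
          rwa [neg_neg] at h4
        rw [h3]
        refine hmono (Set.mem_Icc.2 ⟨le_refl 0, ht'0.le⟩)
          (Set.mem_Icc.2 ⟨by linarith, ?_⟩) (by linarith)
        rw [habs] at h2; linarith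
      · have habs : |ε| = ε := abs_of_pos hpos
        refine hmono (Set.mem_Icc.2 ⟨le_refl 0, ht'0.le⟩)
          (Set.mem_Icc.2 ⟨hpos.le, ?_⟩) hpos
        rw [habs] at h2; linarith
    rw [eventually_nhdsWithin_iff]
    have : Set.Ioo (-t') t' ∈ 𝓝 (0:ℝ) := Ioo_mem_nhds (by linarith) ht'0
    filter_upwards [this] with ε hε hne
    have h1 : 0 < |ε| := abs_pos.2 hne
    have h2 : |ε| < t' := abs_lt.2 ⟨hε.1, hε.2⟩
    exact hfinal ε h1 h2
  -- Part (ii) setup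
  have hc0 : 0 < -(deriv E₂ Astar) := neg_pos.2 hslope
  set q₁ : ℝ := E₄ Astar / 2 with hq₁def
  have hq₁ : 0 < q₁ := by rw [hq₁def]; positivity
  set ε₀ : ℝ → ℝ := fun A => Real.sqrt (-E₂ A / (2 * E₄ A)) with hε₀def
  have hε₀nonneg : ∀ A, 0 ≤ ε₀ A := fun A => Real.sqrt_nonneg _
  -- smallness of ε₀ near Astar
  have hsmall : ∀ ρ : ℝ, 0 < ρ → ∀ᶠ A in 𝓝[>] Astar, ε₀ A < ρ := by
    intro ρ hρ
    have hcE2 : ContinuousAt E₂ Astar := hE2contAt Astar (by simpa using hr0)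
    rw [ContinuousAt, hzero] at hcE2
    have h1 : ∀ᶠ A in 𝓝 Astar, |E₂ A| < E₄ Astar * ρ^2 / 2 := by
      have := Metric.tendsto_nhds.1 hcE2 (E₄ Astar * ρ^2 / 2) (by positivity)
      filter_upwards [this] with A hA
      rwa [Real.dist_eq, sub_zero] at hA
    have h2 : ∀ᶠ A in 𝓝 Astar, E₄ Astar / 2 < E₄ A :=
      (hE4contAt Astar (by simpa using hr0)).eventually_const_lt (by linarith)
    refine Filter.Eventually.filter_mono nhdsWithin_le_nhds ?_
    filter_upwards [h1, h2] with A hA1 hA2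
    rw [hε₀def]
    rw [Real.sqrt_lt' hρ]
    have hq : 0 < E₄ A := by linarith
    have h3 : -E₂ A / (2 * E₄ A) ≤ |E₂ A| / E₄ Astar :=
      div_le_div₀ (abs_nonneg _) (neg_le_abs _) hE₄pos (by linarith)
    have h4 : |E₂ A| / E₄ Astar < ρ^2 / 2 := by
      rw [div_lt_iff₀ hE₄pos]
      calc |E₂ A| < E₄ Astar * ρ^2 / 2 := hA1
      _ = ρ^2 / 2 * E₄ Astar := by ring
    have hρ2 : 0 < ρ^2 := by positivity
    linarith
  -- the good set
  have hgood : ∀ᶠ A in 𝓝[>] Astar, Astar < A ∧ |A - Astar| < r/2 ∧ E₂ A < 0 ∧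
      q₁ < E₄ A ∧ E₄ A < 4 * q₁ ∧ ε₀ A < r/4 ∧ K * ε₀ A < (2/5) * q₁ ∧
      K * (ε₀ A)^2 < q₁ := by
    have e1 : ∀ᶠ A in 𝓝[>] Astar, Astar < A := eventually_mem_nhdsWithin
    have e2 : ∀ᶠ A in 𝓝[>] Astar, |A - Astar| < r/2 := by
      refine Filter.Eventually.filter_mono nhdsWithin_le_nhds ?_
      have : Set.Ioo (Astar - r/2) (Astar + r/2) ∈ 𝓝 Astar := by
        apply Ioo_mem_nhds <;> linarith
      filter_upwards [this] with A hA
      rw [abs_lt]; constructor <;> [linarith [hA.1]; linarith [hA.2]]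
    have e3 : ∀ᶠ A in 𝓝[>] Astar, E₂ A < 0 := by
      have hsl : ∀ᶠ A in 𝓝[>] Astar, E₂ A / (A - Astar) < 0 :=
        (hslopeT.mono_left (nhdsWithin_mono _ (fun x hx => ne_of_gt hx))).eventually_lt_const
          hslope
      filter_upwards [hsl, e1] with A hA1 hA2
      have hpos : 0 < A - Astar := by linarith
      have heq2 : E₂ A / (A - Astar) * (A - Astar) = E₂ A :=
        div_mul_cancel₀ _ (ne_of_gt hpos)
      rw [← heq2]
      exact mul_neg_of_neg_of_pos hA1 hpos
    have e4 : ∀ᶠ A in 𝓝[>] Astar, q₁ < E₄ A := by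
      refine Filter.Eventually.filter_mono nhdsWithin_le_nhds ?_
      exact (hE4contAt Astar (by simpa using hr0)).eventually_const_lt (by rw [hq₁def]; linarith)
    have e5 : ∀ᶠ A in 𝓝[>] Astar, E₄ A < 4 * q₁ := by
      refine Filter.Eventually.filter_mono nhdsWithin_le_nhds ?_
      exact (hE4contAt Astar (by simpa using hr0)).eventually_lt_const
        (by rw [hq₁def]; linarith)
    have e6 : ∀ᶠ A in 𝓝[>] Astar, ε₀ A < r/4 := hsmall (r/4) (by linarith)
    have e7 : ∀ᶠ A in 𝓝[>] Astar, K * ε₀ A < (2/5) * q₁ := by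
      have := hsmall ((2/5) * q₁ / K) (by positivity)
      filter_upwards [this] with A hA
      rw [lt_div_iff₀ hKpos] at hA
      calc K * ε₀ A = ε₀ A * K := by ring
      _ < (2/5) * q₁ := hA
    have e8 : ∀ᶠ A in 𝓝[>] Astar, K * (ε₀ A)^2 < q₁ := by
      have := hsmall (Real.sqrt (q₁ / K)) (Real.sqrt_pos.2 (by positivity))
      filter_upwards [this] with A hA
      have h1 : (ε₀ A)^2 < q₁ / K := by
        have := pow_lt_pow_left₀ hA (hε₀nonneg A) (n := 2) (by norm_num)
        rwa [Real.sq_sqrt (by positivity : (0:ℝ) ≤ q₁ / K)] at this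
      calc K * (ε₀ A)^2 < K * (q₁ / K) := by
            exact mul_lt_mul_of_pos_left h1 hKpos
      _ = q₁ := by field_simp
    filter_upwards [e1, e2, e3, e4, e5, e6, e7, e8] with A h1 h2 h3 h4 h5 h6 h7 h8
    exact ⟨h1, h2, h3, h4, h5, h6, h7, h8⟩
  -- sign lemmas
  have sign_neg : ∀ A θ y : ℝ, |A - Astar| < r/2 → E₂ A < 0 → q₁ < E₄ A →
      K * ε₀ A < 4 * θ * q₁ → 0 < θ → θ ≤ 1/5 → ε₀ A < r/4 →
      0 < y → y ≤ (1 - θ) * ε₀ A → PD G 1 (A, y) < 0 := by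
    intro A θ y hA hE2neg hq₁A hKc hθ1 hθ2 her hy0 hyu
    have hq : 0 < E₄ A := lt_trans hq₁ hq₁A
    have hb : 0 < -E₂ A := neg_pos.2 hE2neg
    have he0 : 0 < ε₀ A := Real.sqrt_pos.2 (by positivity)
    have he0sq : (ε₀ A)^2 = -E₂ A / (2 * E₄ A) := Real.sq_sqrt (by positivity)
    have hbq : E₂ A = -(2 * E₄ A * (ε₀ A)^2) := by
      rw [he0sq]; field_simp
    have hye : y ≤ ε₀ A := by nlinarith
    have hyabs : |y| ≤ r/2 := by
      rw [abs_of_pos hy0]; linarith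
    have hT := hTg A hA.le y hyabs
    have hub : PD G 1 (A, y) ≤ 2 * (-(2 * E₄ A * (ε₀ A)^2)) * y + 4 * E₄ A * y^3 + K * y^4 := by
      have h := (abs_le.1 hT).2
      rw [hbq] at h
      linarith
    exact sign_neg_num _ q₁ (E₄ A) K (ε₀ A) θ y hq₁ hq₁A hKpos hθ1 hθ2 he0 hy0 hyu hKc hub
  have sign_pos : ∀ A θ y : ℝ, |A - Astar| < r/2 → E₂ A < 0 → q₁ < E₄ A →
      K * ε₀ A < 4 * θ * q₁ → 0 < θ → θ ≤ 1/5 → ε₀ A < r/4 →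
      (1 + θ) * ε₀ A ≤ y → y ≤ (6/5) * ε₀ A → 0 < PD G 1 (A, y) := by
    intro A θ y hA hE2neg hq₁A hKc hθ1 hθ2 her hyl hyu
    have hq : 0 < E₄ A := lt_trans hq₁ hq₁A
    have hb : 0 < -E₂ A := neg_pos.2 hE2neg
    have he0 : 0 < ε₀ A := Real.sqrt_pos.2 (by positivity)
    have he0sq : (ε₀ A)^2 = -E₂ A / (2 * E₄ A) := Real.sq_sqrt (by positivity)
    have hbq : E₂ A = -(2 * E₄ A * (ε₀ A)^2) := by
      rw [he0sq]; field_simp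
    have hy0 : 0 < y := lt_of_lt_of_le (by positivity) hyl
    have hyabs : |y| ≤ r/2 := by
      rw [abs_of_pos hy0]; linarith
    have hT := hTg A hA.le y hyabs
    have hlb : 2 * (-(2 * E₄ A * (ε₀ A)^2)) * y + 4 * E₄ A * y^3 - K * y^4 ≤ PD G 1 (A, y) := by
      have h := (abs_le.1 hT).1
      rw [hbq] at h
      linarith
    exact sign_pos_num _ q₁ (E₄ A) K (ε₀ A) θ y hq₁ hq₁A hKpos hθ1 hθ2 he0 hyl hyu hKc hlb
  have sign_d : ∀ A y : ℝ, |A - Astar| < r/2 → E₂ A < 0 → q₁ < E₄ A →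
      K * (ε₀ A)^2 < q₁ → ε₀ A < r/4 →
      (4/5) * ε₀ A ≤ y → y ≤ (6/5) * ε₀ A → 0 < PD G 2 (A, y) := by
    intro A y hA hE2neg hq₁A hKc her hyl hyu
    have hq : 0 < E₄ A := lt_trans hq₁ hq₁A
    have hb : 0 < -E₂ A := neg_pos.2 hE2neg
    have he0 : 0 < ε₀ A := Real.sqrt_pos.2 (by positivity)
    have he0sq : (ε₀ A)^2 = -E₂ A / (2 * E₄ A) := Real.sq_sqrt (by positivity)
    have hbq : E₂ A = -(2 * E₄ A * (ε₀ A)^2) := by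
      rw [he0sq]; field_simp
    have hy0 : 0 < y := lt_of_lt_of_le (by positivity) hyl
    have hyabs : |y| ≤ r/2 := by
      rw [abs_of_pos hy0]; linarith
    have hT := hTg2 A hA.le y hyabs
    have hlb : 2 * (-(2 * E₄ A * (ε₀ A)^2)) + 12 * E₄ A * y^2 - K * y^4 ≤ PD G 2 (A, y) := by
      have h := (abs_le.1 hT).1
      rw [hbq] at h
      linarith
    exact sign_d_num _ q₁ (E₄ A) K (ε₀ A) y hq₁ hq₁A hKpos he0 hyl hyu hKc hlb
  -- strict monotonicity of g on the bump interval
  have hsliceCont : ∀ k : ℕ, k ≤ 6 → ∀ A : ℝ, |A - Astar| < r → ∀ y : ℝ, |y| < r →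
      ContinuousAt (fun y => PD G k (A, y)) y := by
    intro k hk A hA y hy
    exact ContinuousAt.comp (f := fun y : ℝ => ((A, y) : ℝ × ℝ))
      (hcont k hk A y hA hy) ((continuous_const.prodMk continuous_id).continuousAt)
  have hmono : ∀ A : ℝ, |A - Astar| < r/2 → E₂ A < 0 → q₁ < E₄ A →
      K * (ε₀ A)^2 < q₁ → ε₀ A < r/4 →
      StrictMonoOn (fun y => PD G 1 (A, y))
        (Set.Icc ((4/5) * ε₀ A) ((6/5) * ε₀ A)) := by
    intro A hA hE2neg hq₁A hKc her
    have hq : 0 < E₄ A := lt_trans hq₁ hq₁A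
    have hb : 0 < -E₂ A := neg_pos.2 hE2neg
    have he0 : 0 < ε₀ A := Real.sqrt_pos.2 (by positivity)
    have hA' : |A - Astar| < r := by linarith
    have hyr : ∀ y : ℝ, y ∈ Set.Icc ((4/5) * ε₀ A) ((6/5) * ε₀ A) → |y| < r := by
      intro y hy
      rw [Set.mem_Icc] at hy
      rw [abs_of_nonneg (le_trans (by positivity) hy.1)]
      calc y ≤ (6/5) * ε₀ A := hy.2
      _ < (6/5) * (r/4) := by
          exact mul_lt_mul_of_pos_left her (by norm_num)
      _ < r := by linarith
    apply strictMonoOn_of_deriv_pos (convex_Icc _ _)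
    · intro y hy
      exact (hsliceCont 1 (by norm_num) A hA' y (hyr y hy)).continuousWithinAt
    · intro y hy
      rw [interior_Icc] at hy
      have hyr' : |y| < r := hyr y (Set.mem_Icc.2 ⟨hy.1.le, hy.2.le⟩)
      have hd := (hder 1 (by norm_num) A y hA' hyr').deriv
      rw [hd]
      exact sign_d A y hA hE2neg hq₁A hKc her hy.1.le hy.2.le
  -- existence of a zero
  have hex : ∀ A : ℝ, |A - Astar| < r/2 → E₂ A < 0 → q₁ < E₄ A →
      K * ε₀ A < (2/5) * q₁ → ε₀ A < r/4 →
      ∃ y, y ∈ Set.Ioo ((9/10) * ε₀ A) ((11/10) * ε₀ A) ∧ PD G 1 (A, y) = 0 := by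
    intro A hA hE2neg hq₁A hKc1 her
    have hq : 0 < E₄ A := lt_trans hq₁ hq₁A
    have hb : 0 < -E₂ A := neg_pos.2 hE2neg
    have he0 : 0 < ε₀ A := Real.sqrt_pos.2 (by positivity)
    have hA' : |A - Astar| < r := by linarith
    have h1 : PD G 1 (A, (9/10) * ε₀ A) < 0 := by
      refine sign_neg A (1/10) _ hA hE2neg hq₁A (by linarith) (by norm_num)
        (by norm_num) her (by positivity) (le_of_eq (by ring))
    have h2 : 0 < PD G 1 (A, (11/10) * ε₀ A) := by
      refine sign_pos A (1/10) _ hA hE2neg hq₁A (by linarith) (by norm_num)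
        (by norm_num) her (le_of_eq (by ring)) (by linarith)
    have hcontOn : ContinuousOn (fun y => PD G 1 (A, y))
        (Set.Icc ((9/10) * ε₀ A) ((11/10) * ε₀ A)) := by
      intro y hy
      rw [Set.mem_Icc] at hy
      have : |y| < r := by
        rw [abs_of_nonneg (le_trans (by positivity) hy.1)]
        calc y ≤ (11/10) * ε₀ A := hy.2
        _ < (11/10) * (r/4) := mul_lt_mul_of_pos_left her (by norm_num)
        _ < r := by linarith
      exact (hsliceCont 1 (by norm_num) A hA' y this).continuousWithinAt
    have hIVT := intermediate_value_Ioo (by linarith : (9/10) * ε₀ A ≤ (11/10) * ε₀ A)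
      hcontOn
    have h0mem : (0:ℝ) ∈ Set.Ioo (PD G 1 (A, (9/10) * ε₀ A))
        (PD G 1 (A, (11/10) * ε₀ A)) := ⟨h1, h2⟩
    obtain ⟨y, hy, hfy⟩ := hIVT h0mem
    exact ⟨y, hy, hfy⟩
  -- Part (ii) assembly
  obtain ⟨δ, hδ0, hδg⟩ := exδR _ hgood
  obtain ⟨εbar, hεb⟩ : ∃ f : ℝ → ℝ, ∀ A : ℝ, Astar < A → A < Astar + δ →
      f A ∈ Set.Ioo ((9/10) * ε₀ A) ((11/10) * ε₀ A) ∧ PD G 1 (A, f A) = 0 := by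
    refine ⟨fun A =>
      if h : ∃ y, y ∈ Set.Ioo ((9/10) * ε₀ A) ((11/10) * ε₀ A) ∧ PD G 1 (A, y) = 0
      then h.choose else 0, ?_⟩
    intro A hA1 hA2
    obtain ⟨g1, g2, g3, g4, g5, g6, g7, g8⟩ := hδg A ⟨hA1, hA2⟩
    have he := hex A g2 g3 g4 g7 g6
    simp only [dif_pos he]
    exact he.choose_spec
  have he0' : ∀ A : ℝ, Astar < A → A < Astar + δ → 0 < ε₀ A := by
    intro A hA1 hA2
    obtain ⟨g1, g2, g3, g4, g5, g6, g7, g8⟩ := hδg A ⟨hA1, hA2⟩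
    have hq : 0 < E₄ A := lt_trans hq₁ g4
    have hb : 0 < -E₂ A := neg_pos.2 g3
    exact Real.sqrt_pos.2 (by positivity)
  have htri_neg : ∀ A : ℝ, Astar < A → A < Astar + δ → ∀ y : ℝ, 0 < y →
      y ≤ (6/5) * ε₀ A → y < εbar A → PD G 1 (A, y) < 0 := by
    intro A hA1 hA2 y hy0 hyu hylt
    obtain ⟨g1, g2, g3, g4, g5, g6, g7, g8⟩ := hδg A ⟨hA1, hA2⟩
    have he0 := he0' A hA1 hA2
    obtain ⟨hzmem, hzval⟩ := hεb A hA1 hA2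
    by_cases hcase : y ≤ (4/5) * ε₀ A
    · refine sign_neg A (1/5) y g2 g3 g4 (by linarith) (by norm_num) (le_refl _) g6 hy0 ?_
      calc y ≤ (4/5) * ε₀ A := hcase
      _ = (1 - 1/5) * ε₀ A := by ring
    · push_neg at hcase
      have hm := hmono A g2 g3 g4 g8 g6
      have hy1 : y ∈ Set.Icc ((4/5) * ε₀ A) ((6/5) * ε₀ A) := ⟨hcase.le, hyu⟩
      have hz1 : εbar A ∈ Set.Icc ((4/5) * ε₀ A) ((6/5) * ε₀ A) :=
        ⟨by linarith [hzmem.1], by linarith [hzmem.2]⟩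
      have hlt := hm hy1 hz1 hylt
      simp only at hlt
      rw [hzval] at hlt
      exact hlt
  have htri_pos : ∀ A : ℝ, Astar < A → A < Astar + δ → ∀ y : ℝ,
      εbar A < y → y ≤ (6/5) * ε₀ A → 0 < PD G 1 (A, y) := by
    intro A hA1 hA2 y hylt hyu
    obtain ⟨g1, g2, g3, g4, g5, g6, g7, g8⟩ := hδg A ⟨hA1, hA2⟩
    have he0 := he0' A hA1 hA2
    obtain ⟨hzmem, hzval⟩ := hεb A hA1 hA2
    have hm := hmono A g2 g3 g4 g8 g6
    have hz1 : εbar A ∈ Set.Icc ((4/5) * ε₀ A) ((6/5) * ε₀ A) :=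
      ⟨by linarith [hzmem.1], by linarith [hzmem.2]⟩
    have hy1 : y ∈ Set.Icc ((4/5) * ε₀ A) ((6/5) * ε₀ A) :=
      ⟨by linarith [hzmem.1], hyu⟩
    have hlt := hm hz1 hy1 hylt
    simp only at hlt
    rw [hzval] at hlt
    exact hlt
  have hmain : ∀ A ∈ Set.Ioo Astar (Astar + δ),
      0 < εbar A ∧ deriv (fun ε => G (A, ε)) (εbar A) = 0 ∧
        IsLocalMin (fun ε => G (A, ε)) (εbar A) := by
    rintro A ⟨hA1, hA2⟩
    obtain ⟨g1, g2, g3, g4, g5, g6, g7, g8⟩ := hδg A ⟨hA1, hA2⟩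
    have he0 := he0' A hA1 hA2
    obtain ⟨hzmem, hzval⟩ := hεb A hA1 hA2
    have hz0 : 0 < εbar A := lt_trans (by positivity) hzmem.1
    have hA' : |A - Astar| < r := by linarith
    have hbd : ∀ y : ℝ, 0 < y → y ≤ (6/5) * ε₀ A → |y| < r := by
      intro y h1 h2
      rw [abs_of_pos h1]
      calc y ≤ (6/5) * ε₀ A := h2
      _ < (6/5) * (r/4) := mul_lt_mul_of_pos_left g6 (by norm_num)
      _ < r := by linarith
    have hzu : εbar A ≤ (6/5) * ε₀ A := by linarith [hzmem.2]
    have hzr : |εbar A| < r := hbd _ hz0 hzu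
    have hderiv0 : deriv (fun ε => G (A, ε)) (εbar A) = 0 := by
      have hd := (hder 0 (by norm_num) A (εbar A) hA' hzr).deriv
      rw [show (fun t => PD G 0 (A, t)) = (fun ε => G (A, ε)) from rfl] at hd
      rw [hd, hzval]
    refine ⟨hz0, hderiv0, ?_⟩
    have ha'pos : 0 < (17/20) * ε₀ A := by positivity
    have hanti : StrictAntiOn (fun ε => G (A, ε))
        (Set.Icc ((17/20) * ε₀ A) (εbar A)) := by
      apply strictAntiOn_of_deriv_neg (convex_Icc _ _)
      · intro y hy
        rw [Set.mem_Icc] at hy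
        have : |y| < r := hbd y (lt_of_lt_of_le ha'pos hy.1) (le_trans hy.2 hzu)
        exact (hsliceCont 0 (by norm_num) A hA' y this).continuousWithinAt
      · intro y hy
        rw [interior_Icc] at hy
        have hyr' : |y| < r := hbd y (lt_trans ha'pos hy.1) (by linarith [hy.2, hzu])
        have hd := (hder 0 (by norm_num) A y hA' hyr').deriv
        rw [show (fun t => PD G 0 (A, t)) = (fun ε => G (A, ε)) from rfl] at hd
        rw [hd]
        exact htri_neg A hA1 hA2 y (lt_trans ha'pos hy.1) (by linarith [hy.2, hzu]) hy.2
    have hmono2 : StrictMonoOn (fun ε => G (A, ε))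
        (Set.Icc (εbar A) ((23/20) * ε₀ A)) := by
      apply strictMonoOn_of_deriv_pos (convex_Icc _ _)
      · intro y hy
        rw [Set.mem_Icc] at hy
        have : |y| < r := hbd y (lt_of_lt_of_le hz0 hy.1) (by linarith [hy.2])
        exact (hsliceCont 0 (by norm_num) A hA' y this).continuousWithinAt
      · intro y hy
        rw [interior_Icc] at hy
        have hyr' : |y| < r := hbd y (lt_trans hz0 hy.1) (by linarith [hy.2])
        have hd := (hder 0 (by norm_num) A y hA' hyr').deriv
        rw [show (fun t => PD G 0 (A, t)) = (fun ε => G (A, ε)) from rfl] at hd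
        rw [hd]
        exact htri_pos A hA1 hA2 y hy.1 (by linarith [hy.2])
    have hminOn : ∀ x ∈ Set.Icc ((17/20) * ε₀ A) ((23/20) * ε₀ A),
        G (A, εbar A) ≤ G (A, x) := by
      intro x hx
      rw [Set.mem_Icc] at hx
      rcases le_or_gt x (εbar A) with hle | hgt
      · rcases eq_or_lt_of_le hle with heq | hlt
        · rw [heq]
        · exact le_of_lt (hanti ⟨hx.1, hle⟩ ⟨by linarith [hzmem.1], le_refl _⟩ hlt)
      · exact le_of_lt (hmono2 ⟨le_refl _, by linarith [hzmem.2]⟩ ⟨hgt.le, hx.2⟩ hgt)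
    have hnhds : Set.Icc ((17/20) * ε₀ A) ((23/20) * ε₀ A) ∈ 𝓝 (εbar A) :=
      Icc_mem_nhds (by linarith [hzmem.1]) (by linarith [hzmem.2])
    exact (isMinOn_iff.2 (fun x hx => hminOn x hx)).isLocalMin hnhds
  -- continuity of ε₀
  have hε₀cont : ∀ A₀ : ℝ, Astar < A₀ → A₀ < Astar + δ → ContinuousAt ε₀ A₀ := by
    intro A₀ h1 h2
    obtain ⟨g1, g2, g3, g4, g5, g6, g7, g8⟩ := hδg A₀ ⟨h1, h2⟩
    have hq : 0 < E₄ A₀ := lt_trans hq₁ g4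
    have hA' : |A₀ - Astar| < r := by linarith
    have hc1 : ContinuousAt (fun A => -E₂ A / (2 * E₄ A)) A₀ :=
      ((hE2contAt A₀ hA').neg).div ((hE4contAt A₀ hA').const_mul 2) (by positivity)
    exact (Real.continuous_sqrt.continuousAt).comp hc1
  -- continuity of εbar
  have hεbcont : ContinuousOn εbar (Set.Ioo Astar (Astar + δ)) := by
    intro A₀ hA₀
    apply ContinuousAt.continuousWithinAt
    obtain ⟨h1, h2⟩ := hA₀
    obtain ⟨g1, g2, g3, g4, g5, g6, g7, g8⟩ := hδg A₀ ⟨h1, h2⟩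
    have he0 := he0' A₀ h1 h2
    obtain ⟨hzmem, hzval⟩ := hεb A₀ h1 h2
    have hz0 : 0 < εbar A₀ := lt_trans (by positivity) hzmem.1
    refine Metric.tendsto_nhds.2 ?_
    intro e he
    obtain ⟨a, ha_lt, ha_pos, ha_ge⟩ : ∃ a : ℝ, a < εbar A₀ ∧ 0 < a ∧
        εbar A₀ - e/2 ≤ a := by
      refine ⟨max (εbar A₀ - e/2) ((17/20) * ε₀ A₀), ?_, ?_, le_max_left _ _⟩
      · exact max_lt (by linarith) (by linarith [hzmem.1])
      · exact lt_of_lt_of_le (by positivity) (le_max_right _ _)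
    obtain ⟨b, hb_gt, hb_lt, hb_le⟩ : ∃ b : ℝ, εbar A₀ < b ∧ b < (6/5) * ε₀ A₀ ∧
        b ≤ εbar A₀ + e/2 := by
      refine ⟨min (εbar A₀ + e/2) ((εbar A₀ + (6/5) * ε₀ A₀)/2), ?_, ?_, min_le_left _ _⟩
      · exact lt_min (by linarith) (by linarith [hzmem.2])
      · exact lt_of_le_of_lt (min_le_right _ _) (by linarith [hzmem.2])
    have hga : PD G 1 (A₀, a) < 0 := htri_neg A₀ h1 h2 a ha_pos (by linarith) ha_lt
    have hgb : 0 < PD G 1 (A₀, b) := htri_pos A₀ h1 h2 b hb_gt hb_lt.le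
    have hA' : |A₀ - Astar| < r := by linarith
    have h65r : (6/5) * ε₀ A₀ < r := by
      have := mul_lt_mul_of_pos_left g6 (show (0:ℝ) < (6/5) by norm_num)
      linarith
    have har : |a| < r := by
      rw [abs_of_pos ha_pos]
      linarith [hzmem.2]
    have hbr : |b| < r := by
      rw [abs_of_pos (lt_trans ha_pos (lt_trans ha_lt hb_gt))]
      linarith
    have ev1 : ∀ᶠ A in 𝓝 A₀, PD G 1 (A, a) < 0 := by
      have hc : ContinuousAt (fun A => PD G 1 (A, a)) A₀ :=
        ContinuousAt.comp (f := fun A : ℝ => ((A, a) : ℝ × ℝ))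
          (hcont 1 (by norm_num) A₀ a hA' har)
          ((continuous_id.prodMk continuous_const).continuousAt)
      exact hc.eventually_lt_const hga
    have ev2 : ∀ᶠ A in 𝓝 A₀, 0 < PD G 1 (A, b) := by
      have hc : ContinuousAt (fun A => PD G 1 (A, b)) A₀ :=
        ContinuousAt.comp (f := fun A : ℝ => ((A, b) : ℝ × ℝ))
          (hcont 1 (by norm_num) A₀ b hA' hbr)
          ((continuous_id.prodMk continuous_const).continuousAt)
      exact hc.eventually_const_lt hgb
    have ev3 : ∀ᶠ A in 𝓝 A₀, b < (6/5) * ε₀ A := by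
      have hc : ContinuousAt (fun A => (6/5) * ε₀ A) A₀ := (hε₀cont A₀ h1 h2).const_mul _
      exact hc.eventually_const_lt hb_lt
    have ev4 : ∀ᶠ A in 𝓝 A₀, A ∈ Set.Ioo Astar (Astar + δ) := by
      filter_upwards [isOpen_Ioo.mem_nhds (Set.mem_Ioo.2 ⟨h1, h2⟩)] with A hA
      exact hA
    filter_upwards [ev1, ev2, ev3, ev4] with A k1 k2 k3 k4
    obtain ⟨hA1', hA2'⟩ := k4
    have hzA := hεb A hA1' hA2'
    have hlt1 : a < εbar A := by
      by_contra hcon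
      push_neg at hcon
      rcases eq_or_lt_of_le hcon with heq | hlt
      · rw [← heq, hzA.2] at k1
        exact lt_irrefl 0 k1
      · have := htri_pos A hA1' hA2' a hlt (by linarith)
        linarith
    have hlt2 : εbar A < b := by
      by_contra hcon
      push_neg at hcon
      rcases eq_or_lt_of_le hcon with heq | hlt
      · rw [heq, hzA.2] at k2
        exact lt_irrefl 0 k2
      · have hbpos : 0 < b := lt_trans ha_pos (lt_trans ha_lt hb_gt)
        have := htri_neg A hA1' hA2' b hbpos (le_of_lt k3) hlt
        linarith
    rw [Real.dist_eq, abs_lt]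
    constructor <;> [linarith; linarith]
  -- asymptotics: εbar/ε₀ → 1
  have hδev : ∀ᶠ A in 𝓝[>] Astar, A ∈ Set.Ioo Astar (Astar + δ) := by
    have h2' : ∀ᶠ A in 𝓝[>] Astar, A < Astar + δ := by
      refine Filter.Eventually.filter_mono nhdsWithin_le_nhds ?_
      filter_upwards [Iio_mem_nhds (by linarith : Astar < Astar + δ)] with A hA
      exact hA
    filter_upwards [eventually_mem_nhdsWithin, h2'] with A p q
    exact ⟨p, q⟩
  have hratio1 : Tendsto (fun A => εbar A / ε₀ A) (𝓝[>] Astar) (𝓝 1) := by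
    rw [Metric.tendsto_nhds]
    intro e he
    have hθ0 : 0 < min (1/10) (e/2) := lt_min (by norm_num) (by linarith)
    have hθ5 : min (1/10) (e/2) ≤ 1/5 := le_trans (min_le_left _ _) (by norm_num)
    have hevθ : ∀ᶠ A in 𝓝[>] Astar, K * ε₀ A < 4 * min (1/10) (e/2) * q₁ := by
      have := hsmall (4 * min (1/10) (e/2) * q₁ / K) (by positivity)
      filter_upwards [this] with A hA
      rw [lt_div_iff₀ hKpos] at hA
      calc K * ε₀ A = ε₀ A * K := by ring
      _ < 4 * min (1/10) (e/2) * q₁ := hA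
    filter_upwards [hevθ, hδev] with A k1 k2
    obtain ⟨hA1, hA2⟩ := k2
    obtain ⟨g1, g2, g3, g4, g5, g6, g7, g8⟩ := hδg A ⟨hA1, hA2⟩
    have he0 := he0' A hA1 hA2
    obtain ⟨hzmem, hzval⟩ := hεb A hA1 hA2
    have hz0 : 0 < εbar A := lt_trans (by positivity) hzmem.1
    have hlow : (1 - min (1/10) (e/2)) * ε₀ A < εbar A := by
      by_contra hcon
      push_neg at hcon
      have := sign_neg A (min (1/10) (e/2)) (εbar A) g2 g3 g4 k1 hθ0 hθ5 g6 hz0 hcon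
      rw [hzval] at this
      exact lt_irrefl 0 this
    have hhigh : εbar A < (1 + min (1/10) (e/2)) * ε₀ A := by
      by_contra hcon
      push_neg at hcon
      have := sign_pos A (min (1/10) (e/2)) (εbar A) g2 g3 g4 k1 hθ0 hθ5 g6 hcon
        (by linarith [hzmem.2])
      rw [hzval] at this
      exact lt_irrefl 0 this
    rw [Real.dist_eq, abs_lt]
    have hd1 : 1 - min (1/10) (e/2) < εbar A / ε₀ A := by
      rw [lt_div_iff₀ he0]
      exact hlow
    have hd2 : εbar A / ε₀ A < 1 + min (1/10) (e/2) := by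
      rw [div_lt_iff₀ he0]
      exact hhigh
    have := min_le_right (1/10 : ℝ) (e/2)
    constructor <;> [linarith; linarith]
  -- asymptotics: ε₀/√(A-Astar) → √(c/(2e₄))
  have hratio2 : Tendsto (fun A => ε₀ A / Real.sqrt (A - Astar)) (𝓝[>] Astar)
      (𝓝 (Real.sqrt (-(deriv E₂ Astar) / (2 * E₄ Astar)))) := by
    have hmono' : 𝓝[>] Astar ≤ 𝓝[≠] Astar :=
      nhdsWithin_mono _ (fun x hx => ne_of_gt hx)
    have h1 : Tendsto (fun A => -E₂ A / (A - Astar)) (𝓝[>] Astar)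
        (𝓝 (-(deriv E₂ Astar))) := by
      have h := (hslopeT.mono_left hmono').neg
      refine h.congr (fun A => ?_)
      rw [neg_div]
    have h2 : Tendsto (fun A => 2 * E₄ A) (𝓝[>] Astar) (𝓝 (2 * E₄ Astar)) :=
      (Filter.Tendsto.mono_left (hE4contAt Astar (by simpa using hr0)) nhdsWithin_le_nhds).const_mul 2
    have h3 : Tendsto (fun A => (-E₂ A / (A - Astar)) / (2 * E₄ A)) (𝓝[>] Astar)
        (𝓝 ((-(deriv E₂ Astar)) / (2 * E₄ Astar))) := h1.div h2 (by positivity)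
    have h4 := (Real.continuous_sqrt.continuousAt
      (x := (-(deriv E₂ Astar)) / (2 * E₄ Astar))).tendsto.comp h3
    refine Filter.Tendsto.congr' ?_ h4
    filter_upwards [hgood, eventually_mem_nhdsWithin] with A hg hA1
    obtain ⟨g1, g2, g3, g4, g5, g6, g7, g8⟩ := hg
    have hq : 0 < E₄ A := lt_trans hq₁ g4
    have hb : 0 < -E₂ A := neg_pos.2 g3
    have hμ : 0 < A - Astar := by
      simp only [Set.mem_Ioi] at hA1
      linarith
    show Real.sqrt (-E₂ A / (A - Astar) / (2 * E₄ A)) = ε₀ A / Real.sqrt (A - Astar)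
    rw [show -E₂ A / (A - Astar) / (2 * E₄ A) = (-E₂ A / (2 * E₄ A)) / (A - Astar) by ring]
    rw [Real.sqrt_div (by positivity) (A - Astar)]
  have hfinal : Tendsto (fun A => εbar A / Real.sqrt (A - Astar)) (𝓝[>] Astar)
      (𝓝 (Real.sqrt (-(deriv E₂ Astar) / (2 * E₄ Astar)))) := by
    have hmul := hratio1.mul hratio2
    rw [one_mul] at hmul
    refine Filter.Tendsto.congr' ?_ hmul
    filter_upwards [hδev] with A hA
    obtain ⟨hA1, hA2⟩ := hA
    have he0 := he0' A hA1 hA2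
    have hμ : 0 < A - Astar := by linarith
    have hsq : 0 < Real.sqrt (A - Astar) := Real.sqrt_pos.2 hμ
    field_simp
  exact ⟨part1, δ, hδ0, εbar, hεbcont, hmain, hfinal⟩
end
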